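/- arXiv:1112.3690 — 10 statements merged into one kernel-verified Lean document; each statement's English description precedes it below -/
import Mathlib

section
/- Let α ∈ (0,2) and ρ ∈ (0,1) with ρ̂ = 1−ρ, αρ < 1 and αρ̂ < 1. For every real θ ≠ 0, writing Ψ^L(θ) = Γ(α−iθ)Γ(1+iθ)/(Γ(αρ̂−iθ)Γ(1−αρ̂+iθ)) − Γ(α)/(Γ(αρ̂)Γ(1−αρ̂)) and Ψ^C(θ) = (Γ(α)/(Γ(αρ̂)Γ(1−αρ̂)))·(1 − (sin(παρ)/(πΓ(α)))·Γ(1−αρ+iθ)Γ(αρ−iθ)Γ(1+iθ)Γ(α−iθ)), one has Ψ^L(θ) + Ψ^C(θ) = (Γ(αρ−iθ)/Γ(−iθ))·(Γ(1−αρ+iθ)/Γ(1−α+iθ)). -/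
open Complex

private lemma gamma_ne_zero_of_im {z : ℂ} (h : z.im ≠ 0) : Complex.Gamma z ≠ 0 :=
  Complex.Gamma_ne_zero fun m hm => h (by rw [hm]; simp)

private lemma sin_pi_ne {z : ℂ} (h1 : Complex.Gamma z ≠ 0)
    (h2 : Complex.Gamma (1 - z) ≠ 0) : Complex.sin (↑Real.pi * z) ≠ 0 := by
  intro h
  have := Complex.Gamma_mul_Gamma_one_sub z
  rw [h, div_zero] at this
  exact mul_ne_zero h1 h2 this

private lemma trig (p q t : ℂ) :
    Complex.sin (q - t) * Complex.sin (p - t) - Complex.sin q * Complex.sin p =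
      Complex.sin (-t) * Complex.sin (p + q - t) := by
  have h := Complex.sin_sq_add_cos_sq t
  simp only [Complex.sin_sub, Complex.sin_add, Complex.sin_neg, Complex.cos_sub,
    Complex.cos_add]
  linear_combination (Complex.sin p * Complex.sin q) * h

theorem characteristic_exponent_factorisation
    (α ρ : ℝ) (hα : α ∈ Set.Ioo (0:ℝ) 2) (hρ : ρ ∈ Set.Ioo (0:ℝ) 1)
    (h1 : α * ρ < 1) (h2 : α * (1 - ρ) < 1) (θ : ℝ) (hθ : θ ≠ 0) :
    (Complex.Gamma (α - I * θ) * Complex.Gamma (1 + I * θ) /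
        (Complex.Gamma (α * (1 - ρ) - I * θ) * Complex.Gamma (1 - α * (1 - ρ) + I * θ)) -
      Complex.Gamma α / (Complex.Gamma (α * (1 - ρ)) * Complex.Gamma (1 - α * (1 - ρ)))) +
    Complex.Gamma α / (Complex.Gamma (α * (1 - ρ)) * Complex.Gamma (1 - α * (1 - ρ))) *
      (1 - Real.sin (Real.pi * α * ρ) / (Real.pi * Complex.Gamma α) *
        (Complex.Gamma (1 - α * ρ + I * θ) * Complex.Gamma (α * ρ - I * θ) *
          Complex.Gamma (1 + I * θ) * Complex.Gamma (α - I * θ))) =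
    Complex.Gamma (α * ρ - I * θ) / Complex.Gamma (-(I * θ)) *
      (Complex.Gamma (1 - α * ρ + I * θ) / Complex.Gamma (1 - α + I * θ)) := by
  obtain ⟨hα0, hα2⟩ := hα
  obtain ⟨hρ0, hρ1⟩ := hρ
  set s : ℂ := I * θ with hs
  have himsub : ∀ x : ℝ, ((x : ℂ) - s).im ≠ 0 := fun x => by simp [hs, hθ]
  have himadd : ∀ x : ℝ, ((x : ℂ) + s).im ≠ 0 := fun x => by simp [hs, hθ]
  have hG1 : Complex.Gamma ((α : ℂ) - s) ≠ 0 := gamma_ne_zero_of_im (himsub α)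
  have hG2 : Complex.Gamma (1 + s) ≠ 0 := gamma_ne_zero_of_im (by simpa using himadd 1)
  have hg3 : Complex.Gamma ((α : ℂ) * (1 - (ρ : ℂ)) - s) ≠ 0 := by
    refine gamma_ne_zero_of_im ?_
    have := himsub (α * (1 - ρ)); push_cast at this ⊢; convert this using 3 <;> ring
  have hg4 : Complex.Gamma (1 - (α : ℂ) * (1 - (ρ : ℂ)) + s) ≠ 0 := by
    refine gamma_ne_zero_of_im ?_
    have := himadd (1 - α * (1 - ρ)); push_cast at this ⊢; convert this using 3 <;> ring
  have hg7 : Complex.Gamma (1 - (α : ℂ) * (ρ : ℂ) + s) ≠ 0 := by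
    refine gamma_ne_zero_of_im ?_
    have := himadd (1 - α * ρ); push_cast at this ⊢; convert this using 3 <;> ring
  have hg8 : Complex.Gamma ((α : ℂ) * (ρ : ℂ) - s) ≠ 0 := by
    refine gamma_ne_zero_of_im ?_
    have := himsub (α * ρ); push_cast at this ⊢; convert this using 3 <;> ring
  have hg9 : Complex.Gamma (-s) ≠ 0 := gamma_ne_zero_of_im (by simp [hs, hθ])
  have hg10 : Complex.Gamma (1 - (α : ℂ) + s) ≠ 0 := by
    refine gamma_ne_zero_of_im ?_
    have := himadd (1 - α); push_cast at this ⊢; convert this using 3 <;> ring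
  have hg5 : Complex.Gamma ((α : ℂ) * (1 - (ρ : ℂ))) ≠ 0 :=
    Complex.Gamma_ne_zero_of_re_pos (by
      simp only [← Complex.ofReal_one, ← Complex.ofReal_sub, ← Complex.ofReal_mul,
        Complex.ofReal_re]
      nlinarith)
  have hg6 : Complex.Gamma (1 - (α : ℂ) * (1 - (ρ : ℂ))) ≠ 0 :=
    Complex.Gamma_ne_zero_of_re_pos (by
      simp only [← Complex.ofReal_one, ← Complex.ofReal_sub, ← Complex.ofReal_mul,
        Complex.ofReal_re]
      nlinarith)
  have hgA : Complex.Gamma (α : ℂ) ≠ 0 := Complex.Gamma_ne_zero_of_re_pos (by simpa using hα0)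
  -- reflection formulas
  have E1 : Complex.Gamma ((α : ℂ) * (1 - (ρ : ℂ)) - s) *
      Complex.Gamma (1 - (α : ℂ) * (1 - (ρ : ℂ)) + s)
      = ↑Real.pi / Complex.sin (↑Real.pi * ((α : ℂ) * (1 - (ρ : ℂ)) - s)) := by
    have h := Complex.Gamma_mul_Gamma_one_sub ((α : ℂ) * (1 - (ρ : ℂ)) - s)
    rwa [show (1 : ℂ) - ((α : ℂ) * (1 - (ρ : ℂ)) - s) = 1 - (α : ℂ) * (1 - (ρ : ℂ)) + s
      by ring] at h
  have E2 : Complex.Gamma ((α : ℂ) * (1 - (ρ : ℂ))) * Complex.Gamma (1 - (α : ℂ) * (1 - (ρ : ℂ)))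
      = ↑Real.pi / Complex.sin (↑Real.pi * ((α : ℂ) * (1 - (ρ : ℂ)))) :=
    Complex.Gamma_mul_Gamma_one_sub _
  have E3 : Complex.Gamma ((α : ℂ) * (ρ : ℂ) - s) * Complex.Gamma (1 - (α : ℂ) * (ρ : ℂ) + s)
      = ↑Real.pi / Complex.sin (↑Real.pi * ((α : ℂ) * (ρ : ℂ) - s)) := by
    have h := Complex.Gamma_mul_Gamma_one_sub ((α : ℂ) * (ρ : ℂ) - s)
    rwa [show (1 : ℂ) - ((α : ℂ) * (ρ : ℂ) - s) = 1 - (α : ℂ) * (ρ : ℂ) + s by ring] at h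
  have E4 : Complex.Gamma (-s) * Complex.Gamma (1 + s)
      = ↑Real.pi / Complex.sin (↑Real.pi * (-s)) := by
    have h := Complex.Gamma_mul_Gamma_one_sub (-s)
    rwa [show (1 : ℂ) - (-s) = 1 + s by ring] at h
  have E5 : Complex.Gamma ((α : ℂ) - s) * Complex.Gamma (1 - (α : ℂ) + s)
      = ↑Real.pi / Complex.sin (↑Real.pi * ((α : ℂ) - s)) := by
    have h := Complex.Gamma_mul_Gamma_one_sub ((α : ℂ) - s)
    rwa [show (1 : ℂ) - ((α : ℂ) - s) = 1 - (α : ℂ) + s by ring] at h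
  -- sine nonvanishing
  have hS1 : Complex.sin (↑Real.pi * ((α : ℂ) * (1 - (ρ : ℂ)) - s)) ≠ 0 := by
    refine sin_pi_ne hg3 ?_
    rw [show (1 : ℂ) - ((α : ℂ) * (1 - (ρ : ℂ)) - s) = 1 - (α : ℂ) * (1 - (ρ : ℂ)) + s by ring]
    exact hg4
  have hS2 : Complex.sin (↑Real.pi * ((α : ℂ) * (1 - (ρ : ℂ)))) ≠ 0 := sin_pi_ne hg5 hg6
  have hS3 : Complex.sin (↑Real.pi * ((α : ℂ) * (ρ : ℂ) - s)) ≠ 0 := by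
    refine sin_pi_ne hg8 ?_
    rw [show (1 : ℂ) - ((α : ℂ) * (ρ : ℂ) - s) = 1 - (α : ℂ) * (ρ : ℂ) + s by ring]
    exact hg7
  have hS4 : Complex.sin (↑Real.pi * (-s)) ≠ 0 := by
    refine sin_pi_ne hg9 ?_
    rw [show (1 : ℂ) - (-s) = 1 + s by ring]; exact hG2
  have hS5 : Complex.sin (↑Real.pi * ((α : ℂ) - s)) ≠ 0 := by
    refine sin_pi_ne hG1 ?_
    rw [show (1 : ℂ) - ((α : ℂ) - s) = 1 - (α : ℂ) + s by ring]; exact hg10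
  have hπ : (Real.pi : ℂ) ≠ 0 := by exact_mod_cast Real.pi_ne_zero
  have hSρ : ((Real.sin (Real.pi * α * ρ) : ℝ) : ℂ)
      = Complex.sin (↑Real.pi * ((α : ℂ) * (ρ : ℂ))) := by
    rw [show (↑Real.pi * ((α : ℂ) * (ρ : ℂ))) = ((Real.pi * α * ρ : ℝ) : ℂ) by push_cast; ring,
      Complex.ofReal_sin]
  -- key trigonometric identity
  have key : Complex.sin (↑Real.pi * ((α : ℂ) * (1 - (ρ : ℂ)) - s)) *
        Complex.sin (↑Real.pi * ((α : ℂ) * (ρ : ℂ) - s)) -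
        Complex.sin (↑Real.pi * ((α : ℂ) * (1 - (ρ : ℂ)))) *
        Complex.sin (↑Real.pi * ((α : ℂ) * (ρ : ℂ)))
      = Complex.sin (↑Real.pi * (-s)) * Complex.sin (↑Real.pi * ((α : ℂ) - s)) := by
    have h := trig ((Real.pi : ℂ) * ((α : ℂ) * (ρ : ℂ)))
      ((Real.pi : ℂ) * ((α : ℂ) * (1 - (ρ : ℂ)))) ((Real.pi : ℂ) * s)
    rw [show (Real.pi : ℂ) * ((α : ℂ) * (1 - (ρ : ℂ))) - (Real.pi : ℂ) * s
        = ↑Real.pi * ((α : ℂ) * (1 - (ρ : ℂ)) - s) by ring,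
      show (Real.pi : ℂ) * ((α : ℂ) * (ρ : ℂ)) - (Real.pi : ℂ) * s
        = ↑Real.pi * ((α : ℂ) * (ρ : ℂ) - s) by ring,
      show -((Real.pi : ℂ) * s) = ↑Real.pi * (-s) by ring,
      show (Real.pi : ℂ) * ((α : ℂ) * (ρ : ℂ)) + (Real.pi : ℂ) * ((α : ℂ) * (1 - (ρ : ℂ)))
          - (Real.pi : ℂ) * s = ↑Real.pi * ((α : ℂ) - s) by ring] at h
    exact h
  -- rewrite products and clear denominators
  have E3' : Complex.Gamma (1 - (α : ℂ) * (ρ : ℂ) + s) * Complex.Gamma ((α : ℂ) * (ρ : ℂ) - s)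
      = ↑Real.pi / Complex.sin (↑Real.pi * ((α : ℂ) * (ρ : ℂ) - s)) := by
    rw [mul_comm]; exact E3
  rw [eq_div_iff hS4] at E4
  rw [eq_div_iff hS5] at E5
  have eg9 : Complex.Gamma (-s)
      = ↑Real.pi / (Complex.sin (↑Real.pi * (-s)) * Complex.Gamma (1 + s)) := by
    rw [eq_div_iff (mul_ne_zero hS4 hG2)]
    linear_combination E4
  have eg10 : Complex.Gamma (1 - (α : ℂ) + s)
      = ↑Real.pi / (Complex.sin (↑Real.pi * ((α : ℂ) - s)) * Complex.Gamma ((α : ℂ) - s)) := by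
    rw [eq_div_iff (mul_ne_zero hS5 hG1)]
    linear_combination E5
  rw [eq_div_iff hS3] at E3
  have hneg : Complex.sin (↑Real.pi * -s) = -Complex.sin (↑Real.pi * s) := by
    rw [mul_neg, Complex.sin_neg]
  rw [E1, E2, E3', eg9, eg10, hSρ]
  field_simp
  rw [show Complex.sin (↑α * ↑Real.pi * (1 - ↑ρ)) = Complex.sin (↑Real.pi * ((α : ℂ) * (1 - (ρ : ℂ))))
      by congr 1; ring,
    show Complex.sin (↑α * ↑Real.pi * ↑ρ) = Complex.sin (↑Real.pi * ((α : ℂ) * (ρ : ℂ)))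
      by congr 1; ring,
    show Complex.sin (-(s * ↑Real.pi)) = Complex.sin (↑Real.pi * (-s)) by congr 1; ring,
    show Complex.sin (((α : ℂ) - s) * ↑Real.pi) = Complex.sin (↑Real.pi * ((α : ℂ) - s))
      by congr 1; ring]
  linear_combination
    ((Real.pi : ℂ) * Complex.Gamma ((α : ℂ) - s) * Complex.Gamma (1 + s)) * key -
    (Complex.Gamma ((α : ℂ) - s) * Complex.Gamma (1 + s) * Complex.sin (↑Real.pi * (-s)) *
      Complex.sin (↑Real.pi * ((α : ℂ) - s))) * E3
end

section
/- For every real α > 0 and every real θ, the Lebesgue integral ∫_{−∞}^{∞} e^{iθx} · α e^{x} (1+e^{x})^{−(α+1)} dx equals Γ(1+iθ)·Γ(α−iθ)/Γ(α). -/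
open Complex MeasureTheory Set

private lemma cpow_pos_real {x : ℝ} (hx : 0 < x) (s : ℂ) :
    (x : ℂ) ^ s = Complex.exp (s * Real.log x) := by
  rw [Complex.cpow_def_of_ne_zero (by exact_mod_cast hx.ne'), Complex.ofReal_log hx.le,
    mul_comm]

theorem fourier_transform_first_factor (α : ℝ) (hα : 0 < α) (θ : ℝ) :
    ∫ x : ℝ, Complex.exp (I * θ * x) *
        ((α * Real.exp x * (1 + Real.exp x) ^ (-(α + 1)) : ℝ) : ℂ) =
      Complex.Gamma (1 + I * θ) * Complex.Gamma (α - I * θ) / Complex.Gamma α := by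
  set g : ℝ → ℂ := fun t => (t : ℂ) ^ (I * θ) * (α : ℂ) * ((1 + t : ℝ) : ℂ) ^ ((-(α+1) : ℝ) : ℂ)
    with hg
  -- Step 1: substitution t = exp x
  have step1 : (∫ t in Ioi (0:ℝ), g t)
      = ∫ x : ℝ, Complex.exp (I * θ * x) *
        ((α * Real.exp x * (1 + Real.exp x) ^ (-(α + 1)) : ℝ) : ℂ) := by
    have himg : Real.exp '' univ = Ioi 0 := by rw [Set.image_univ, Real.range_exp]
    rw [← himg, integral_image_eq_integral_abs_deriv_smul MeasurableSet.univ
      (fun x _ => (Real.hasDerivAt_exp x).hasDerivWithinAt) Real.exp_injective.injOn g,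
      MeasureTheory.setIntegral_univ]
    congr 1; ext x
    have hex : (0:ℝ) < Real.exp x := Real.exp_pos x
    have h1 : ((Real.exp x : ℝ) : ℂ) ^ (I * (θ:ℂ)) = Complex.exp (I * θ * x) := by
      rw [cpow_pos_real hex, Real.log_exp]
    rw [hg]
    simp only [abs_of_pos hex, real_smul]
    rw [h1, ← Complex.ofReal_cpow (by positivity : (0:ℝ) ≤ 1 + Real.exp x)]
    push_cast
    ring
  -- Step 2: substitution t = u / (1 - u)
  have himg2 : (fun u : ℝ => u / (1 - u)) '' Ioo 0 1 = Ioi 0 := by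
    ext t
    constructor
    · rintro ⟨u, ⟨hu0, hu1⟩, rfl⟩
      exact div_pos hu0 (by linarith)
    · intro ht
      have ht' : (0:ℝ) < t := ht
      refine ⟨t / (1 + t), ⟨by positivity, ?_⟩, ?_⟩
      · rw [div_lt_one (by linarith)]; linarith
      · field_simp; ring
  have hderiv : ∀ u ∈ Ioo (0:ℝ) 1, HasDerivWithinAt (fun u : ℝ => u / (1 - u))
      (((1 - u) ^ 2)⁻¹) (Ioo 0 1) u := by
    intro u hu
    have hne : (1 : ℝ) - u ≠ 0 := by rcases hu with ⟨_, h1⟩; intro h; linarith [h1]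
    have := (hasDerivAt_id u).div ((hasDerivAt_const u (1:ℝ)).sub (hasDerivAt_id u)) hne
    refine this.hasDerivWithinAt.congr_deriv ?_
    simp only [Pi.sub_apply, id]; ring
  have hinj : InjOn (fun u : ℝ => u / (1 - u)) (Ioo 0 1) := by
    intro a ha b hb hab
    have h1 : (1:ℝ) - a ≠ 0 := by rcases ha with ⟨_, h⟩; intro hh; linarith
    have h2 : (1:ℝ) - b ≠ 0 := by rcases hb with ⟨_, h⟩; intro hh; linarith
    field_simp at hab
    linarith [hab]
  have step2 : (∫ t in Ioi (0:ℝ), g t)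
      = ∫ u in Ioo (0:ℝ) 1, |((1 - u) ^ 2)⁻¹| • g (u / (1 - u)) := by
    rw [← himg2, integral_image_eq_integral_abs_deriv_smul measurableSet_Ioo hderiv hinj g]
  -- Step 3: identify with the Beta integral
  have step3 : (∫ u in Ioo (0:ℝ) 1, |((1 - u) ^ 2)⁻¹| • g (u / (1 - u)))
      = (α : ℂ) * Complex.betaIntegral (1 + I * θ) (α - I * θ) := by
    rw [Complex.betaIntegral, intervalIntegral.integral_of_le (zero_le_one),
      MeasureTheory.integral_Ioc_eq_integral_Ioo, ← MeasureTheory.integral_const_mul]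
    refine setIntegral_congr_fun measurableSet_Ioo (fun u hu => ?_)
    obtain ⟨hu0, hu1⟩ := hu
    have hv : (0:ℝ) < 1 - u := by linarith
    have hsub : (1:ℝ) + u / (1 - u) = (1 - u)⁻¹ := by field_simp; ring
    have habs : |((1 - u) ^ 2)⁻¹| = ((1 - u)^2)⁻¹ := abs_of_pos (by positivity)
    have hinv : Real.exp (-(2 * Real.log (1 - u))) = ((1 - u) ^ 2)⁻¹ := by
      rw [Real.exp_neg, two_mul, Real.exp_add, Real.exp_log hv, sq]
    rw [hg]
    simp only [habs, real_smul, hsub]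
    rw [← hinv, cpow_pos_real (div_pos hu0 hv), cpow_pos_real (by positivity : (0:ℝ) < (1-u)⁻¹),
      Real.log_div hu0.ne' hv.ne', Real.log_inv,
      show ((u:ℝ):ℂ) ^ (1 + I * (θ:ℂ) - 1) = Complex.exp ((1 + I * θ - 1) * Real.log u) from
        cpow_pos_real hu0 _,
      show (1 - ((u:ℝ):ℂ)) ^ ((α:ℂ) - I * θ - 1)
          = Complex.exp (((α:ℂ) - I * θ - 1) * Real.log (1 - u)) by
        rw [show (1 - ((u:ℝ):ℂ)) = (((1 - u : ℝ)):ℂ) by push_cast; ring]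
        exact cpow_pos_real hv _,
      Complex.ofReal_exp]
    rw [show ∀ a b c : ℂ, Complex.exp a * (Complex.exp b * (α:ℂ) * Complex.exp c)
        = (α:ℂ) * Complex.exp (a + b + c) from fun a b c => by
          rw [Complex.exp_add, Complex.exp_add]; ring,
      ← Complex.exp_add]
    congr 2
    push_cast
    ring
  rw [← step1, step2, step3]
  have hre1 : (0:ℝ) < (1 + I * (θ:ℂ)).re := by simp
  have hre2 : (0:ℝ) < ((α:ℂ) - I * θ).re := by simp [hα]
  have hbeta := Complex.Gamma_mul_Gamma_eq_betaIntegral hre1 hre2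
  have hsum : (1 + I * (θ:ℂ)) + ((α:ℂ) - I * θ) = (α:ℂ) + 1 := by ring
  rw [hsum, Complex.Gamma_add_one _ (by exact_mod_cast hα.ne')] at hbeta
  have hΓ : Complex.Gamma (α:ℂ) ≠ 0 := Complex.Gamma_ne_zero_of_re_pos (by simp [hα])
  rw [eq_div_iff hΓ]
  linear_combination -hbeta
end

section
/- Let α ∈ (0,2), ρ ∈ (0,1), ρ̂ = 1−ρ, and assume αρ ∈ (0,1) and αρ̂ ∈ (0,1). For every real θ, the iterated integral ∫_0^1 ∫_y^∞ ∫_0^∞ u^{iθ} v^{−iθ} (1−y)^{αρ̂−1} (v−y)^{αρ−1} (v+u)^{−(1+α)} du dv dy, multiplied by (sin(παρ̂)/π)·(Γ(α+1)/(Γ(αρ)Γ(αρ̂))), equals Γ(1+iθ)·Γ(α−iθ)/Γ(α). -/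
open Complex MeasureTheory Set

lemma cpow_exp_log {r : ℝ} (hr : 0 < r) (s : ℂ) :
    (r:ℂ)^s = Complex.exp (s * (Real.log r : ℂ)) := by
  rw [Complex.cpow_def_of_ne_zero (ofReal_ne_zero.mpr hr.ne'), ← Complex.ofReal_log hr.le,
    mul_comm]

lemma ofReal_exp_log {r : ℝ} (hr : 0 < r) : (r:ℂ) = Complex.exp ((Real.log r : ℂ)) := by
  rw [← Complex.ofReal_exp, Real.exp_log hr]

lemma cpow_comb {r : ℝ} (hr : 0 < r) (s t : ℂ) : (r:ℂ)^s * (r:ℂ)^t = (r:ℂ)^(s+t) :=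
  (Complex.cpow_add _ _ (by exact_mod_cast hr.ne')).symm

lemma beta_Ioi (a b : ℂ) (ha : 0 < a.re) (hb : 0 < b.re) (c : ℝ) (hc : 0 < c) :
    ∫ u in Ioi (0:ℝ), (u:ℂ)^(a-1) * ((c + u : ℝ):ℂ)^(-(a+b)) =
      (c:ℂ)^(-b) * (Complex.Gamma a * Complex.Gamma b / Complex.Gamma (a+b)) := by
  set g : ℝ → ℝ := fun x => c * x / (1 - x) with hg
  have himg : g '' Ioo 0 1 = Ioi 0 := by
    ext u; constructor
    · rintro ⟨x, hx, rfl⟩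
      exact div_pos (mul_pos hc hx.1) (by linarith [hx.2])
    · intro hu
      have hu0 : 0 < u := hu
      have hcu : (0:ℝ) < c + u := by linarith
      refine ⟨u / (c + u), ⟨by positivity, by rw [div_lt_one hcu]; linarith⟩, ?_⟩
      simp only [hg]
      have hden : 1 - u / (c + u) = c / (c + u) := by field_simp; ring
      rw [hden]
      rw [div_eq_iff (by positivity)]
      field_simp
  have hderiv : ∀ x ∈ Ioo (0:ℝ) 1, HasDerivWithinAt g (c / (1 - x)^2) (Ioo 0 1) x := by
    intro x hx
    have hne : (1:ℝ) - x ≠ 0 := by have := hx.2; intro h; linarith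
    have h1 : HasDerivAt (fun x : ℝ => c * x) c x := by
      simpa using (hasDerivAt_id x).const_mul c
    have h2 : HasDerivAt (fun x : ℝ => 1 - x) (-1) x := by
      simpa using ((hasDerivAt_id x).const_sub 1)
    have := h1.div h2 hne
    rw [show (c * (1 - x) - c * x * -1) / (1 - x) ^ 2 = c / (1 - x) ^ 2 by ring] at this
    exact this.hasDerivWithinAt
  have hinj : InjOn g (Ioo 0 1) := by
    have key : ∀ x ∈ Ioo (0:ℝ) 1, g x / (c + g x) = x := by
      intro x hx
      have hne : (1:ℝ) - x ≠ 0 := by have := hx.2; intro h; linarith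
      have hpos : 0 < c + g x := by
        have : 0 < g x := div_pos (mul_pos hc hx.1) (by linarith [hx.2])
        linarith
      rw [div_eq_iff hpos.ne', hg]
      field_simp
      ring
    intro x hx x' hx' h
    rw [← key x hx, ← key x' hx', h]
  rw [← himg, integral_image_eq_integral_abs_deriv_smul measurableSet_Ioo hderiv hinj]
  have hbeta : Complex.betaIntegral a b =
      ∫ x in Ioo (0:ℝ) 1, (x:ℂ)^(a-1) * (((1-x : ℝ)):ℂ)^(b-1) := by
    rw [Complex.betaIntegral, intervalIntegral.integral_of_le zero_le_one,
      integral_Ioc_eq_integral_Ioo]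
    refine setIntegral_congr_fun measurableSet_Ioo fun x hx => ?_
    push_cast
    ring_nf
  have hGne : Complex.Gamma (a+b) ≠ 0 :=
    Complex.Gamma_ne_zero_of_re_pos (by rw [add_re]; positivity)
  have hval : Complex.Gamma a * Complex.Gamma b / Complex.Gamma (a+b) =
      Complex.betaIntegral a b := by
    rw [eq_comm, eq_div_iff hGne, mul_comm, Complex.Gamma_mul_Gamma_eq_betaIntegral ha hb]
  rw [hval, hbeta, ← integral_const_mul]
  refine setIntegral_congr_fun measurableSet_Ioo fun x hx => ?_
  have hx0 : (0:ℝ) < x := hx.1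
  have hx1 : (0:ℝ) < 1 - x := by linarith [hx.2]
  have hgx : c + g x = c / (1 - x) := by
    rw [hg]; field_simp; ring
  have hgpos : 0 < g x := div_pos (mul_pos hc hx0) hx1
  have habs : |c / (1 - x)^2| = c / (1-x)^2 := abs_of_pos (by positivity)
  rw [habs, real_smul, hgx, hg]
  simp only []
  rw [cpow_exp_log (show (0:ℝ) < c*x/(1-x) by positivity),
      cpow_exp_log (show (0:ℝ) < c/(1-x) by positivity),
      cpow_exp_log hc, cpow_exp_log hx0, cpow_exp_log hx1,
      ofReal_exp_log (show (0:ℝ) < c/(1-x)^2 by positivity),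
      ← Complex.exp_add, ← Complex.exp_add, ← Complex.exp_add, ← Complex.exp_add]
  congr 1
  rw [Real.log_div (by positivity) (by positivity), Real.log_div (by positivity) hx1.ne',
      Real.log_div hc.ne' hx1.ne', Real.log_mul hc.ne' hx0.ne', Real.log_pow]
  push_cast
  ring

lemma final_alg (S P A B X Y Z : ℂ) (hS : S ≠ 0) (hP : P ≠ 0) (hA : A ≠ 0)
    (hX : X ≠ 0) (hY : Y ≠ 0) (hZ : Z ≠ 0) :
    S / P * (A / (X * Y)) * (B / A * (X * Y / Z) * (P / S)) = B / Z := by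
  field_simp

lemma shift_Ioi (y : ℝ) (f : ℝ → ℂ) : ∫ v in Ioi y, f v = ∫ w in Ioi (0:ℝ), f (y + w) := by
  have : MeasurePreserving (fun w => y + w) volume volume :=
    measurePreserving_add_left volume y
  rw [← this.setIntegral_preimage_emb (measurableEmbedding_addLeft y)]
  congr 1
  ext w
  simp [mem_Ioi]

theorem triple_integral_characteristic_function
    (α ρ : ℝ) (hα : α ∈ Set.Ioo (0:ℝ) 2) (hρ : ρ ∈ Set.Ioo (0:ℝ) 1)
    (h1 : α * ρ ∈ Set.Ioo (0:ℝ) 1) (h2 : α * (1 - ρ) ∈ Set.Ioo (0:ℝ) 1) (θ : ℝ) :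
    (Real.sin (Real.pi * α * (1 - ρ)) / Real.pi) *
      (Complex.Gamma (α + 1) / (Complex.Gamma (α * ρ) * Complex.Gamma (α * (1 - ρ)))) *
      ∫ y in Set.Ioo (0:ℝ) 1, ∫ v in Set.Ioi y, ∫ u in Set.Ioi (0:ℝ),
        (u : ℂ) ^ (I * θ) * (v : ℂ) ^ (-(I * θ)) *
          (((1 - y) ^ (α * (1 - ρ) - 1) * (v - y) ^ (α * ρ - 1) *
              (v + u) ^ (-(1 + α)) : ℝ) : ℂ) =
    Complex.Gamma (1 + I * θ) * Complex.Gamma (α - I * θ) / Complex.Gamma α := by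
  obtain ⟨hα0, hα2⟩ := hα
  obtain ⟨hr1, hr2⟩ := h1
  obtain ⟨hs1, hs2⟩ := h2
  set r : ℝ := α * ρ with hrdef
  set s : ℝ := α * (1 - ρ) with hsdef
  set G1 : ℂ := Complex.Gamma (1 + I * θ) * Complex.Gamma ((α:ℂ) - I * θ) /
    Complex.Gamma (1 + (α:ℂ)) with hG1
  set G2 : ℂ := Complex.Gamma ((r:ℝ):ℂ) * Complex.Gamma ((s:ℝ):ℂ) /
    Complex.Gamma ((α:ℂ)) with hG2
  -- step 1 : inner integral
  have inner_eq : ∀ y ∈ Ioo (0:ℝ) 1, ∀ v ∈ Ioi y,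
      (∫ u in Ioi (0:ℝ), (u : ℂ) ^ (I * θ) * (v : ℂ) ^ (-(I * θ)) *
          (((1 - y) ^ (s - 1) * (v - y) ^ (r - 1) * (v + u) ^ (-(1 + α)) : ℝ) : ℂ)) =
      (((1 - y) ^ (s - 1) : ℝ) : ℂ) * G1 *
        ((((v - y) ^ (r - 1) : ℝ) : ℂ) * (v:ℂ) ^ (-(α:ℂ))) := by
    intro y hy v hv
    have hv0 : (0:ℝ) < v := lt_trans hy.1 hv
    have key := beta_Ioi (1 + I * θ) ((α:ℂ) - I * θ) (by simp) (by simp [hα0]) v hv0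
    have congr1 : (∫ u in Ioi (0:ℝ), (u : ℂ) ^ (I * θ) * (v : ℂ) ^ (-(I * θ)) *
          (((1 - y) ^ (s - 1) * (v - y) ^ (r - 1) * (v + u) ^ (-(1 + α)) : ℝ) : ℂ)) =
        ∫ u in Ioi (0:ℝ), ((v : ℂ) ^ (-(I * θ)) * (((1 - y) ^ (s - 1) : ℝ):ℂ) *
          (((v - y) ^ (r - 1) : ℝ):ℂ)) *
          ((u:ℂ) ^ ((1 + I * θ) - 1) * ((v + u : ℝ):ℂ) ^ (-((1 + I * θ) + ((α:ℂ) - I * θ)))) := by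
      refine setIntegral_congr_fun measurableSet_Ioi fun u hu => ?_
      have hu0 : (0:ℝ) < u := hu
      rw [ofReal_mul, ofReal_mul, Complex.ofReal_cpow (by linarith : (0:ℝ) ≤ v + u)]
      rw [show ((-(1+α) : ℝ) : ℂ) = -((1 + I * θ) + ((α:ℂ) - I * θ)) by push_cast; ring]
      rw [show (1 + I * θ) - 1 = I * θ by ring]
      ring
    rw [congr1, integral_const_mul, key]
    have hcomb : (v:ℂ) ^ (-(I*θ)) * (v:ℂ) ^ (-((α:ℂ) - I * θ)) = (v:ℂ) ^ (-(α:ℂ)) := by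
      rw [cpow_comb hv0]; congr 1; ring
    rw [hG1]
    rw [show (1 + I * θ) + ((α:ℂ) - I * θ) = 1 + (α:ℂ) by ring]
    calc (v:ℂ) ^ (-(I*θ)) * (((1 - y) ^ (s - 1) : ℝ):ℂ) * (((v - y) ^ (r - 1) : ℝ):ℂ) *
          ((v:ℂ) ^ (-((α:ℂ) - I * θ)) *
            (Complex.Gamma (1 + I*θ) * Complex.Gamma ((α:ℂ) - I*θ) / Complex.Gamma (1 + (α:ℂ))))
        = (((1 - y) ^ (s - 1) : ℝ):ℂ) *
            (Complex.Gamma (1 + I*θ) * Complex.Gamma ((α:ℂ) - I*θ) / Complex.Gamma (1 + (α:ℂ))) *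
            ((((v - y) ^ (r - 1) : ℝ):ℂ) * ((v:ℂ) ^ (-(I*θ)) * (v:ℂ) ^ (-((α:ℂ) - I * θ)))) := by
          ring
      _ = _ := by rw [hcomb]
  -- step 2 : middle integral
  have middle_eq : ∀ y ∈ Ioo (0:ℝ) 1,
      (∫ v in Ioi y, (((1 - y) ^ (s - 1) : ℝ) : ℂ) * G1 *
        ((((v - y) ^ (r - 1) : ℝ) : ℂ) * (v:ℂ) ^ (-(α:ℂ)))) =
      (((1 - y) ^ (s - 1) : ℝ) : ℂ) * G1 * ((y:ℂ) ^ (-((s:ℝ):ℂ)) * G2) := by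
    intro y hy
    rw [integral_const_mul]
    congr 1
    rw [shift_Ioi y (fun v => (((v - y) ^ (r - 1) : ℝ) : ℂ) * (v:ℂ) ^ (-(α:ℂ)))]
    have key := beta_Ioi ((r:ℝ):ℂ) ((s:ℝ):ℂ) (by simp [hr1]) (by simp [hs1]) y hy.1
    rw [show Complex.Gamma (((r:ℝ):ℂ) + ((s:ℝ):ℂ)) = Complex.Gamma ((α:ℂ)) by
      congr 1; simp only [hrdef, hsdef]; push_cast; ring] at key
    rw [← hG2] at key
    rw [← key]
    refine setIntegral_congr_fun measurableSet_Ioi fun w hw => ?_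
    have hw0 : (0:ℝ) < w := hw
    simp only [add_sub_cancel_left]
    rw [Complex.ofReal_cpow hw0.le,
      show ((r - 1 : ℝ):ℂ) = ((r:ℝ):ℂ) - 1 by push_cast; ring,
      show -((α:ℝ):ℂ) = -(((r:ℝ):ℂ) + ((s:ℝ):ℂ)) by
        simp only [hrdef, hsdef]; push_cast; ring]
  -- step 3 : outer integral
  have houter : (∫ y in Ioo (0:ℝ) 1, (((1 - y) ^ (s - 1) : ℝ) : ℂ) * G1 *
      ((y:ℂ) ^ (-((s:ℝ):ℂ)) * G2)) =
      G1 * G2 * (Complex.Gamma (1 - ((s:ℝ):ℂ)) * Complex.Gamma ((s:ℝ):ℂ)) := by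
    have hbeta : Complex.betaIntegral (1 - ((s:ℝ):ℂ)) ((s:ℝ):ℂ) =
        ∫ x in Ioo (0:ℝ) 1, (x:ℂ) ^ (-((s:ℝ):ℂ)) * (((1 - x : ℝ)):ℂ) ^ (((s:ℝ):ℂ) - 1) := by
      rw [Complex.betaIntegral, intervalIntegral.integral_of_le zero_le_one,
        integral_Ioc_eq_integral_Ioo]
      refine setIntegral_congr_fun measurableSet_Ioo fun x hx => ?_
      rw [show (1 - ((s:ℝ):ℂ)) - 1 = -((s:ℝ):ℂ) by ring]
      norm_cast
    have hval : Complex.Gamma (1 - ((s:ℝ):ℂ)) * Complex.Gamma ((s:ℝ):ℂ) =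
        Complex.betaIntegral (1 - ((s:ℝ):ℂ)) ((s:ℝ):ℂ) := by
      have := Complex.Gamma_mul_Gamma_eq_betaIntegral
        (s := 1 - ((s:ℝ):ℂ)) (t := ((s:ℝ):ℂ)) (by simp [hs2]) (by simp [hs1])
      rwa [show (1 - ((s:ℝ):ℂ)) + ((s:ℝ):ℂ) = 1 by ring, Complex.Gamma_one, one_mul] at this
    rw [hval, hbeta, ← integral_const_mul]
    refine setIntegral_congr_fun measurableSet_Ioo fun y hy => ?_
    have hy1 : (0:ℝ) < 1 - y := by linarith [hy.2]
    rw [Complex.ofReal_cpow hy1.le]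
    push_cast
    ring
  -- chain the three steps
  have total : (∫ y in Ioo (0:ℝ) 1, ∫ v in Ioi y, ∫ u in Ioi (0:ℝ),
        (u : ℂ) ^ (I * θ) * (v : ℂ) ^ (-(I * θ)) *
          (((1 - y) ^ (s - 1) * (v - y) ^ (r - 1) * (v + u) ^ (-(1 + α)) : ℝ) : ℂ)) =
      G1 * G2 * (Complex.Gamma (1 - ((s:ℝ):ℂ)) * Complex.Gamma ((s:ℝ):ℂ)) := by
    rw [← houter]
    refine setIntegral_congr_fun measurableSet_Ioo fun y hy => ?_
    rw [← middle_eq y hy]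
    refine setIntegral_congr_fun measurableSet_Ioi fun v hv => ?_
    exact inner_eq y hy v hv
  rw [total]
  -- final algebra
  have hsinpos : 0 < Real.sin (Real.pi * α * (1 - ρ)) := by
    rw [show Real.pi * α * (1 - ρ) = Real.pi * s by rw [hsdef]; ring]
    apply Real.sin_pos_of_pos_of_lt_pi
    · positivity
    · nlinarith [Real.pi_pos]
  have hrefl := Complex.Gamma_mul_Gamma_one_sub ((s:ℝ):ℂ)
  rw [show (↑Real.pi * ((s:ℝ):ℂ)) = ((Real.pi * s : ℝ):ℂ) by push_cast; ring,
    ← Complex.ofReal_sin] at hrefl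
  have hGα : Complex.Gamma ((α:ℂ)) ≠ 0 := Complex.Gamma_ne_zero_of_re_pos (by simp [hα0])
  have hGα1 : Complex.Gamma (1 + (α:ℂ)) ≠ 0 := Complex.Gamma_ne_zero_of_re_pos (by
    simp; linarith)
  have hGr : Complex.Gamma ((r:ℝ):ℂ) ≠ 0 := Complex.Gamma_ne_zero_of_re_pos (by simp [hr1])
  have hGs : Complex.Gamma ((s:ℝ):ℂ) ≠ 0 := Complex.Gamma_ne_zero_of_re_pos (by simp [hs1])
  have hsin' : ((Real.sin (Real.pi * s) : ℝ):ℂ) ≠ 0 := by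
    rw [Complex.ofReal_ne_zero, show Real.pi * s = Real.pi * α * (1 - ρ) by rw [hsdef]; ring]
    exact hsinpos.ne'
  have hπ : ((Real.pi : ℝ):ℂ) ≠ 0 := Complex.ofReal_ne_zero.mpr Real.pi_ne_zero
  have hGs1 : Complex.Gamma (1 - ((s:ℝ):ℂ)) * Complex.Gamma ((s:ℝ):ℂ) =
      ((Real.pi : ℝ):ℂ) / ((Real.sin (Real.pi * s) : ℝ):ℂ) := by
    rw [← hrefl]; ring
  rw [hGs1, hG1, hG2]
  rw [show ((α:ℂ) * (ρ:ℂ)) = ((r:ℝ):ℂ) by rw [hrdef]; push_cast; ring,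
    show ((α:ℂ) * (1 - (ρ:ℂ))) = ((s:ℝ):ℂ) by rw [hsdef]; push_cast; ring,
    show Real.pi * α * (1 - ρ) = Real.pi * s by rw [hsdef]; ring,
    show (α:ℂ) + 1 = 1 + (α:ℂ) from add_comm _ _]
  exact final_alg _ _ _ _ _ _ _ hsin' hπ hGα1 hGr hGs hGα
end

section
/- Let α ∈ (0,2), ρ ∈ (0,1), ρ̂ = 1−ρ with αρ̂ ∈ (0,1), and let a < 0 and w < a. Then αρ̂ · e^{−αw} ∫_0^{1−e^{a}} t^{αρ̂−1} (e^{−w} − 1 − e^{−w} t)^{−αρ̂−1} dt = (1−e^{a})^{αρ̂} · e^{(1−αρ)w} · (1−e^{w})^{−1} · (e^{a}−e^{w})^{−αρ̂}. -/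
open MeasureTheory

theorem first_passage_density_identity
    (α ρ : ℝ) (hα : α ∈ Set.Ioo (0:ℝ) 2) (hρ : ρ ∈ Set.Ioo (0:ℝ) 1)
    (h : α * (1 - ρ) ∈ Set.Ioo (0:ℝ) 1) (a w : ℝ) (ha : a < 0) (hw : w < a) :
    α * (1 - ρ) * Real.exp (-α * w) *
      ∫ t in (0:ℝ)..(1 - Real.exp a),
        t ^ (α * (1 - ρ) - 1) *
          (Real.exp (-w) - 1 - Real.exp (-w) * t) ^ (-(α * (1 - ρ)) - 1) =
    (1 - Real.exp a) ^ (α * (1 - ρ)) * Real.exp ((1 - α * ρ) * w) *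
      (1 - Real.exp w)⁻¹ * (Real.exp a - Real.exp w) ^ (-(α * (1 - ρ))) := by
  obtain ⟨hβ0, hβ1⟩ := h
  set β := α * (1 - ρ) with hβ
  set A : ℝ := Real.exp (-w) - 1 with hA
  set B : ℝ := Real.exp (-w) with hB
  set c : ℝ := 1 - Real.exp a with hc
  have hw0 : w < 0 := hw.trans ha
  have hewa : Real.exp w < Real.exp a := Real.exp_lt_exp.2 hw
  have hea1 : Real.exp a < 1 := by
    simpa using Real.exp_lt_exp.2 ha
  have hew1 : Real.exp w < 1 := hewa.trans hea1
  have hBpos : (0:ℝ) < B := Real.exp_pos _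
  have hApos : (0:ℝ) < A := by
    have : (1:ℝ) < Real.exp (-w) := by
      simpa using Real.exp_lt_exp.2 (by linarith : (0:ℝ) < -w)
    simp [hA]; linarith
  have hcpos : (0:ℝ) < c := by simp [hc]; linarith
  have hABc : A - B * c = Real.exp (-w) * (Real.exp a - Real.exp w) := by
    have hww : Real.exp (-w) * Real.exp w = 1 := by
      rw [← Real.exp_add]; simp
    simp only [hA, hB, hc]; ring_nf; nlinarith [hww]
  have hABcpos : (0:ℝ) < A - B * c := by
    rw [hABc]
    have : (0:ℝ) < Real.exp a - Real.exp w := by linarith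
    positivity
  have hpos : ∀ t ∈ Set.Icc (0:ℝ) c, 0 < A - B * t := by
    intro t ht
    have : B * t ≤ B * c := mul_le_mul_of_nonneg_left ht.2 hBpos.le
    linarith
  set F : ℝ → ℝ := fun t => t ^ β * (A - B * t) ^ (-β) / (β * A) with hF
  have hderiv : ∀ t ∈ Set.Ioo (0:ℝ) c,
      HasDerivAt F (t ^ (β - 1) * (A - B * t) ^ (-β - 1)) t := by
    intro t ht
    have ht0 : (0:ℝ) < t := ht.1
    have hpt : (0:ℝ) < A - B * t := hpos t ⟨ht.1.le, ht.2.le⟩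
    have h1 : HasDerivAt (fun t : ℝ => t ^ β) (β * t ^ (β - 1)) t :=
      Real.hasDerivAt_rpow_const (Or.inl ht0.ne')
    have hlin : HasDerivAt (fun t : ℝ => A - B * t) (-B) t := by
      simpa using ((hasDerivAt_id t).const_mul B).const_sub A
    have h2 : HasDerivAt (fun t : ℝ => (A - B * t) ^ (-β))
        ((-β) * (A - B * t) ^ (-β - 1) * (-B)) t :=
      (Real.hasDerivAt_rpow_const (p := -β) (Or.inl hpt.ne')).comp (h := fun t : ℝ => A - B * t) t hlin
    have := (h1.mul h2).div_const (β * A)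
    refine this.congr_deriv ?_
    have e1 : t ^ β = t ^ (β - 1) * t := by
      rw [← Real.rpow_add_one ht0.ne', sub_add_cancel]
    have e2 : (A - B * t) ^ (-β) = (A - B * t) ^ (-β - 1) * (A - B * t) := by
      rw [← Real.rpow_add_one hpt.ne']; ring_nf
    rw [e1, e2]
    field_simp
    ring
  have hFcont : ContinuousOn F (Set.Icc 0 c) := by
    apply ContinuousOn.div_const
    apply ContinuousOn.mul
    · exact continuousOn_id.rpow_const fun x hx => Or.inr hβ0.le
    · exact (continuousOn_const.sub (continuousOn_const.mul continuousOn_id)).rpow_const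
        fun x hx => Or.inl (hpos x hx).ne'
  have hint : IntervalIntegrable
      (fun t => t ^ (β - 1) * (A - B * t) ^ (-β - 1)) volume 0 c := by
    apply IntervalIntegrable.mul_continuousOn
    · exact intervalIntegral.intervalIntegrable_rpow' (by linarith)
    · apply (continuousOn_const.sub (continuousOn_const.mul continuousOn_id)).rpow_const
      intro x hx
      rw [Set.uIcc_of_le hcpos.le] at hx
      exact Or.inl (hpos x hx).ne'
  have hFTC : ∫ t in (0:ℝ)..c, t ^ (β - 1) * (A - B * t) ^ (-β - 1) = F c - F 0 :=
    intervalIntegral.integral_eq_sub_of_hasDerivAt_of_le hcpos.le hFcont hderiv hint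
  have hF0 : F 0 = 0 := by
    simp [hF, Real.zero_rpow hβ0.ne']
  rw [hFTC, hF0, sub_zero, hF]
  beta_reduce
  -- final algebra
  have hexpw : Real.exp (-w) ^ (-β) = Real.exp (w * β) := by
    rw [← Real.exp_mul]; ring_nf
  have hAe : A = Real.exp (-w) * (1 - Real.exp w) := by
    have hww : Real.exp (-w) * Real.exp w = 1 := by rw [← Real.exp_add]; simp
    simp [hA]; nlinarith [hww]
  have hrw : (A - B * c) ^ (-β)
      = Real.exp (w * β) * (Real.exp a - Real.exp w) ^ (-β) := by
    rw [hABc, Real.mul_rpow (Real.exp_pos _).le (by linarith), hexpw]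
  rw [hrw, hAe]
  have key : Real.exp (-(α * w)) * Real.exp (w * β)
      = Real.exp ((1 - α * ρ) * w) * Real.exp (-w) := by
    rw [← Real.exp_add, ← Real.exp_add]
    congr 1
    rw [hβ]; ring
  have h1ew : (0:ℝ) < 1 - Real.exp w := by linarith
  field_simp
  rw [mul_comm β w, key, mul_comm w (1 - α * ρ)]; ring
end

section
/- Let α ∈ (0,1], ρ ∈ (0,1), ρ̂ = 1−ρ with αρ ∈ (0,1) and αρ̂ ∈ (0,1), and let 0 < p < w. Then ∫_0^p (1−e^{−z})^{αρ̂−1} e^{−(1−α)z} (1−e^{p−w−z})^{αρ−1} dz = (1−e^{p−w})^{α−1} ∫_0^{(1−e^{−p})/(1−e^{−w})} t^{αρ̂−1} (1−t)^{−α} dt. -/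
open MeasureTheory

theorem killed_potential_density_above
    (α ρ : ℝ) (hα : α ∈ Set.Ioc (0:ℝ) 1) (hρ : ρ ∈ Set.Ioo (0:ℝ) 1)
    (h1 : α * ρ ∈ Set.Ioo (0:ℝ) 1) (h2 : α * (1 - ρ) ∈ Set.Ioo (0:ℝ) 1)
    (p w : ℝ) (hp : 0 < p) (hw : p < w) :
    ∫ z in (0:ℝ)..p,
        (1 - Real.exp (-z)) ^ (α * (1 - ρ) - 1) * Real.exp (-(1 - α) * z) *
          (1 - Real.exp (p - w - z)) ^ (α * ρ - 1) =
    (1 - Real.exp (p - w)) ^ (α - 1) *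
      ∫ t in (0:ℝ)..((1 - Real.exp (-p)) / (1 - Real.exp (-w))),
        t ^ (α * (1 - ρ) - 1) * (1 - t) ^ (-α) := by
  obtain ⟨hα0, hα1⟩ := hα
  have hE : Real.exp (p - w) < 1 := Real.exp_lt_one_iff.mpr (by linarith)
  have hE0 : 0 < 1 - Real.exp (p - w) := by linarith
  have hD : ∀ z : ℝ, 0 ≤ z → 0 < 1 - Real.exp (p - w - z) := by
    intro z hz
    have : Real.exp (p - w - z) < 1 := Real.exp_lt_one_iff.mpr (by linarith)
    linarith
  set f : ℝ → ℝ := fun z => (1 - Real.exp (-z)) / (1 - Real.exp (p - w - z)) with hfdef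
  set g : ℝ → ℝ := fun z =>
      Real.exp (-z) * (1 - Real.exp (p - w)) / (1 - Real.exp (p - w - z)) ^ 2 with hgdef
  have hderiv : ∀ z : ℝ, 0 ≤ z → HasDerivAt f (g z) z := by
    intro z hz
    have hDz := hD z hz
    have h1 : HasDerivAt (fun z : ℝ => 1 - Real.exp (-z)) (Real.exp (-z)) z := by
      have h := (Real.hasDerivAt_exp (-z)).comp z ((hasDerivAt_id z).neg)
      simpa using (h.const_sub 1)
    have h2 : HasDerivAt (fun z : ℝ => 1 - Real.exp (p - w - z))
        (Real.exp (p - w - z)) z := by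
      have h := (Real.hasDerivAt_exp (p - w - z)).comp z
        (((hasDerivAt_id z).const_sub (p - w)))
      simpa using (h.const_sub 1)
    have h := h1.div h2 hDz.ne'
    change HasDerivAt f _ z at h
    have hnum : Real.exp (-z) * (1 - Real.exp (p - w - z)) -
        (1 - Real.exp (-z)) * Real.exp (p - w - z)
        = Real.exp (-z) * (1 - Real.exp (p - w)) := by
      rw [show p - w - z = (p - w) + -z by ring, Real.exp_add]; ring
    rw [hgdef]
    simpa [hnum] using h
  have hcont : ContinuousOn f (Set.Icc 0 p) := fun z hz =>
    (hderiv z hz.1).continuousAt.continuousWithinAt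
  have hmono : StrictMonoOn f (Set.Icc 0 p) := by
    apply strictMonoOn_of_deriv_pos (convex_Icc 0 p) hcont
    intro x hx
    rw [interior_Icc] at hx
    rw [(hderiv x hx.1.le).deriv]
    exact div_pos (mul_pos (Real.exp_pos _) hE0) (pow_pos (hD x hx.1.le) 2)
  have hf0 : f 0 = 0 := by simp [hfdef]
  have hfp : f p = (1 - Real.exp (-p)) / (1 - Real.exp (-w)) := by
    rw [hfdef]
    simp only
    rw [show p - w - p = -w by ring]
  have himg : f '' Set.Ioo 0 p
      = Set.Ioo 0 ((1 - Real.exp (-p)) / (1 - Real.exp (-w))) := by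
    apply Set.Subset.antisymm
    · have h := hmono.image_Ioo_subset
      rwa [hf0, hfp] at h
    · have h := intermediate_value_Ioo hp.le hcont
      rwa [hf0, hfp] at h
  have hinj : Set.InjOn f (Set.Ioo 0 p) :=
    hmono.injOn.mono Set.Ioo_subset_Icc_self
  have hcv := integral_image_eq_integral_abs_deriv_smul (f' := g) measurableSet_Ioo
      (fun x hx => (hderiv x (le_of_lt hx.1)).hasDerivWithinAt) hinj
      (fun t => t ^ (α * (1 - ρ) - 1) * (1 - t) ^ (-α))
  rw [himg] at hcv
  have hT : 0 < (1 - Real.exp (-p)) / (1 - Real.exp (-w)) := by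
    have h1 : Real.exp (-p) < 1 := Real.exp_lt_one_iff.mpr (by linarith)
    have h2 : Real.exp (-w) < 1 := Real.exp_lt_one_iff.mpr (by linarith)
    exact div_pos (by linarith) (by linarith)
  rw [intervalIntegral.integral_of_le hT.le, MeasureTheory.integral_Ioc_eq_integral_Ioo,
    hcv, intervalIntegral.integral_of_le hp.le, MeasureTheory.integral_Ioc_eq_integral_Ioo]
  have key : ∀ z ∈ Set.Ioo (0:ℝ) p,
      |g z| • (f z ^ (α * (1 - ρ) - 1) * (1 - f z) ^ (-α))
        = (1 - Real.exp (p - w)) ^ (1 - α) *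
          ((1 - Real.exp (-z)) ^ (α * (1 - ρ) - 1) * Real.exp (-(1 - α) * z) *
            (1 - Real.exp (p - w - z)) ^ (α * ρ - 1)) := by
    intro z hz
    have hN : 0 < 1 - Real.exp (-z) := by
      have : Real.exp (-z) < 1 := Real.exp_lt_one_iff.mpr (by linarith [hz.1])
      linarith
    have hDz : 0 < 1 - Real.exp (p - w - z) := hD z hz.1.le
    have hgpos : 0 < g z :=
      div_pos (mul_pos (Real.exp_pos _) hE0) (pow_pos hDz 2)
    have hfz : 0 < f z := div_pos hN hDz
    have h1f : 1 - f z
        = Real.exp (-z) * (1 - Real.exp (p - w)) / (1 - Real.exp (p - w - z)) := by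
      rw [hfdef]
      simp only
      rw [eq_div_iff hDz.ne', sub_mul, div_mul_cancel₀ _ hDz.ne',
        show p - w - z = (p - w) + -z by ring, Real.exp_add]
      ring
    have h1fpos : 0 < 1 - f z := by
      rw [h1f]; exact div_pos (mul_pos (Real.exp_pos _) hE0) hDz
    rw [abs_of_pos hgpos, smul_eq_mul]
    have hL : 0 < g z * (f z ^ (α * (1 - ρ) - 1) * (1 - f z) ^ (-α)) :=
      mul_pos hgpos (mul_pos (Real.rpow_pos_of_pos hfz _) (Real.rpow_pos_of_pos h1fpos _))
    have hR : 0 < (1 - Real.exp (p - w)) ^ (1 - α) *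
        ((1 - Real.exp (-z)) ^ (α * (1 - ρ) - 1) * Real.exp (-(1 - α) * z) *
          (1 - Real.exp (p - w - z)) ^ (α * ρ - 1)) :=
      mul_pos (Real.rpow_pos_of_pos hE0 _)
        (mul_pos (mul_pos (Real.rpow_pos_of_pos hN _) (Real.exp_pos _))
          (Real.rpow_pos_of_pos hDz _))
    rw [← Real.exp_log hL, ← Real.exp_log hR]
    congr 1
    rw [Real.log_mul hgpos.ne'
        (mul_pos (Real.rpow_pos_of_pos hfz _) (Real.rpow_pos_of_pos h1fpos _)).ne',
      Real.log_mul (Real.rpow_pos_of_pos hfz _).ne' (Real.rpow_pos_of_pos h1fpos _).ne',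
      Real.log_rpow hfz, Real.log_rpow h1fpos,
      Real.log_mul (Real.rpow_pos_of_pos hE0 _).ne'
        (mul_pos (mul_pos (Real.rpow_pos_of_pos hN _) (Real.exp_pos _))
          (Real.rpow_pos_of_pos hDz _)).ne',
      Real.log_mul (mul_pos (Real.rpow_pos_of_pos hN _) (Real.exp_pos _)).ne'
        (Real.rpow_pos_of_pos hDz _).ne',
      Real.log_mul (Real.rpow_pos_of_pos hN _).ne' (Real.exp_pos _).ne',
      Real.log_rpow hE0, Real.log_rpow hN, Real.log_rpow hDz, Real.log_exp,
      h1f, hgdef, hfdef]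
    simp only
    rw [Real.log_div (mul_pos (Real.exp_pos _) hE0).ne' (pow_pos hDz 2).ne',
      Real.log_mul (Real.exp_pos _).ne' hE0.ne', Real.log_exp, Real.log_pow,
      Real.log_div hN.ne' hDz.ne',
      Real.log_div (mul_pos (Real.exp_pos _) hE0).ne' hDz.ne',
      Real.log_mul (Real.exp_pos _).ne' hE0.ne', Real.log_exp]
    push_cast
    ring
  rw [setIntegral_congr_fun measurableSet_Ioo key, integral_const_mul,
    ← mul_assoc, ← Real.rpow_add hE0]
  norm_num
end

section
/- Let α ∈ (0,1], ρ ∈ (0,1), ρ̂ = 1−ρ with αρ ∈ (0,1) and αρ̂ ∈ (0,1), and let 0 < w < p. Then ∫_{p−w}^{p} (1−e^{−z})^{αρ̂−1} e^{−(1−α)z} (1−e^{p−w−z})^{αρ−1} dz = (e^{p−w}−1)^{α−1} ∫_0^{(1−e^{−w})/(1−e^{−p})} t^{αρ−1} (1−t)^{−α} dt. -/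
open MeasureTheory Set

lemma rpow_key (r s X E Y C : ℝ) (hr : r - 1 ≠ 0) (hX : 0 < X) (hE : 0 < E)
    (hC : 0 < C) (hY : 0 ≤ Y) (hXY : X - Y = E * C) :
    X ^ (s - r - 1) * E ^ (1 - s) * Y ^ (r - 1) =
      C ^ (s - 1) * (E * C / X ^ 2 * ((Y / X) ^ (r - 1) * (1 - Y / X) ^ (-s))) := by
  have h0 : 1 - Y / X = E * C / X := by
    field_simp
    linarith
  rw [h0]
  rcases eq_or_lt_of_le hY with h | hY
  · simp [← h, Real.zero_rpow hr]
  obtain ⟨x, rfl⟩ : ∃ x, Real.exp x = X := ⟨Real.log X, Real.exp_log hX⟩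
  obtain ⟨e, rfl⟩ : ∃ e, Real.exp e = E := ⟨Real.log E, Real.exp_log hE⟩
  obtain ⟨c, rfl⟩ : ∃ c, Real.exp c = C := ⟨Real.log C, Real.exp_log hC⟩
  obtain ⟨y, rfl⟩ : ∃ y, Real.exp y = Y := ⟨Real.log Y, Real.exp_log hY⟩
  simp only [← Real.exp_add, ← Real.exp_sub, ← Real.exp_mul, ← Real.exp_nat_mul,
    Nat.cast_ofNat, ← Real.exp_neg]
  rw [Real.exp_eq_exp]
  ring

theorem killed_potential_density_below
    (α ρ : ℝ) (hα : α ∈ Set.Ioc (0:ℝ) 1) (hρ : ρ ∈ Set.Ioo (0:ℝ) 1)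
    (h1 : α * ρ ∈ Set.Ioo (0:ℝ) 1) (h2 : α * (1 - ρ) ∈ Set.Ioo (0:ℝ) 1)
    (p w : ℝ) (hw : 0 < w) (hwp : w < p) :
    ∫ z in (p - w)..p,
        (1 - Real.exp (-z)) ^ (α * (1 - ρ) - 1) * Real.exp (-(1 - α) * z) *
          (1 - Real.exp (p - w - z)) ^ (α * ρ - 1) =
    (Real.exp (p - w) - 1) ^ (α - 1) *
      ∫ t in (0:ℝ)..((1 - Real.exp (-w)) / (1 - Real.exp (-p))),
        t ^ (α * ρ - 1) * (1 - t) ^ (-α) := by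
  obtain ⟨hα0, hα1⟩ := hα
  obtain ⟨hρ0, hρ1⟩ := hρ
  obtain ⟨h10, h11⟩ := h1
  obtain ⟨h20, h21⟩ := h2
  have hb : 0 < p - w := by linarith
  set b := p - w with hbdef
  have hbp : b ≤ p := by rw [hbdef]; linarith
  set a := Real.exp b with hadef
  have ha : 1 < a := Real.one_lt_exp_iff.mpr hb
  set T := (1 - Real.exp (-w)) / (1 - Real.exp (-p)) with hTdef
  -- basic exp facts
  have hEw : Real.exp (-w) < 1 := by
    calc Real.exp (-w) < Real.exp 0 := Real.exp_lt_exp.mpr (by linarith)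
    _ = 1 := Real.exp_zero
  have hEpw : Real.exp (-p) < Real.exp (-w) := Real.exp_lt_exp.mpr (by linarith)
  have hT0 : 0 < T := div_pos (by linarith) (by linarith)
  have hT1 : T < 1 := (div_lt_one (by linarith)).mpr (by linarith)
  have hw' : Real.exp (-w) = a * Real.exp (-p) := by
    rw [hadef, ← Real.exp_add, hbdef]; ring_nf
  -- pointwise facts on the interval
  have hx : ∀ z ∈ Set.Icc b p, 0 < 1 - Real.exp (-z) := by
    intro z hz
    have : Real.exp (-z) < Real.exp 0 := Real.exp_lt_exp.mpr (by
      have := hz.1; simp only [hbdef] at this ⊢; linarith)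
    rw [Real.exp_zero] at this; linarith
  have haE : ∀ z : ℝ, a * Real.exp (-z) = Real.exp (b - z) := by
    intro z; rw [hadef, ← Real.exp_add]; ring_nf
  have hy : ∀ z ∈ Set.Icc b p, 0 ≤ 1 - a * Real.exp (-z) := by
    intro z hz
    rw [haE]
    have : Real.exp (b - z) ≤ Real.exp 0 := Real.exp_le_exp.mpr (by linarith [hz.1])
    rw [Real.exp_zero] at this; linarith
  have hy' : ∀ z, b < z → 0 < 1 - a * Real.exp (-z) := by
    intro z hz
    rw [haE]
    have : Real.exp (b - z) < Real.exp 0 := Real.exp_lt_exp.mpr (by linarith)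
    rw [Real.exp_zero] at this; linarith
  -- f maps into [0, T]
  have himg1 : ∀ z ∈ Set.Icc b p,
      (1 - a * Real.exp (-z)) / (1 - Real.exp (-z)) ∈ Set.Icc 0 T := by
    intro z hz
    have hxz := hx z hz
    have hxp := hx p (by constructor <;> linarith)
    constructor
    · exact div_nonneg (hy z hz) hxz.le
    · rw [hTdef, hw', div_le_div_iff₀ hxz hxp]
      have h1 : Real.exp (-p) ≤ Real.exp (-z) := Real.exp_le_exp.mpr (by linarith [hz.2])
      nlinarith [mul_nonneg (sub_nonneg.mpr ha.le) (sub_nonneg.mpr h1)]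
  have himg2 : ∀ z ∈ Set.Ioo b p,
      (1 - a * Real.exp (-z)) / (1 - Real.exp (-z)) ∈ Set.Ioo (0:ℝ) 1 := by
    intro z hz
    have hz' : z ∈ Set.Icc b p := ⟨hz.1.le, hz.2.le⟩
    have hxz := hx z hz'
    constructor
    · exact div_pos (hy' z hz.1) hxz
    · rw [div_lt_one hxz]
      have hE0 := Real.exp_pos (-z)
      nlinarith
  -- continuity of f
  have hf : ContinuousOn (fun z => (1 - a * Real.exp (-z)) / (1 - Real.exp (-z)))
      (Set.uIcc b p) := by
    rw [Set.uIcc_of_le hbp]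
    apply ContinuousOn.div
    · exact (continuous_const.sub (continuous_const.mul
        (Real.continuous_exp.comp continuous_neg))).continuousOn
    · exact (continuous_const.sub (Real.continuous_exp.comp continuous_neg)).continuousOn
    · exact fun z hz => (hx z hz).ne'
  -- derivative
  have hff' : ∀ z ∈ Set.Ioo (min b p) (max b p),
      HasDerivWithinAt (fun z => (1 - a * Real.exp (-z)) / (1 - Real.exp (-z)))
        (Real.exp (-z) * (a - 1) / (1 - Real.exp (-z)) ^ 2) (Set.Ioi z) z := by
    rw [min_eq_left hbp, max_eq_right hbp]
    intro z hz
    have hz' : z ∈ Set.Icc b p := ⟨hz.1.le, hz.2.le⟩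
    have hxz := hx z hz'
    have hder : HasDerivAt (fun z : ℝ => Real.exp (-z)) (-Real.exp (-z)) z := by
      have := (Real.hasDerivAt_exp (-z)).comp z (hasDerivAt_neg z)
      exact (by simpa using this : HasDerivAt (Real.exp ∘ Neg.neg) (-Real.exp (-z)) z)
    have hnum : HasDerivAt (fun z : ℝ => 1 - a * Real.exp (-z)) (a * Real.exp (-z)) z := by
      have := (hder.const_mul a).const_sub 1
      exact this.congr_deriv (by ring)
    have hden : HasDerivAt (fun z : ℝ => 1 - Real.exp (-z)) (Real.exp (-z)) z := by
      have := hder.const_sub 1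
      exact this.congr_deriv (by ring)
    have := hnum.div hden hxz.ne'
    have heq : (a * Real.exp (-z) * (1 - Real.exp (-z)) -
        (1 - a * Real.exp (-z)) * Real.exp (-z)) / (1 - Real.exp (-z)) ^ 2
        = Real.exp (-z) * (a - 1) / (1 - Real.exp (-z)) ^ 2 := by ring
    rw [heq] at this
    exact this.hasDerivWithinAt
  -- continuity of g on Ioo 0 1
  have hgcont : ContinuousOn (fun t : ℝ => t ^ (α * ρ - 1) * (1 - t) ^ (-α))
      (Set.Ioo (0:ℝ) 1) := by
    apply ContinuousOn.mul
    · exact continuousOn_id.rpow_const fun t ht => Or.inl ht.1.ne'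
    · exact (continuousOn_const.sub continuousOn_id).rpow_const
        fun t ht => Or.inl (by have := ht.2; intro h; simp only [Pi.sub_apply, id] at h; linarith [sub_eq_zero.mp h])
  -- integrability of g on Icc 0 T
  have hgInt : IntegrableOn (fun t : ℝ => t ^ (α * ρ - 1) * (1 - t) ^ (-α))
      (Set.Icc (0:ℝ) T) := by
    have hmeas : AEStronglyMeasurable (fun t : ℝ => t ^ (α * ρ - 1) * (1 - t) ^ (-α))
        (volume.restrict (Set.Icc (0:ℝ) T)) := by
      have h1 : ContinuousOn (fun t : ℝ => t ^ (α * ρ - 1) * (1 - t) ^ (-α))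
          (Set.Ioo (0:ℝ) T) := hgcont.mono (Set.Ioo_subset_Ioo le_rfl hT1.le)
      have := h1.aestronglyMeasurable (μ := volume) measurableSet_Ioo
      rwa [Measure.restrict_congr_set Ioo_ae_eq_Icc] at this
    have hdom : IntegrableOn (fun t : ℝ => (1 - T) ^ (-α) * t ^ (α * ρ - 1))
        (Set.Icc (0:ℝ) T) := by
      have h1 : IntervalIntegrable (fun t : ℝ => t ^ (α * ρ - 1)) volume 0 T :=
        intervalIntegral.intervalIntegrable_rpow' (by linarith)
      exact (intervalIntegrable_iff_integrableOn_Icc_of_le hT0.le).mp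
        (h1.const_mul ((1 - T) ^ (-α)))
    apply hdom.mono' hmeas
    rw [ae_restrict_iff' measurableSet_Icc]
    filter_upwards with t ht
    rcases eq_or_lt_of_le ht.1 with h0 | h0
    · simp [← h0, Real.zero_rpow (show α * ρ - 1 ≠ 0 by intro h; nlinarith)]
    · have h1t : 0 < 1 - t := by linarith [ht.2]
      have hnn : 0 ≤ t ^ (α * ρ - 1) * (1 - t) ^ (-α) :=
        mul_nonneg (Real.rpow_nonneg h0.le _) (Real.rpow_nonneg h1t.le _)
      rw [Real.norm_eq_abs, abs_of_nonneg hnn, mul_comm ((1 - T) ^ (-α))]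
      apply mul_le_mul_of_nonneg_left _ (Real.rpow_nonneg h0.le _)
      exact Real.rpow_le_rpow_of_nonpos (by linarith) (by linarith [ht.2]) (by linarith)
  -- integrability of the LHS integrand
  have hI : IntegrableOn (fun z => (1 - Real.exp (-z)) ^ (α * (1 - ρ) - 1) *
      Real.exp (-(1 - α) * z) * (1 - Real.exp (b - z)) ^ (α * ρ - 1))
      (Set.Icc b p) := by
    rw [integrableOn_Icc_iff_integrableOn_Ioc]
    have hmeas : AEStronglyMeasurable (fun z => (1 - Real.exp (-z)) ^ (α * (1 - ρ) - 1) *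
        Real.exp (-(1 - α) * z) * (1 - Real.exp (b - z)) ^ (α * ρ - 1))
        (volume.restrict (Set.Ioc b p)) := by
      apply ContinuousOn.aestronglyMeasurable (μ := volume) _ measurableSet_Ioc
      apply ContinuousOn.mul
      apply ContinuousOn.mul
      · apply ContinuousOn.rpow_const
        · exact (continuous_const.sub (Real.continuous_exp.comp continuous_neg)).continuousOn
        · exact fun z hz => Or.inl (hx z (Set.Ioc_subset_Icc_self hz)).ne'
      · exact (Real.continuous_exp.comp (continuous_const.mul continuous_id)).continuousOn
      · apply ContinuousOn.rpow_const
        · exact (continuous_const.sub (Real.continuous_exp.comp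
            (continuous_const.sub continuous_id))).continuousOn
        · intro z hz
          left
          have h5 : Real.exp (b - z) < Real.exp 0 := Real.exp_lt_exp.mpr (by
            have := hz.1; linarith)
          rw [Real.exp_zero] at h5
          intro h
          nlinarith [sub_eq_zero.mp h]
    have hdom : IntegrableOn (fun z : ℝ =>
        ((1 - Real.exp (-b)) ^ (α * (1 - ρ) - 1) * Real.exp (-w) ^ (α * ρ - 1)) *
          (z - b) ^ (α * ρ - 1)) (Set.Ioc b p) := by
      have h1 : IntervalIntegrable (fun u : ℝ => u ^ (α * ρ - 1)) volume 0 w :=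
        intervalIntegral.intervalIntegrable_rpow' (by linarith)
      have h2 := (h1.comp_sub_right b).const_mul
        ((1 - Real.exp (-b)) ^ (α * (1 - ρ) - 1) * Real.exp (-w) ^ (α * ρ - 1))
      rw [zero_add, show w + b = p by rw [hbdef]; ring] at h2
      rwa [intervalIntegrable_iff_integrableOn_Ioc_of_le hbp] at h2
    apply hdom.mono' hmeas
    rw [ae_restrict_iff' measurableSet_Ioc]
    filter_upwards with z hz
    have hz' : z ∈ Set.Icc b p := Set.Ioc_subset_Icc_self hz
    have hxz := hx z hz'
    have hu0 : 0 < z - b := by linarith [hz.1]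
    have hxb : 0 < 1 - Real.exp (-b) := hx b ⟨le_rfl, hbp⟩
    have hA : (1 - Real.exp (-z)) ^ (α * (1 - ρ) - 1) ≤
        (1 - Real.exp (-b)) ^ (α * (1 - ρ) - 1) := by
      apply Real.rpow_le_rpow_of_nonpos hxb _ (by linarith)
      have : Real.exp (-z) ≤ Real.exp (-b) := Real.exp_le_exp.mpr (by linarith [hz'.1])
      linarith
    have hB : Real.exp (-(1 - α) * z) ≤ 1 := by
      rw [Real.exp_le_one_iff]
      have hz0 : 0 < z := lt_of_lt_of_le hb hz'.1
      nlinarith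
    have hCineq : Real.exp (-w) * (z - b) ≤ 1 - Real.exp (b - z) := by
      have hQ : (0:ℝ) < Real.exp (z - b) := Real.exp_pos _
      have hkey : z - b + 1 ≤ Real.exp (z - b) := Real.add_one_le_exp _
      have hbz : Real.exp (b - z) = (Real.exp (z - b))⁻¹ := by
        rw [← Real.exp_neg]; ring_nf
      have h1 : Real.exp (-w) ≤ (Real.exp (z - b))⁻¹ := by
        rw [← Real.exp_neg]; exact Real.exp_le_exp.mpr (by linarith [hz.2])
      have h2 : (Real.exp (z - b))⁻¹ * (z - b) ≤
          (Real.exp (z - b))⁻¹ * (Real.exp (z - b) - 1) :=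
        mul_le_mul_of_nonneg_left (by linarith) (inv_nonneg.mpr hQ.le)
      have h3 : (Real.exp (z - b))⁻¹ * (Real.exp (z - b) - 1) = 1 - (Real.exp (z - b))⁻¹ := by
        field_simp
      have h4 : Real.exp (-w) * (z - b) ≤ (Real.exp (z - b))⁻¹ * (z - b) :=
        mul_le_mul_of_nonneg_right h1 hu0.le
      rw [hbz]; linarith
    have hCpos : (0:ℝ) < Real.exp (-w) * (z - b) := mul_pos (Real.exp_pos _) hu0
    have hC : (1 - Real.exp (b - z)) ^ (α * ρ - 1) ≤
        (Real.exp (-w) * (z - b)) ^ (α * ρ - 1) :=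
      Real.rpow_le_rpow_of_nonpos hCpos hCineq (by linarith)
    have hCb : (0:ℝ) ≤ 1 - Real.exp (b - z) := by linarith
    have hnnI : 0 ≤ (1 - Real.exp (-z)) ^ (α * (1 - ρ) - 1) * Real.exp (-(1 - α) * z) *
        (1 - Real.exp (b - z)) ^ (α * ρ - 1) := by positivity
    rw [Real.norm_eq_abs, abs_of_nonneg hnnI]
    calc (1 - Real.exp (-z)) ^ (α * (1 - ρ) - 1) * Real.exp (-(1 - α) * z) *
        (1 - Real.exp (b - z)) ^ (α * ρ - 1)
        ≤ ((1 - Real.exp (-b)) ^ (α * (1 - ρ) - 1) * 1) *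
          (Real.exp (-w) * (z - b)) ^ (α * ρ - 1) := by
          apply mul_le_mul _ hC (Real.rpow_nonneg hCb _) (by positivity)
          exact mul_le_mul hA hB (Real.exp_pos _).le (Real.rpow_nonneg hxb.le _)
      _ = (1 - Real.exp (-b)) ^ (α * (1 - ρ) - 1) * Real.exp (-w) ^ (α * ρ - 1) *
          (z - b) ^ (α * ρ - 1) := by
          rw [Real.mul_rpow (Real.exp_pos (-w)).le hu0.le, mul_one]; ring
  -- key pointwise identity
  have keyEq : Set.EqOn
      (fun z => (1 - Real.exp (-z)) ^ (α * (1 - ρ) - 1) * Real.exp (-(1 - α) * z) *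
        (1 - Real.exp (b - z)) ^ (α * ρ - 1))
      (fun z => (a - 1) ^ (α - 1) *
        ((Real.exp (-z) * (a - 1) / (1 - Real.exp (-z)) ^ 2) •
          ((fun t : ℝ => t ^ (α * ρ - 1) * (1 - t) ^ (-α)) ∘
            (fun z => (1 - a * Real.exp (-z)) / (1 - Real.exp (-z)))) z))
      (Set.uIcc b p) := by
    intro z hz
    rw [Set.uIcc_of_le hbp] at hz
    have key := rpow_key (α * ρ) α (1 - Real.exp (-z)) (Real.exp (-z))
      (1 - a * Real.exp (-z)) (a - 1) (by intro h; nlinarith) (hx z hz)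
      (Real.exp_pos _) (by linarith) (hy z hz) (by ring)
    simp only [Function.comp, smul_eq_mul]
    rw [show α * (1 - ρ) - 1 = α - α * ρ - 1 by ring,
      show (-(1 - α) * z) = (-z) * (1 - α) by ring, Real.exp_mul,
      show b - z = b + -z by ring, Real.exp_add, ← hadef]
    exact key
  have hg1 : IntegrableOn (fun t : ℝ => t ^ (α * ρ - 1) * (1 - t) ^ (-α))
      ((fun z => (1 - a * Real.exp (-z)) / (1 - Real.exp (-z))) '' Set.uIcc b p) := by
    apply hgInt.mono_set
    rw [Set.uIcc_of_le hbp]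
    rintro _ ⟨z, hz, rfl⟩
    exact himg1 z hz
  have hg2 : IntegrableOn (fun x => (Real.exp (-x) * (a - 1) / (1 - Real.exp (-x)) ^ 2) •
      (((fun t : ℝ => t ^ (α * ρ - 1) * (1 - t) ^ (-α)) ∘
        (fun z => (1 - a * Real.exp (-z)) / (1 - Real.exp (-z)))) x))
      (Set.uIcc b p) := by
    rw [Set.uIcc_of_le hbp]
    have hI2 : IntegrableOn (fun z => (a - 1) ^ (1 - α) *
        ((1 - Real.exp (-z)) ^ (α * (1 - ρ) - 1) * Real.exp (-(1 - α) * z) *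
          (1 - Real.exp (b - z)) ^ (α * ρ - 1))) (Set.Icc b p) := hI.const_mul _
    apply hI2.congr_fun _ measurableSet_Icc
    intro z hz
    have hk := keyEq (show z ∈ Set.uIcc b p by rw [Set.uIcc_of_le hbp]; exact hz)
    simp only at hk ⊢
    rw [hk, ← mul_assoc, ← Real.rpow_add (show (0:ℝ) < a - 1 by linarith)]
    norm_num
  have hgc2 : ContinuousOn (fun t : ℝ => t ^ (α * ρ - 1) * (1 - t) ^ (-α))
      ((fun z => (1 - a * Real.exp (-z)) / (1 - Real.exp (-z))) ''
        Set.Ioo (min b p) (max b p)) := by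
    rw [min_eq_left hbp, max_eq_right hbp]
    apply hgcont.mono
    rintro _ ⟨z, hz, rfl⟩
    exact himg2 z hz
  have main := intervalIntegral.integral_comp_smul_deriv'''
    (f := fun z => (1 - a * Real.exp (-z)) / (1 - Real.exp (-z)))
    (f' := fun z => Real.exp (-z) * (a - 1) / (1 - Real.exp (-z)) ^ 2)
    (g := fun t : ℝ => t ^ (α * ρ - 1) * (1 - t) ^ (-α))
    hf hff' hgc2 hg1 hg2
  have hfb : (1 - a * Real.exp (-b)) / (1 - Real.exp (-b)) = 0 := by
    rw [haE]
    simp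
  have hfp : (1 - a * Real.exp (-p)) / (1 - Real.exp (-p)) = T := by
    rw [hTdef, hw']
  simp only at main
  rw [hfb, hfp] at main
  calc ∫ z in b..p, (1 - Real.exp (-z)) ^ (α * (1 - ρ) - 1) * Real.exp (-(1 - α) * z) *
        (1 - Real.exp (b - z)) ^ (α * ρ - 1)
      = ∫ z in b..p, (a - 1) ^ (α - 1) *
        ((Real.exp (-z) * (a - 1) / (1 - Real.exp (-z)) ^ 2) •
          ((fun t : ℝ => t ^ (α * ρ - 1) * (1 - t) ^ (-α)) ∘
            (fun z => (1 - a * Real.exp (-z)) / (1 - Real.exp (-z)))) z) :=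
        intervalIntegral.integral_congr keyEq
    _ = (a - 1) ^ (α - 1) * ∫ z in b..p,
        (Real.exp (-z) * (a - 1) / (1 - Real.exp (-z)) ^ 2) •
          ((fun t : ℝ => t ^ (α * ρ - 1) * (1 - t) ^ (-α)) ∘
            (fun z => (1 - a * Real.exp (-z)) / (1 - Real.exp (-z)))) z :=
        intervalIntegral.integral_const_mul _ _
    _ = (a - 1) ^ (α - 1) * ∫ t in (0:ℝ)..T, t ^ (α * ρ - 1) * (1 - t) ^ (-α) := by
        rw [main]
end

section
/- Let α ∈ (1,2), x > 1 and y ∈ (−1,1). For ρ ∈ (1−1/α, 1/α) with ρ̂ = 1−ρ, define g_ρ(y) = (sin(παρ̂)/π)·(x−1)^{αρ̂}(x+1)^{αρ−1}(1+y)^{1−αρ}(1−y)^{−αρ̂}(x−y)^{−1} + (1−αρ)·(sin(παρ̂)/π)·2^{α−1}(1+y)^{−αρ}(1−y)^{−αρ̂}·∫_0^{(x−1)/(x+1)} t^{αρ̂−1}(1−t)^{1−α} dt. Then, as ρ → 1/α, g_ρ(y) converges to (sin(π(α−1))/π)·(x−1)^{α−1}(1−y)^{1−α}(x−y)^{−1}.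 -/
open MeasureTheory Filter

theorem hitting_density_limit_spectrally_negative
    (α : ℝ) (hα : α ∈ Set.Ioo (1:ℝ) 2) (x : ℝ) (hx : 1 < x)
    (y : ℝ) (hy : y ∈ Set.Ioo (-1:ℝ) 1) :
    Tendsto (fun ρ : ℝ =>
        Real.sin (Real.pi * α * (1 - ρ)) / Real.pi * (x - 1) ^ (α * (1 - ρ)) *
          (x + 1) ^ (α * ρ - 1) * (1 + y) ^ (1 - α * ρ) *
          (1 - y) ^ (-(α * (1 - ρ))) * (x - y)⁻¹ +
        (1 - α * ρ) * (Real.sin (Real.pi * α * (1 - ρ)) / Real.pi) * (2:ℝ) ^ (α - 1) *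
          (1 + y) ^ (-(α * ρ)) * (1 - y) ^ (-(α * (1 - ρ))) *
          ∫ t in (0:ℝ)..((x - 1) / (x + 1)), t ^ (α * (1 - ρ) - 1) * (1 - t) ^ (1 - α))
      (nhdsWithin (1/α) (Set.Ioo (1 - 1/α) (1/α)))
      (nhds (Real.sin (Real.pi * (α - 1)) / Real.pi * (x - 1) ^ (α - 1) *
        (1 - y) ^ (1 - α) * (x - y)⁻¹)) := by
  obtain ⟨hα1, hα2⟩ := hα
  obtain ⟨hy1, hy2⟩ := hy
  have hα0 : (0:ℝ) < α := by linarith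
  have hx1 : (0:ℝ) < x - 1 := by linarith
  have hx2 : (0:ℝ) < x + 1 := by linarith
  have hy1' : (0:ℝ) < 1 + y := by linarith
  have hy2' : (0:ℝ) < 1 - y := by linarith
  set l : Filter ℝ := nhdsWithin (1/α) (Set.Ioo (1 - 1/α) (1/α)) with hl
  set c : ℝ := (x - 1) / (x + 1) with hc
  have hc0 : 0 < c := div_pos hx1 hx2
  have hc1 : c < 1 := by
    rw [hc, div_lt_one hx2]; linarith
  have hαinv : α * (1/α) = 1 := by field_simp
  have hαinv' : α * (1 - 1/α) = α - 1 := by rw [mul_sub, mul_one, hαinv]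
  -- continuity of various pieces
  have cexp : ContinuousAt (fun ρ : ℝ => α * (1 - ρ)) (1/α) := by fun_prop
  have cexp2 : ContinuousAt (fun ρ : ℝ => α * ρ - 1) (1/α) := by fun_prop
  have cexp3 : ContinuousAt (fun ρ : ℝ => 1 - α * ρ) (1/α) := by fun_prop
  have cexp4 : ContinuousAt (fun ρ : ℝ => -(α * ρ)) (1/α) := by fun_prop
  have cexp5 : ContinuousAt (fun ρ : ℝ => -(α * (1 - ρ))) (1/α) := by fun_prop
  have csin : ContinuousAt (fun ρ : ℝ => Real.sin (Real.pi * α * (1 - ρ)) / Real.pi) (1/α) := by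
    fun_prop
  -- first term
  have h1 : Tendsto (fun ρ : ℝ =>
      Real.sin (Real.pi * α * (1 - ρ)) / Real.pi * (x - 1) ^ (α * (1 - ρ)) *
        (x + 1) ^ (α * ρ - 1) * (1 + y) ^ (1 - α * ρ) *
        (1 - y) ^ (-(α * (1 - ρ))) * (x - y)⁻¹) l
      (nhds (Real.sin (Real.pi * (α - 1)) / Real.pi * (x - 1) ^ (α - 1) *
        (1 - y) ^ (1 - α) * (x - y)⁻¹)) := by
    have hcont : ContinuousAt (fun ρ : ℝ =>
        Real.sin (Real.pi * α * (1 - ρ)) / Real.pi * (x - 1) ^ (α * (1 - ρ)) *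
          (x + 1) ^ (α * ρ - 1) * (1 + y) ^ (1 - α * ρ) *
          (1 - y) ^ (-(α * (1 - ρ))) * (x - y)⁻¹) (1/α) := by
      exact (((((csin.mul (continuousAt_const.rpow cexp (Or.inl hx1.ne'))).mul
        (continuousAt_const.rpow cexp2 (Or.inl hx2.ne'))).mul
        (continuousAt_const.rpow cexp3 (Or.inl hy1'.ne'))).mul
        (continuousAt_const.rpow cexp5 (Or.inl hy2'.ne'))).mul continuousAt_const)
    have hval : (Real.sin (Real.pi * α * (1 - 1/α)) / Real.pi * (x - 1) ^ (α * (1 - 1/α)) *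
          (x + 1) ^ (α * (1/α) - 1) * (1 + y) ^ (1 - α * (1/α)) *
          (1 - y) ^ (-(α * (1 - 1/α))) * (x - y)⁻¹)
        = Real.sin (Real.pi * (α - 1)) / Real.pi * (x - 1) ^ (α - 1) *
          (1 - y) ^ (1 - α) * (x - y)⁻¹ := by
      rw [show α * (1/α) - 1 = 0 by rw [hαinv]; ring, show 1 - α * (1/α) = 0 by rw [hαinv]; ring,
        Real.rpow_zero, Real.rpow_zero, hαinv', show -(α - 1) = 1 - α by ring,
        show Real.pi * α * (1 - 1/α) = Real.pi * (α - 1) by rw [mul_assoc, hαinv']]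
      ring
    have := hcont.tendsto.mono_left (nhdsWithin_le_nhds (s := Set.Ioo (1 - 1/α) (1/α)))
    rwa [hval] at this
  -- second term tends to 0
  have hg0 : Tendsto (fun ρ : ℝ =>
      (1 - α * ρ) * (Real.sin (Real.pi * α * (1 - ρ)) / Real.pi) * (2:ℝ) ^ (α - 1) *
        (1 + y) ^ (-(α * ρ)) * (1 - y) ^ (-(α * (1 - ρ)))) l (nhds 0) := by
    have hcont : ContinuousAt (fun ρ : ℝ =>
        (1 - α * ρ) * (Real.sin (Real.pi * α * (1 - ρ)) / Real.pi) * (2:ℝ) ^ (α - 1) *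
          (1 + y) ^ (-(α * ρ)) * (1 - y) ^ (-(α * (1 - ρ)))) (1/α) :=
      ((((cexp3.mul csin).mul continuousAt_const).mul
        (continuousAt_const.rpow cexp4 (Or.inl hy1'.ne'))).mul
        (continuousAt_const.rpow cexp5 (Or.inl hy2'.ne')))
    have hval : ((1 - α * (1/α)) * (Real.sin (Real.pi * α * (1 - 1/α)) / Real.pi) *
        (2:ℝ) ^ (α - 1) * (1 + y) ^ (-(α * (1/α))) * (1 - y) ^ (-(α * (1 - 1/α)))) = 0 := by
      rw [hαinv]; ring
    have := hcont.tendsto.mono_left (nhdsWithin_le_nhds (s := Set.Ioo (1 - 1/α) (1/α)))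
    rwa [hval] at this
  -- bound on the integral
  set M : ℝ := ∫ t in (0:ℝ)..c, t ^ (α - 2) * (1 - c) ^ (1 - α) with hM
  have hBint : IntervalIntegrable (fun t : ℝ => t ^ (α - 2) * (1 - c) ^ (1 - α))
      volume 0 c :=
    (intervalIntegral.intervalIntegrable_rpow' (by linarith)).mul_const _
  have hbdd : ∀ᶠ ρ in l, ‖∫ t in (0:ℝ)..c, t ^ (α * (1 - ρ) - 1) * (1 - t) ^ (1 - α)‖ ≤ M := by
    filter_upwards [self_mem_nhdsWithin] with ρ hρ
    obtain ⟨hρ1, hρ2⟩ := hρ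
    have he1 : α * (1 - ρ) - 1 > -1 := by
      have hρlt1 : ρ < 1 := hρ2.trans (by rw [div_lt_one hα0]; exact hα1)
      nlinarith [mul_pos hα0 (by linarith : (0:ℝ) < 1 - ρ)]
    have he2 : α * (1 - ρ) - 1 < 0 := by
      have : 1 - 1/α < ρ := hρ1
      have h' : α * (1 - ρ) < α * (1/α) := by
        apply mul_lt_mul_of_pos_left _ hα0
        linarith
      rw [hαinv] at h'; linarith
    have he3 : α - 2 ≤ α * (1 - ρ) - 1 := by
      have h' : α * ρ < α * (1/α) := mul_lt_mul_of_pos_left hρ2 hα0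
      rw [hαinv] at h'; nlinarith
    have hcontg : ContinuousOn (fun t : ℝ => (1 - t) ^ (1 - α)) (Set.uIcc (0:ℝ) c) := by
      apply ContinuousOn.rpow_const (by fun_prop)
      intro t ht
      rw [Set.uIcc_of_le hc0.le] at ht
      left
      exact ne_of_gt (by linarith [ht.2])
    have hfint : IntervalIntegrable (fun t : ℝ => t ^ (α * (1 - ρ) - 1) * (1 - t) ^ (1 - α))
        volume 0 c :=
      (intervalIntegral.intervalIntegrable_rpow' he1).mul_continuousOn hcontg
    have hnonneg : 0 ≤ ∫ t in (0:ℝ)..c, t ^ (α * (1 - ρ) - 1) * (1 - t) ^ (1 - α) := by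
      apply intervalIntegral.integral_nonneg hc0.le
      intro t ht
      exact mul_nonneg (Real.rpow_nonneg ht.1 _) (Real.rpow_nonneg (by linarith [ht.2]) _)
    have hle : (∫ t in (0:ℝ)..c, t ^ (α * (1 - ρ) - 1) * (1 - t) ^ (1 - α)) ≤ M := by
      apply intervalIntegral.integral_mono_on hc0.le hfint hBint
      intro t ht
      obtain ⟨ht0, htc⟩ := ht
      rcases eq_or_lt_of_le ht0 with h0 | h0
      · rw [← h0, Real.zero_rpow (by linarith), Real.zero_rpow (by linarith : α - 2 ≠ 0)]
        simp
      · have ht1 : t ≤ 1 := le_of_lt (lt_of_le_of_lt htc hc1)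
        have h1t : 0 < 1 - c := by linarith
        apply mul_le_mul
        · exact Real.rpow_le_rpow_of_exponent_ge h0 ht1 he3
        · exact Real.rpow_le_rpow_of_nonpos h1t (by linarith) (by linarith)
        · exact Real.rpow_nonneg (by linarith) _
        · exact Real.rpow_nonneg (le_of_lt h0) _
    calc ‖∫ t in (0:ℝ)..c, t ^ (α * (1 - ρ) - 1) * (1 - t) ^ (1 - α)‖
        = ∫ t in (0:ℝ)..c, t ^ (α * (1 - ρ) - 1) * (1 - t) ^ (1 - α) := by
          rw [Real.norm_eq_abs, abs_of_nonneg hnonneg]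
      _ ≤ M := hle
  have h2 : Tendsto (fun ρ : ℝ =>
      (1 - α * ρ) * (Real.sin (Real.pi * α * (1 - ρ)) / Real.pi) * (2:ℝ) ^ (α - 1) *
        (1 + y) ^ (-(α * ρ)) * (1 - y) ^ (-(α * (1 - ρ))) *
        ∫ t in (0:ℝ)..c, t ^ (α * (1 - ρ) - 1) * (1 - t) ^ (1 - α)) l (nhds 0) :=
    hg0.zero_mul_isBoundedUnder_le ⟨M, eventually_map.2 hbdd⟩
  have := h1.add h2
  simpa using this
end

section
/- For every a ∈ (0,1) and every λ ≥ 0, (−1/Γ(−a))·∫_0^∞ (1−e^{−λx}) e^{x} (e^{x}−1)^{−(a+1)} dx = Γ(a+λ)/Γ(λ), where for λ = 0 the right-hand side is interpreted as 0 (convention 1/Γ(0) = 0). -/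
open MeasureTheory Set Real Filter

open MeasureTheory

lemma exp_sub_one_pos {x : ℝ} (hx : 0 < x) : 0 < Real.exp x - 1 := by
  have : (1:ℝ) < Real.exp x := by
    rw [← Real.exp_zero]; exact Real.exp_lt_exp.mpr hx
  linarith

lemma exp_sub_one_rpow_le {x c : ℝ} (hx : 0 < x) (hc : c ≤ 0) :
    (Real.exp x - 1) ^ c ≤ x ^ c := by
  have h1 : x ≤ Real.exp x - 1 := by linarith [Real.add_one_le_exp x]
  exact Real.rpow_le_rpow_of_nonpos hx h1 hc

lemma exp_sub_one_rpow_le' {x c : ℝ} (hx : 1 ≤ x) (hc : c ≤ 0) :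
    (Real.exp x - 1) ^ c ≤ (Real.exp x / 2) ^ c := by
  have h2 : (2:ℝ) < Real.exp 1 := lt_trans (by norm_num) Real.exp_one_gt_d9
  have hx2 : (2:ℝ) < Real.exp x := lt_of_lt_of_le h2 (Real.exp_le_exp.mpr hx)
  have h1 : Real.exp x / 2 ≤ Real.exp x - 1 := by linarith
  exact Real.rpow_le_rpow_of_nonpos (by linarith) h1 hc

lemma contOn_rpow (c : ℝ) : ContinuousOn (fun x => (Real.exp x - 1) ^ c) (Set.Ioi (0:ℝ)) := by
  intro x hx
  have h : ContinuousAt (fun y : ℝ => y ^ c) (Real.exp x - 1) :=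
    Real.continuousAt_rpow_const _ _ (Or.inl (exp_sub_one_pos hx.out).ne')
  have h2 : ContinuousAt (fun y : ℝ => Real.exp y - 1) x :=
    (Real.continuous_exp.continuousAt).sub continuousAt_const
  have h3 := ContinuousAt.comp (f := fun y : ℝ => Real.exp y - 1) (x := x) h h2
  exact h3.continuousWithinAt

lemma rpow_integrableOn_Ioc {c : ℝ} (hc : -1 < c) :
    IntegrableOn (fun x : ℝ => x ^ c) (Set.Ioc (0:ℝ) 1) := by
  have := intervalIntegral.intervalIntegrable_rpow' (a := 0) (b := 1) hc
  rwa [intervalIntegrable_iff_integrableOn_Ioc_of_le zero_le_one] at this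

lemma exp_half_rpow {x c : ℝ} : (Real.exp x / 2) ^ c = Real.exp (c * x) * ((2:ℝ) ^ c)⁻¹ := by
  rw [Real.div_rpow (Real.exp_pos x).le (by norm_num), ← Real.exp_mul, mul_comm x c, div_eq_mul_inv]

lemma one_sub_exp_le {lam x : ℝ} (hlam : 0 ≤ lam) (hx : 0 ≤ x) :
    1 - Real.exp (-lam*x) ≤ lam * x := by
  have := Real.add_one_le_exp (-lam*x)
  nlinarith

lemma one_sub_exp_nonneg {lam x : ℝ} (hlam : 0 ≤ lam) (hx : 0 ≤ x) :
    0 ≤ 1 - Real.exp (-lam*x) := by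
  have : Real.exp (-lam*x) ≤ 1 := Real.exp_le_one_iff.mpr (by nlinarith)
  linarith

lemma integrable_J {a lam : ℝ} (ha : a ∈ Set.Ioo (0:ℝ) 1) (hlam : 0 ≤ lam) :
    IntegrableOn (fun x => Real.exp (-lam*x) * (Real.exp x - 1) ^ (-a)) (Set.Ioi (0:ℝ)) := by
  have hmeas : AEStronglyMeasurable (fun x => Real.exp (-lam*x) * (Real.exp x - 1) ^ (-a))
      (volume.restrict (Set.Ioi (0:ℝ))) := by
    refine ContinuousOn.aestronglyMeasurable ?_ measurableSet_Ioi
    exact (Real.continuous_exp.comp (by continuity)).continuousOn.mul (contOn_rpow (-a))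
  rw [← Ioc_union_Ioi_eq_Ioi (zero_le_one), integrableOn_union]
  constructor
  · refine Integrable.mono' (rpow_integrableOn_Ioc (by linarith [ha.2] : (-1:ℝ) < -a))
      (hmeas.mono_measure (Measure.restrict_mono (Set.Ioc_subset_Ioi_self) le_rfl)) ?_
    rw [ae_restrict_iff' measurableSet_Ioc]
    refine Filter.Eventually.of_forall (fun x hx => ?_)
    have hx0 : 0 < x := hx.1
    have h1 : Real.exp (-lam*x) ≤ 1 := Real.exp_le_one_iff.mpr (by nlinarith)
    have h2 : (0:ℝ) < (Real.exp x - 1) ^ (-a) := Real.rpow_pos_of_pos (exp_sub_one_pos hx0) _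
    rw [Real.norm_eq_abs, abs_of_nonneg (by positivity)]
    calc Real.exp (-lam*x) * (Real.exp x - 1) ^ (-a) ≤ 1 * (Real.exp x - 1) ^ (-a) := by
          exact mul_le_mul_of_nonneg_right h1 h2.le
      _ = (Real.exp x - 1) ^ (-a) := one_mul _
      _ ≤ x ^ (-a) := exp_sub_one_rpow_le hx0 (by linarith [ha.1])
  · refine Integrable.mono' ((exp_neg_integrableOn_Ioi 1 ha.1).const_mul (((2:ℝ)^(-a))⁻¹))
      (hmeas.mono_measure (Measure.restrict_mono (Set.Ioi_subset_Ioi zero_le_one) le_rfl)) ?_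
    rw [ae_restrict_iff' measurableSet_Ioi]
    refine Filter.Eventually.of_forall (fun x hx => ?_)
    have hx1 : (1:ℝ) ≤ x := le_of_lt hx.out
    have hx0 : (0:ℝ) < x := lt_of_lt_of_le one_pos hx1
    have h1 : Real.exp (-lam*x) ≤ 1 := Real.exp_le_one_iff.mpr (by nlinarith)
    have h2 : (0:ℝ) < (Real.exp x - 1) ^ (-a) := Real.rpow_pos_of_pos (exp_sub_one_pos hx0) _
    rw [Real.norm_eq_abs, abs_of_nonneg (by positivity)]
    calc Real.exp (-lam*x) * (Real.exp x - 1) ^ (-a) ≤ 1 * (Real.exp x - 1) ^ (-a) :=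
          mul_le_mul_of_nonneg_right h1 h2.le
      _ = (Real.exp x - 1) ^ (-a) := one_mul _
      _ ≤ (Real.exp x / 2) ^ (-a) := exp_sub_one_rpow_le' hx1 (by linarith [ha.1])
      _ = ((2:ℝ)^(-a))⁻¹ * Real.exp (-a * x) := by rw [exp_half_rpow]; ring

lemma integrable_main {a lam : ℝ} (ha : a ∈ Set.Ioo (0:ℝ) 1) (hlam : 0 ≤ lam) :
    IntegrableOn (fun x => (1 - Real.exp (-lam*x)) * Real.exp x * (Real.exp x - 1) ^ (-(a+1)))
      (Set.Ioi (0:ℝ)) := by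
  have hmeas : AEStronglyMeasurable
      (fun x => (1 - Real.exp (-lam*x)) * Real.exp x * (Real.exp x - 1) ^ (-(a+1)))
      (volume.restrict (Set.Ioi (0:ℝ))) := by
    refine ContinuousOn.aestronglyMeasurable ?_ measurableSet_Ioi
    exact (((continuous_const.sub (Real.continuous_exp.comp (by continuity))).mul
      Real.continuous_exp).continuousOn).mul (contOn_rpow (-(a+1)))
  rw [← Ioc_union_Ioi_eq_Ioi (zero_le_one), integrableOn_union]
  constructor
  · refine Integrable.mono'
      ((rpow_integrableOn_Ioc (by linarith [ha.2] : (-1:ℝ) < -a)).const_mul (lam * Real.exp 1))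
      (hmeas.mono_measure (Measure.restrict_mono (Set.Ioc_subset_Ioi_self) le_rfl)) ?_
    rw [ae_restrict_iff' measurableSet_Ioc]
    refine Filter.Eventually.of_forall (fun x hx => ?_)
    have hx0 : 0 < x := hx.1
    have hA0 : 0 ≤ 1 - Real.exp (-lam*x) := one_sub_exp_nonneg hlam hx0.le
    have hA : 1 - Real.exp (-lam*x) ≤ lam * x := one_sub_exp_le hlam hx0.le
    have hB : Real.exp x ≤ Real.exp 1 := Real.exp_le_exp.mpr hx.2
    have hC0 : (0:ℝ) < (Real.exp x - 1) ^ (-(a+1)) :=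
      Real.rpow_pos_of_pos (exp_sub_one_pos hx0) _
    have hC : (Real.exp x - 1) ^ (-(a+1)) ≤ x ^ (-(a+1)) :=
      exp_sub_one_rpow_le hx0 (by linarith [ha.1])
    rw [Real.norm_eq_abs, abs_of_nonneg (by positivity)]
    calc (1 - Real.exp (-lam*x)) * Real.exp x * (Real.exp x - 1) ^ (-(a+1))
        ≤ (lam * x) * Real.exp 1 * (x ^ (-(a+1))) := by
          refine mul_le_mul (mul_le_mul hA hB (Real.exp_pos _).le (by positivity)) hC hC0.le
            (by positivity)
      _ = (lam * Real.exp 1) * (x * x ^ (-(a+1))) := by ring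
      _ = (lam * Real.exp 1) * x ^ (-a) := by
          rw [show x * x ^ (-(a+1)) = x ^ (-a) from ?_]
          rw [show (-a) = 1 + (-(a+1)) by ring, Real.rpow_add hx0, Real.rpow_one]
  · refine Integrable.mono'
      ((exp_neg_integrableOn_Ioi 1 ha.1).const_mul (((2:ℝ)^(-(a+1)))⁻¹))
      (hmeas.mono_measure (Measure.restrict_mono (Set.Ioi_subset_Ioi zero_le_one) le_rfl)) ?_
    rw [ae_restrict_iff' measurableSet_Ioi]
    refine Filter.Eventually.of_forall (fun x hx => ?_)
    have hx1 : (1:ℝ) ≤ x := le_of_lt hx.out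
    have hx0 : (0:ℝ) < x := lt_of_lt_of_le one_pos hx1
    have hA0 : 0 ≤ 1 - Real.exp (-lam*x) := one_sub_exp_nonneg hlam hx0.le
    have hA : 1 - Real.exp (-lam*x) ≤ 1 := by linarith [Real.exp_pos (-lam*x)]
    have hC0 : (0:ℝ) < (Real.exp x - 1) ^ (-(a+1)) :=
      Real.rpow_pos_of_pos (exp_sub_one_pos hx0) _
    have hC : (Real.exp x - 1) ^ (-(a+1)) ≤ (Real.exp x / 2) ^ (-(a+1)) :=
      exp_sub_one_rpow_le' hx1 (by linarith [ha.1])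
    rw [Real.norm_eq_abs, abs_of_nonneg (by positivity)]
    calc (1 - Real.exp (-lam*x)) * Real.exp x * (Real.exp x - 1) ^ (-(a+1))
        ≤ 1 * Real.exp x * ((Real.exp x / 2) ^ (-(a+1))) := by
          refine mul_le_mul (mul_le_mul hA le_rfl (Real.exp_pos _).le zero_le_one) hC hC0.le
            (by positivity)
      _ = ((2:ℝ)^(-(a+1)))⁻¹ * Real.exp (-a * x) := by
          rw [exp_half_rpow, show (1:ℝ) * Real.exp x * (Real.exp (-(a+1)*x) * ((2:ℝ)^(-(a+1)))⁻¹)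
            = (Real.exp x * Real.exp (-(a+1)*x)) * ((2:ℝ)^(-(a+1)))⁻¹ by ring, ← Real.exp_add,
            show x + -(a+1)*x = -a*x by ring]
          ring


lemma real_beta {u v : ℝ} (hu : 0 < u) (hv : 0 < v) :
    ∫ t in Set.Ioo (0:ℝ) 1, t ^ (u-1) * (1 - t) ^ (v-1) =
      Real.Gamma u * Real.Gamma v / Real.Gamma (u+v) := by
  have key := Complex.Gamma_mul_Gamma_eq_betaIntegral (s := (u:ℂ)) (t := (v:ℂ))
    (by simpa using hu) (by simpa using hv)
  have hB : Complex.betaIntegral (u:ℂ) (v:ℂ)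
      = ((∫ t in Set.Ioo (0:ℝ) 1, t ^ (u-1) * (1 - t) ^ (v-1) : ℝ) : ℂ) := by
    rw [Complex.betaIntegral, intervalIntegral.integral_of_le zero_le_one,
      MeasureTheory.integral_Ioc_eq_integral_Ioo]
    rw [show ((∫ t in Set.Ioo (0:ℝ) 1, t ^ (u-1) * (1 - t) ^ (v-1) : ℝ) : ℂ) = ∫ t in Set.Ioo (0:ℝ) 1, ((t ^ (u-1) * (1 - t) ^ (v-1) : ℝ) : ℂ) from integral_ofReal.symm]
    refine setIntegral_congr_fun measurableSet_Ioo (fun x hx => ?_)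
    rw [show ((u:ℂ)-1) = ((u-1:ℝ):ℂ) by push_cast; ring,
      show ((v:ℂ)-1) = ((v-1:ℝ):ℂ) by push_cast; ring,
      show (1 - (x:ℂ)) = ((1-x:ℝ):ℂ) by push_cast; ring,
      ← Complex.ofReal_cpow hx.1.le, ← Complex.ofReal_cpow (by linarith [hx.2] : (0:ℝ) ≤ 1 - x),
      ← Complex.ofReal_mul]
  have hGuv : Real.Gamma (u+v) ≠ 0 := (Real.Gamma_pos_of_pos (by linarith)).ne'
  rw [hB] at key
  have : ((Real.Gamma u * Real.Gamma v : ℝ) : ℂ)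
      = ((Real.Gamma (u+v) * ∫ t in Set.Ioo (0:ℝ) 1, t ^ (u-1) * (1 - t) ^ (v-1) : ℝ) : ℂ) := by
    push_cast
    rw [← Complex.Gamma_ofReal, ← Complex.Gamma_ofReal, ← Complex.Gamma_ofReal] at *
    simpa using key
  have h2 := Complex.ofReal_injective this
  field_simp
  linarith [h2]

lemma neg_log_image : (fun t : ℝ => -Real.log (1 - t)) '' Set.Ioo 0 1 = Set.Ioi (0:ℝ) := by
  ext x
  constructor
  · rintro ⟨t, ht, rfl⟩
    have h1 : (0:ℝ) < 1 - t := by linarith [ht.2]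
    have h2 : 1 - t < 1 := by linarith [ht.1]
    simpa using Real.log_neg h1 h2
  · intro hx
    refine ⟨1 - Real.exp (-x), ⟨?_, ?_⟩, ?_⟩
    · have : Real.exp (-x) < 1 := Real.exp_lt_one_iff.mpr (by simpa using hx.out)
      linarith
    · have : 0 < Real.exp (-x) := Real.exp_pos _
      linarith
    · simp [Real.log_exp]

lemma neg_log_hasDeriv {t : ℝ} (ht : t ∈ Set.Ioo (0:ℝ) 1) :
    HasDerivAt (fun t : ℝ => -Real.log (1 - t)) ((1-t)⁻¹) t := by
  have h1 : HasDerivAt (fun t : ℝ => 1 - t) (-1) t := (hasDerivAt_id t).const_sub 1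
  have hs : (1:ℝ) - t ≠ 0 := ne_of_gt (by linarith [ht.2])
  have h2 := (Real.hasDerivAt_log hs).comp t h1
  have h3 : HasDerivAt (fun t : ℝ => -Real.log (1 - t)) (-((1-t)⁻¹ * -1)) t := h2.neg
  convert h3 using 1; ring

lemma neg_log_injOn : Set.InjOn (fun t : ℝ => -Real.log (1 - t)) (Set.Ioo 0 1) := by
  intro x hx y hy h
  have hx1 : (0:ℝ) < 1 - x := by linarith [hx.2]
  have hy1 : (0:ℝ) < 1 - y := by linarith [hy.2]
  have : Real.log (1-x) = Real.log (1-y) := by dsimp at h; linarith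
  have h2 : (1:ℝ) - x = 1 - y := by
    rw [← Real.exp_log hx1, ← Real.exp_log hy1, this]
  linarith

lemma subst_to_beta (g : ℝ → ℝ) :
    ∫ x in Set.Ioi (0:ℝ), g x
      = ∫ t in Set.Ioo (0:ℝ) 1, |(1-t)⁻¹| * g (-Real.log (1 - t)) := by
  rw [← neg_log_image,
    integral_image_eq_integral_abs_deriv_smul measurableSet_Ioo
      (fun t ht => (neg_log_hasDeriv ht).hasDerivWithinAt) neg_log_injOn]
  simp [smul_eq_mul]

lemma Jval {a lam : ℝ} (ha : a ∈ Set.Ioo (0:ℝ) 1) (hlam : 0 ≤ lam) :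
    ∫ x in Set.Ioi (0:ℝ), Real.exp (-lam*x) * (Real.exp x - 1) ^ (-a)
      = Real.Gamma (1-a) * Real.Gamma (lam+a) / Real.Gamma (1+lam) := by
  rw [subst_to_beta]
  have h1a : (0:ℝ) < 1 - a := by linarith [ha.2]
  have hla : (0:ℝ) < lam + a := by linarith [ha.1]
  rw [show Real.Gamma (1+lam) = Real.Gamma ((1-a)+(lam+a)) by ring_nf,
    ← real_beta h1a hla]
  refine setIntegral_congr_fun measurableSet_Ioo (fun t ht => ?_)
  have ht0 : 0 < t := ht.1
  have hs0 : 0 < 1 - t := by linarith [ht.2]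
  have hexp : Real.exp (-Real.log (1 - t)) = (1-t)⁻¹ := by
    rw [Real.exp_neg, Real.exp_log hs0]
  have hlamterm : Real.exp (-lam * -Real.log (1 - t)) = (1-t) ^ lam := by
    rw [Real.rpow_def_of_pos hs0]; ring_nf
  have hfrac : Real.exp (-Real.log (1 - t)) - 1 = t / (1-t) := by
    rw [hexp]; field_simp; ring
  rw [hlamterm, hfrac, Real.div_rpow ht0.le hs0.le, abs_of_pos (inv_pos.mpr hs0),
    Real.rpow_neg hs0.le a, div_inv_eq_mul, ← Real.rpow_neg_one (1-t)]
  rw [show (1:ℝ)-a-1 = -a by ring]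
  rw [show (1-t)^(lam+a-1) = (1-t)^(-1:ℝ) * ((1-t)^lam * (1-t)^a) by
    rw [← Real.rpow_add hs0, ← Real.rpow_add hs0]; ring_nf]
  ring

lemma ibp {a lam : ℝ} (ha : a ∈ Set.Ioo (0:ℝ) 1) (hlam : 0 < lam) :
    ∫ x in Set.Ioi (0:ℝ), (1 - Real.exp (-lam*x)) * Real.exp x * (Real.exp x - 1) ^ (-(a+1))
      = (lam/a) * ∫ x in Set.Ioi (0:ℝ), Real.exp (-lam*x) * (Real.exp x - 1) ^ (-a) := by
  have ha0 : 0 < a := ha.1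
  set u : ℝ → ℝ := fun x => 1 - Real.exp (-lam*x) with hu_def
  set u' : ℝ → ℝ := fun x => lam * Real.exp (-lam*x) with hu'_def
  set v : ℝ → ℝ := fun x => -(a⁻¹) * (Real.exp x - 1) ^ (-a) with hv_def
  set v' : ℝ → ℝ := fun x => Real.exp x * (Real.exp x - 1) ^ (-(a+1)) with hv'_def
  have hu : ∀ x ∈ Set.Ioi (0:ℝ), HasDerivAt u (u' x) x := by
    intro x _
    have h1 : HasDerivAt (fun x : ℝ => -lam * x) (-lam) x := by
      simpa using (hasDerivAt_id x).const_mul (-lam)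
    have h2 := (Real.hasDerivAt_exp (-lam*x)).comp x h1
    have h3 := h2.const_sub 1
    refine HasDerivAt.congr_deriv h3 ?_
    simp [hu'_def]; ring
  have hv : ∀ x ∈ Set.Ioi (0:ℝ), HasDerivAt v (v' x) x := by
    intro x hx
    have hpos := exp_sub_one_pos hx.out
    have h1 : HasDerivAt (fun x : ℝ => Real.exp x - 1) (Real.exp x) x :=
      (Real.hasDerivAt_exp x).sub_const 1
    have h2 : HasDerivAt (fun y : ℝ => y ^ (-a)) (-a * (Real.exp x - 1) ^ (-a-1)) (Real.exp x - 1) :=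
      Real.hasDerivAt_rpow_const (Or.inl hpos.ne')
    have h3 := (h2.comp x h1).const_mul (-(a⁻¹))
    refine HasDerivAt.congr_deriv h3 ?_
    simp only [hv'_def]
    rw [show -(a+1) = -a-1 by ring]
    field_simp
  have huv' : IntegrableOn (u * v') (Set.Ioi (0:ℝ)) := by
    have : u * v' = fun x => (1 - Real.exp (-lam*x)) * Real.exp x * (Real.exp x - 1) ^ (-(a+1)) := by
      funext x; simp [hu_def, hv'_def]; ring
    rw [this]; exact integrable_main ha hlam.le
  have hu'v : IntegrableOn (u' * v) (Set.Ioi (0:ℝ)) := by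
    have : u' * v = fun x => (-(lam/a)) * (Real.exp (-lam*x) * (Real.exp x - 1) ^ (-a)) := by
      funext x; simp [hu'_def, hv_def]; ring
    rw [this]
    exact (integrable_J ha hlam.le).const_mul _
  have h_zero : Tendsto (u * v) (nhdsWithin 0 (Set.Ioi 0)) (nhds 0) := by
    have hlow : Tendsto (fun x : ℝ => -((lam/a) * x ^ (1-a))) (nhdsWithin 0 (Set.Ioi 0)) (nhds 0) := by
      have hc : ContinuousAt (fun x : ℝ => x ^ (1-a)) 0 :=
        Real.continuousAt_rpow_const 0 (1-a) (Or.inr (by linarith [ha.2]))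
      have hmono : Tendsto (fun x : ℝ => x ^ (1-a)) (nhdsWithin 0 (Set.Ioi 0)) (nhds ((0:ℝ) ^ (1-a))) :=
        hc.tendsto.mono_left nhdsWithin_le_nhds
      have := (hmono.const_mul (lam/a)).neg
      simpa [Real.zero_rpow (by linarith [ha.2] : (1:ℝ)-a ≠ 0)] using this
    refine tendsto_of_tendsto_of_tendsto_of_le_of_le' hlow tendsto_const_nhds ?_ ?_
    · filter_upwards [self_mem_nhdsWithin] with x hx
      have hx0 : (0:ℝ) < x := hx
      have hpow : (0:ℝ) < (Real.exp x - 1) ^ (-a) := Real.rpow_pos_of_pos (exp_sub_one_pos hx0) _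
      have h1 : u x * (a⁻¹ * (Real.exp x - 1) ^ (-a)) ≤ (lam * x) * (a⁻¹ * x ^ (-a)) := by
        refine mul_le_mul (one_sub_exp_le hlam.le hx0.le) ?_ (by positivity) (by nlinarith)
        exact mul_le_mul_of_nonneg_left (exp_sub_one_rpow_le hx0 (by linarith)) (by positivity)
      have h2 : (lam * x) * (a⁻¹ * x ^ (-a)) = (lam/a) * x ^ (1-a) := by
        rw [show (1:ℝ)-a = 1 + (-a) by ring, Real.rpow_add hx0, Real.rpow_one]
        field_simp
      have : u x * v x = -(u x * (a⁻¹ * (Real.exp x - 1) ^ (-a))) := by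
        simp only [hu_def, hv_def]; ring
      rw [Pi.mul_apply, this]
      rw [h2] at h1
      linarith
    · filter_upwards [self_mem_nhdsWithin] with x hx
      have hx0 : (0:ℝ) < x := hx
      have hpow : (0:ℝ) < (Real.exp x - 1) ^ (-a) := Real.rpow_pos_of_pos (exp_sub_one_pos hx0) _
      have hun : 0 ≤ u x := one_sub_exp_nonneg hlam.le hx0.le
      have : u x * v x = -(u x * (a⁻¹ * (Real.exp x - 1) ^ (-a))) := by
        simp only [hu_def, hv_def]; ring
      rw [Pi.mul_apply, this]
      have : 0 ≤ u x * (a⁻¹ * (Real.exp x - 1) ^ (-a)) := by positivity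
      linarith
  have h_infty : Tendsto (u * v) atTop (nhds 0) := by
    have h1 : Tendsto (fun x : ℝ => -lam * x) atTop atBot := by
      apply Filter.Tendsto.const_mul_atTop_of_neg (neg_neg_iff_pos.mpr hlam) tendsto_id
    have hu_lim : Tendsto u atTop (nhds 1) := by
      have := (Real.tendsto_exp_atBot.comp h1).const_sub 1
      simpa [hu_def] using this
    have hexp : Tendsto (fun x : ℝ => Real.exp x - 1) atTop atTop :=
      Filter.tendsto_atTop_add_const_right _ (-1) Real.tendsto_exp_atTop
    have hv_lim : Tendsto v atTop (nhds 0) := by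
      have := ((tendsto_rpow_neg_atTop ha0).comp hexp).const_mul (-(a⁻¹))
      simpa [hv_def, Function.comp] using this
    have := hu_lim.mul hv_lim
    simpa [Pi.mul_def] using this
  have key := integral_Ioi_mul_deriv_eq_deriv_mul hu hv huv' hu'v h_zero h_infty
  have e1 : ∀ x, u x * v' x = (1 - Real.exp (-lam*x)) * Real.exp x * (Real.exp x - 1) ^ (-(a+1)) := by
    intro x; simp [hu_def, hv'_def]; ring
  have e2 : ∀ x, u' x * v x = (-(lam/a)) * (Real.exp (-lam*x) * (Real.exp x - 1) ^ (-a)) := by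
    intro x; simp [hu'_def, hv_def]; ring
  rw [show (∫ x in Set.Ioi (0:ℝ), (1 - Real.exp (-lam*x)) * Real.exp x * (Real.exp x - 1) ^ (-(a+1)))
      = ∫ x in Set.Ioi (0:ℝ), u x * v' x from by simp_rw [e1]]
  rw [key]
  simp_rw [e2]
  rw [MeasureTheory.integral_const_mul]
  ring

theorem ascending_ladder_laplace_exponent_small_alpha
    (a : ℝ) (ha : a ∈ Set.Ioo (0:ℝ) 1) (lam : ℝ) (hlam : 0 ≤ lam) :
    -(Real.Gamma (-a))⁻¹ *
      ∫ x in Set.Ioi (0:ℝ),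
        (1 - Real.exp (-lam * x)) * Real.exp x * (Real.exp x - 1) ^ (-(a + 1)) =
    Real.Gamma (a + lam) / Real.Gamma lam := by
  obtain ⟨ha0, ha1⟩ := ha
  rcases eq_or_lt_of_le hlam with h0 | hpos
  · simp [← h0, Real.Gamma_zero]
  · rw [ibp ⟨ha0, ha1⟩ hpos, Jval ⟨ha0, ha1⟩ hlam]
    have hGneg : Real.Gamma (-a) ≠ 0 := by
      refine Real.Gamma_ne_zero (fun m => ?_)
      rcases m with _ | m
      · simp; linarith
      · push_cast
        have : (0:ℝ) ≤ (m:ℝ) := Nat.cast_nonneg m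
        intro h
        linarith
    have hGlam : Real.Gamma lam ≠ 0 := (Real.Gamma_pos_of_pos hpos).ne'
    have h1 : Real.Gamma (1+lam) = lam * Real.Gamma lam := by
      rw [add_comm, Real.Gamma_add_one hpos.ne']
    have h2 : Real.Gamma (1-a) = -a * Real.Gamma (-a) := by
      rw [show (1:ℝ)-a = -a+1 by ring, Real.Gamma_add_one (by linarith : -a ≠ 0)]
    rw [h1, h2, show a+lam = lam+a from add_comm a lam]
    field_simp
end

section
/- Let α ∈ (0,1], ρ ∈ (0,1), ρ̂ = 1−ρ with αρ̂ ∈ (0,1). For every λ ≥ 0, Γ(1−αρ)/Γ(1−α) + (−1/Γ(−αρ̂))·∫_0^∞ (1−e^{−λx}) e^{αx} (e^{x}−1)^{−(αρ̂+1)} dx = Γ(1−αρ+λ)/Γ(1−α+λ), where in the case α = 1 the term Γ(1−αρ)/Γ(1−α) is interpreted as 0 (convention 1/Γ(0) = 0). -/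
open MeasureTheory

namespace DLLE
open Set Filter Real
open scoped Topology

lemma aux_ofReal {p q t : ℝ} (ht : t ∈ Ioo (0:ℝ) 1) :
    ((t:ℂ) ^ ((p:ℂ)-1) * (1-(t:ℂ)) ^ ((q:ℂ)-1)) = ((t ^ (p-1) * (1-t) ^ (q-1) : ℝ) : ℂ) := by
  rw [show ((p:ℂ)-1) = ((p-1:ℝ):ℂ) by push_cast; ring,
      show ((q:ℂ)-1) = ((q-1:ℝ):ℂ) by push_cast; ring,
      show (1-(t:ℂ)) = ((1-t:ℝ):ℂ) by push_cast; ring,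
      ← Complex.ofReal_cpow ht.1.le, ← Complex.ofReal_cpow (by linarith [ht.2] : (0:ℝ) ≤ 1-t)]
  push_cast; ring

lemma betaIntegrable {p q : ℝ} (hp : 0 < p) (hq : 0 < q) :
    IntegrableOn (fun t : ℝ => t ^ (p-1) * (1-t) ^ (q-1)) (Ioo (0:ℝ) 1) := by
  have h := Complex.betaIntegral_convergent (u := (p:ℂ)) (v := (q:ℂ)) (by simpa) (by simpa)
  rw [intervalIntegrable_iff_integrableOn_Ioc_of_le zero_le_one] at h
  have h2 := (h.mono_set Ioo_subset_Ioc_self).re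
  refine h2.congr ?_
  rw [EventuallyEq, ae_restrict_iff' measurableSet_Ioo]
  filter_upwards with t ht
  rw [aux_ofReal ht]; simp

lemma betaIntegral_eq {p q : ℝ} (hp : 0 < p) (hq : 0 < q) :
    ∫ t in Ioo (0:ℝ) 1, t ^ (p-1) * (1-t) ^ (q-1) = Gamma p * Gamma q / Gamma (p+q) := by
  have hG := Complex.Gamma_mul_Gamma_eq_betaIntegral (s := (p:ℂ)) (t := (q:ℂ))
    (by simpa) (by simpa)
  have h2 : Complex.betaIntegral p q
      = ((∫ t in Ioo (0:ℝ) 1, t ^ (p-1) * (1-t) ^ (q-1) : ℝ) : ℂ) := by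
    rw [Complex.betaIntegral, intervalIntegral.integral_of_le zero_le_one,
      integral_Ioc_eq_integral_Ioo,
      setIntegral_congr_fun measurableSet_Ioo (fun t ht => aux_ofReal ht)]
    exact integral_ofReal
  rw [h2, show ((p:ℂ) + q) = ((p+q : ℝ) : ℂ) by push_cast; ring] at hG
  rw [Complex.Gamma_ofReal, Complex.Gamma_ofReal, Complex.Gamma_ofReal, ← Complex.ofReal_mul,
    ← Complex.ofReal_mul, Complex.ofReal_inj] at hG
  have hne : Gamma (p+q) ≠ 0 := (Gamma_pos_of_pos (by linarith)).ne'
  field_simp [hG]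
  rw [hG]; ring


lemma Gamma_add_le {y s : ℝ} (hy : 0 < y) (hs0 : 0 < s) (hs1 : s < 1) :
    Gamma (y + s) ≤ Gamma y * y ^ s := by
  have h := Real.Gamma_mul_add_mul_le_rpow_Gamma_mul_rpow_Gamma (s := y) (t := y+1)
    (a := 1-s) (b := s) hy (by linarith) (by linarith) hs0 (by ring)
  rw [show (1-s)*y + s*(y+1) = y + s by ring] at h
  calc Gamma (y+s) ≤ Gamma y ^ (1-s) * Gamma (y+1) ^ s := h
    _ = Gamma y * y ^ s := by
        rw [Gamma_add_one hy.ne', mul_rpow (le_of_lt hy) (Gamma_pos_of_pos hy).le,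
          ← mul_assoc, mul_comm (Gamma y ^ (1-s)) (y ^ s), mul_assoc,
          ← Real.rpow_add (Gamma_pos_of_pos hy)]
        ring_nf
        rw [Real.rpow_one]

lemma rpow_sub_rpow_abs_le {v u r : ℝ} (hv : 0 < v) (hvu : v ≤ u) (hr : r ≤ 1) :
    |u ^ r - v ^ r| ≤ |r| * v ^ (r-1) * (u - v) := by
  rcases eq_or_lt_of_le hvu with rfl | hlt
  · simp
  · obtain ⟨c, hc, hslope⟩ := exists_hasDerivAt_eq_slope (fun x : ℝ => x ^ r)
      (fun x => r * x ^ (r-1)) hlt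
      (fun x hx => by
        have hx0 : 0 < x := lt_of_lt_of_le hv hx.1
        exact (Real.continuousAt_rpow_const x r (Or.inl hx0.ne')).continuousWithinAt)
      (fun x hx => Real.hasDerivAt_rpow_const (Or.inl (lt_trans hv hx.1).ne'))
    have hc0 : 0 < c := lt_trans hv hc.1
    have : u ^ r - v ^ r = r * c ^ (r-1) * (u - v) := by
      rw [hslope, div_mul_cancel₀ _ (by linarith : u - v ≠ 0)]
    rw [this, abs_mul, abs_of_nonneg (by linarith : (0:ℝ) ≤ u - v), abs_mul,
      abs_of_nonneg (rpow_nonneg hc0.le _)]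
    have hcb : c ^ (r-1) ≤ v ^ (r-1) :=
      rpow_le_rpow_of_nonpos hv hc.1.le (by linarith)
    have : |r| * c ^ (r-1) ≤ |r| * v ^ (r-1) := by
      exact mul_le_mul_of_nonneg_left hcb (abs_nonneg r)
    nlinarith [abs_nonneg r, rpow_nonneg hv.le (r-1)]

-- Gautschi-type bound: Γx/Γ(x+s) ≤ (x+s)^(1-s)/x for 0<s<1, 0<x
lemma ratio_upper {x s : ℝ} (hx : 0 < x) (hs0 : 0 < s) (hs1 : s < 1) :
    Gamma x / Gamma (x+s) ≤ (x+s) ^ (1-s) / x := by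
  have h := Gamma_add_le (y := x+s) (s := 1-s) (by linarith) (by linarith) (by linarith)
  rw [show x+s+(1-s) = x+1 by ring, Gamma_add_one hx.ne'] at h
  have h1 : 0 < Gamma (x+s) := Gamma_pos_of_pos (by linarith)
  rw [div_le_div_iff₀ h1 hx]
  calc Gamma x * x = x * Gamma x := by ring
    _ ≤ Gamma (x+s) * (x+s) ^ (1-s) := h
    _ = (x+s) ^ (1-s) * Gamma (x+s) := by ring

lemma ratio_tendsto {c s : ℝ} (hs0 : 0 < s) (hs1 : s < 1) (hc : 0 < c) :
    Tendsto (fun n : ℕ => Gamma (c+n) / Gamma (c+n+s)) atTop (𝓝 0) := by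
  have hlim : Tendsto (fun n : ℕ => 2 ^ (1-s) * (c+n) ^ (-s)) atTop (𝓝 0) := by
    have h1 : Tendsto (fun n : ℕ => (c+n : ℝ)) atTop atTop :=
      tendsto_atTop_add_const_left _ c (tendsto_natCast_atTop_atTop)
    have := (tendsto_rpow_neg_atTop hs0).comp h1
    simpa using (this.const_mul (2 ^ (1-s) : ℝ))
  refine tendsto_of_tendsto_of_tendsto_of_le_of_le' tendsto_const_nhds hlim ?_ ?_
  · filter_upwards with n
    positivity
  · filter_upwards [eventually_ge_atTop 1] with n hn
    have hxn : (1:ℝ) ≤ c + n := by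
      have : (1:ℝ) ≤ (n:ℝ) := by exact_mod_cast hn
      linarith
    have hx0 : (0:ℝ) < c + n := by linarith
    refine le_trans (ratio_upper hx0 hs0 hs1) ?_
    have h2 : ((c+n)+s) ^ (1-s) ≤ (2*(c+n)) ^ (1-s) :=
      rpow_le_rpow (by linarith) (by linarith) (by linarith)
    rw [mul_rpow (by norm_num) hx0.le] at h2
    have h3 : ((c+n)+s) ^ (1-s) / (c+n) ≤ 2 ^ (1-s) * (c+n) ^ (1-s) / (c+n) := by
      apply div_le_div_of_nonneg_right h2 hx0.le |>.trans_eq rfl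
    refine h3.trans_eq ?_
    rw [mul_div_assoc, ← Real.rpow_sub_one hx0.ne']
    norm_num

lemma one_sub_rpow_le {lam t : ℝ} (hlam : 0 ≤ lam) (ht : t ∈ Ioo (0:ℝ) 1) :
    1 - t ^ lam ≤ max 1 lam * (1 - t) := by
  rcases le_total lam 1 with h | h
  · have h2 : t ^ (1:ℝ) ≤ t ^ lam := rpow_le_rpow_of_exponent_ge ht.1 ht.2.le h
    rw [rpow_one] at h2
    have h1 : (1:ℝ) ≤ max 1 lam := le_max_left _ _
    nlinarith [ht.2]
  · have hB := one_add_mul_self_le_rpow_one_add (by linarith [ht.1] : (-1:ℝ) ≤ t - 1) h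
    rw [show (1 + (t-1) : ℝ) = t by ring] at hB
    have h2 : lam ≤ max 1 lam := le_max_right _ _
    nlinarith [ht.2]

lemma integrand_bound {lam b x t : ℝ} (hlam : 0 ≤ lam) (hx : 0 < x)
    (ht : t ∈ Ioo (0:ℝ) 1) :
    (1 - t ^ lam) * t ^ (x-1) * (1-t) ^ (-b-1)
      ≤ max 1 lam * (t ^ (x-1) * (1-t) ^ ((1-b)-1)) := by
  have h0t := ht.1
  have h1t : (0:ℝ) < 1 - t := by linarith [ht.2]
  calc (1 - t ^ lam) * t ^ (x-1) * (1-t) ^ (-b-1)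
      ≤ (max 1 lam * (1-t)) * t ^ (x-1) * (1-t) ^ (-b-1) := by
        apply mul_le_mul_of_nonneg_right (mul_le_mul_of_nonneg_right
          (one_sub_rpow_le hlam ht) (rpow_nonneg h0t.le _)) (rpow_nonneg h1t.le _)
    _ = max 1 lam * (t ^ (x-1) * (1-t) ^ ((1-b)-1)) := by
        rw [show ((1-b)-1 : ℝ) = 1 + (-b-1) by ring, Real.rpow_add h1t, rpow_one]; ring

lemma integrand_nonneg {lam b x t : ℝ} (hlam : 0 ≤ lam) (ht : t ∈ Ioo (0:ℝ) 1) :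
    0 ≤ (1 - t ^ lam) * t ^ (x-1) * (1-t) ^ (-b-1) := by
  have hf0 : 0 ≤ 1 - t ^ lam := by
    have := rpow_le_one ht.1.le ht.2.le hlam; linarith
  have h1t : (0:ℝ) ≤ 1 - t := by linarith [ht.2]
  exact mul_nonneg (mul_nonneg hf0 (rpow_nonneg ht.1.le _)) (rpow_nonneg h1t _)

lemma integrableF {lam b x : ℝ} (hlam : 0 ≤ lam) (hb1 : b < 1) (hx : 0 < x) :
    IntegrableOn (fun t : ℝ => (1 - t ^ lam) * t ^ (x-1) * (1-t) ^ (-b-1)) (Ioo (0:ℝ) 1) := by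
  have hg : IntegrableOn (fun t : ℝ => max 1 lam * (t ^ (x-1) * (1-t) ^ ((1-b)-1)))
      (Ioo (0:ℝ) 1) := (betaIntegrable hx (by linarith)).const_mul _
  refine Integrable.mono' hg ?_ ?_
  · refine (ContinuousOn.aestronglyMeasurable ?_ measurableSet_Ioo)
    intro t ht
    have c1 : ContinuousAt (fun t : ℝ => t ^ lam) t :=
      Real.continuousAt_rpow_const t lam (Or.inl ht.1.ne')
    have c2 : ContinuousAt (fun t : ℝ => t ^ (x-1)) t :=
      Real.continuousAt_rpow_const t (x-1) (Or.inl ht.1.ne')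
    have c3 : ContinuousAt (fun t : ℝ => (1-t) ^ (-b-1)) t := by
      have h1t : (1:ℝ) - t ≠ 0 := by have := ht.2; intro hc; simp only [mem_Ioo] at ht; linarith [sub_eq_zero.mp hc]
      exact (Real.continuousAt_rpow_const (1-t) (-b-1) (Or.inl h1t)).comp
        ((continuous_const.sub continuous_id).continuousAt)
    exact (((continuousAt_const.sub c1).mul c2).mul c3).continuousWithinAt
  · rw [ae_restrict_iff' measurableSet_Ioo]
    filter_upwards with t ht
    rw [Real.norm_eq_abs, abs_of_nonneg (integrand_nonneg hlam ht)]
    exact integrand_bound hlam hx ht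

lemma hGb {b : ℝ} (hb0 : 0 < b) : Gamma (1-b) = -b * Gamma (-b) := by
  rw [show (1-b : ℝ) = -b + 1 by ring, Gamma_add_one (by linarith : (-b:ℝ) ≠ 0)]

lemma hBS {b : ℝ} (hb0 : 0 < b) (hb1 : b < 1) : ∀ x : ℝ, 0 < x → b ≤ x →
    Gamma x * Gamma (1-b) / Gamma (x+(1-b))
      = Gamma (-b) * (Gamma x / Gamma (x-b)) - Gamma (-b) * (Gamma (x+1) / Gamma (x+1-b)) := by
  intro x hx hbx
  rcases eq_or_lt_of_le hbx with rfl | hbx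
  · rw [sub_self, Gamma_zero, div_zero, mul_zero,
      show b+1-b = (1:ℝ) by ring, Gamma_one, div_one,
      show b+(1-b) = (1:ℝ) by ring, Gamma_one, div_one,
      Gamma_add_one hb0.ne', hGb hb0]
    ring
  · have hxb : 0 < x - b := by linarith
    rw [show x+(1-b) = (x-b)+1 by ring, Gamma_add_one hxb.ne',
      show x+1-b = (x-b)+1 by ring, Gamma_add_one hxb.ne',
      Gamma_add_one hx.ne', hGb hb0]
    have h4 : Gamma (x-b) ≠ 0 := (Gamma_pos_of_pos hxb).ne'
    field_simp
    ring

lemma hrec {b lam : ℝ} (hb0 : 0 < b) (hb1 : b < 1) (hlam : 0 < lam) :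
    ∀ x : ℝ, 0 < x →
    (∫ t in Ioo (0:ℝ) 1, (1 - t ^ lam) * t ^ (x-1) * (1-t) ^ (-b-1))
      = (Gamma x * Gamma (1-b) / Gamma (x+(1-b))
        - Gamma (x+lam) * Gamma (1-b) / Gamma ((x+lam)+(1-b)))
        + ∫ t in Ioo (0:ℝ) 1, (1 - t ^ lam) * t ^ ((x+1)-1) * (1-t) ^ (-b-1) := by
  intro x hx
  have i1 := betaIntegrable hx (by linarith : (0:ℝ) < 1-b)
  have i2 := betaIntegrable (by linarith : (0:ℝ) < x+lam) (by linarith : (0:ℝ) < 1-b)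
  have i3 := integrableF (lam := lam) (b := b) (x := x+1) hlam.le hb1 (by linarith)
  have hpt : ∀ t ∈ Ioo (0:ℝ) 1, (1 - t ^ lam) * t ^ (x-1) * (1-t) ^ (-b-1)
      = (t ^ (x-1) * (1-t) ^ ((1-b)-1) - t ^ ((x+lam)-1) * (1-t) ^ ((1-b)-1))
        + (1 - t ^ lam) * t ^ ((x+1)-1) * (1-t) ^ (-b-1) := by
    intro t ht
    have h0t := ht.1
    have h1t : (0:ℝ) < 1 - t := by linarith [ht.2]
    have e1 : t ^ ((x+lam)-1) = t ^ (x-1) * t ^ lam := by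
      rw [← Real.rpow_add h0t]; ring_nf
    have e2 : t ^ ((x+1)-1) = t ^ (x-1) * t := by
      rw [show (x+1)-1 = (x-1)+1 by ring, Real.rpow_add_one h0t.ne']
    have e3 : (1-t) ^ ((1-b)-1) = (1-t) * (1-t) ^ (-b-1) := by
      rw [show ((1-b)-1 : ℝ) = 1 + (-b-1) by ring, Real.rpow_add h1t, rpow_one]
    rw [e1, e2, e3]; ring
  have i12 : IntegrableOn (fun t : ℝ => t ^ (x-1) * (1-t) ^ ((1-b)-1)
      - t ^ ((x+lam)-1) * (1-t) ^ ((1-b)-1)) (Ioo (0:ℝ) 1) := i1.sub i2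
  rw [setIntegral_congr_fun measurableSet_Ioo hpt, integral_add i12 i3,
    integral_sub i1 i2, betaIntegral_eq hx (by linarith),
    betaIntegral_eq (by linarith) (by linarith)]

noncomputable def Kfun (b lam x : ℝ) : ℝ :=
  ∫ t in Ioo (0:ℝ) 1, (1 - t ^ lam) * t ^ (x-1) * (1-t) ^ (-b-1)

noncomputable def Sfun (b x : ℝ) : ℝ := Gamma (-b) * (Gamma x / Gamma (x-b))

lemma Kfun_nonneg (b lam x : ℝ) (hlam : 0 ≤ lam) : 0 ≤ Kfun b lam x :=
  setIntegral_nonneg measurableSet_Ioo (fun _ ht => integrand_nonneg hlam ht)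

lemma Kfun_le {b lam x : ℝ} (hlam : 0 < lam) (hb1 : b < 1) (hx : 0 < x) :
    Kfun b lam x ≤ max 1 lam * (Gamma x * Gamma (1-b) / Gamma (x+(1-b))) := by
  have h1 : Kfun b lam x ≤ ∫ t in Ioo (0:ℝ) 1, max 1 lam * (t ^ (x-1) * (1-t) ^ ((1-b)-1)) := by
    refine setIntegral_mono_on (integrableF hlam.le hb1 hx)
      ((betaIntegrable hx (by linarith)).const_mul _) measurableSet_Ioo ?_
    exact fun t ht => integrand_bound hlam.le hx ht
  rw [integral_const_mul, betaIntegral_eq hx (by linarith)] at h1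
  exact h1

lemma Klim {a b lam : ℝ} (ha : 0 < a) (hb0 : 0 < b) (hb1 : b < 1) (hlam : 0 < lam) :
    Tendsto (fun n : ℕ => Kfun b lam (a+n)) atTop (𝓝 0) := by
  have hrt := ratio_tendsto (c := a) (s := 1-b) (by linarith) (by linarith) ha
  have hup : Tendsto (fun n : ℕ =>
      max 1 lam * (Gamma (a+n) * Gamma (1-b) / Gamma ((a+n)+(1-b)))) atTop (𝓝 0) := by
    have h2 := hrt.const_mul (max 1 lam * Gamma (1-b))
    rw [mul_zero] at h2
    exact h2.congr (fun n => by ring)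
  refine tendsto_of_tendsto_of_tendsto_of_le_of_le tendsto_const_nhds hup ?_ ?_
  · exact fun n => Kfun_nonneg _ _ _ hlam.le
  · intro n
    exact Kfun_le hlam hb1 (by positivity)

lemma Rup {b x : ℝ} (hb0 : 0 < b) (hb1 : b < 1) (hbx : b < x) :
    Gamma x / Gamma (x-b) ≤ (x-b) ^ b := by
  have hxb : (0:ℝ) < x - b := by linarith
  have h := Gamma_add_le (y := x-b) (s := b) hxb hb0 hb1
  rw [show (x-b)+b = x by ring] at h
  rw [div_le_iff₀ (Gamma_pos_of_pos hxb)]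
  linarith

lemma Rlo {b x : ℝ} (hb0 : 0 < b) (hb1 : b < 1) (hbx : b < x) :
    (x-b) * x ^ (b-1) ≤ Gamma x / Gamma (x-b) := by
  have hx : (0:ℝ) < x := by linarith
  have hxb : (0:ℝ) < x - b := by linarith
  have h := Gamma_add_le (y := x) (s := 1-b) hx (by linarith) (by linarith)
  rw [show x+(1-b) = (x-b)+1 by ring, Gamma_add_one hxb.ne'] at h
  have h2 : (x-b) * x ^ (b-1) = (x-b) / x ^ (1-b) := by
    rw [div_eq_mul_inv, ← Real.rpow_neg hx.le]
    norm_num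
  rw [h2, div_le_div_iff₀ (rpow_pos_of_pos hx _) (Gamma_pos_of_pos hxb)]
  nlinarith [Gamma_pos_of_pos hxb, rpow_pos_of_pos hx (1-b)]

lemma Rgap {b lam x : ℝ} (hb0 : 0 < b) (hb1 : b < 1) (hlam : 0 < lam) (hn : b+1 ≤ x) :
    |Gamma x / Gamma (x-b) - Gamma (x+lam) / Gamma ((x+lam)-b)|
      ≤ (b*lam + (1-b)*(lam+b)) * (x-b)^(b-1) := by
  have hbx : b < x := by linarith
  have hxpos : (0:ℝ) < x := by linarith
  have hxb : (0:ℝ) < x - b := by linarith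
  have hbxl : b < x + lam := by linarith
  have hP : (0:ℝ) ≤ (x-b)^(b-1) := rpow_nonneg hxb.le _
  have u1 : Gamma x / Gamma (x-b) ≤ (x-b)^b := Rup hb0 hb1 hbx
  have u2 : Gamma (x+lam) / Gamma ((x+lam)-b) ≤ ((x+lam)-b)^b := Rup hb0 hb1 hbxl
  have l1 : (x-b) * x^(b-1) ≤ Gamma x / Gamma (x-b) := Rlo hb0 hb1 hbx
  have l2 : ((x+lam)-b) * (x+lam)^(b-1) ≤ Gamma (x+lam) / Gamma ((x+lam)-b) :=
    Rlo hb0 hb1 hbxl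
  have c1 : (x-b) * (x+lam)^(b-1) ≤ (x-b) * x^(b-1) :=
    mul_le_mul_of_nonneg_left
      (rpow_le_rpow_of_nonpos hxpos (by linarith) (by linarith)) hxb.le
  have c2 : (x-b) * (x+lam)^(b-1) ≤ ((x+lam)-b) * (x+lam)^(b-1) :=
    mul_le_mul_of_nonneg_right (by linarith) (rpow_nonneg (by linarith) _)
  have e1 : (x-b)^b = (x-b)^(b-1) * (x-b) := by
    rw [← Real.rpow_add_one hxb.ne' (b-1)]; norm_num
  have e2 : (x-b)^(b-1) = (x-b)^(b-2) * (x-b) := by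
    rw [← Real.rpow_add_one hxb.ne' (b-2)]; congr 1; ring
  have T1 : ((x+lam)-b)^b - (x-b)^b ≤ b * (x-b)^(b-1) * lam := by
    have h := rpow_sub_rpow_abs_le (v := x-b) (u := (x+lam)-b) hxb (by linarith) hb1.le
    rw [abs_of_nonneg hb0.le, show ((x+lam)-b) - (x-b) = lam by ring] at h
    calc ((x+lam)-b)^b - (x-b)^b ≤ |((x+lam)-b)^b - (x-b)^b| := le_abs_self _
      _ ≤ b * (x-b)^(b-1) * lam := h
  have T2 : (x-b)^b - (x-b)*(x+lam)^(b-1) ≤ (1-b) * (lam+b) * (x-b)^(b-1) := by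
    have h := rpow_sub_rpow_abs_le (v := x-b) (u := x+lam) hxb (by linarith)
      (by linarith : b-1 ≤ 1)
    rw [abs_of_neg (by linarith : b-1 < 0), show (x+lam) - (x-b) = lam + b by ring,
      show (b-1)-1 = b-2 by ring] at h
    have h2 : (x-b)^(b-1) - (x+lam)^(b-1) ≤ (1-b) * (x-b)^(b-2) * (lam+b) := by
      calc (x-b)^(b-1) - (x+lam)^(b-1)
          ≤ |(x+lam)^(b-1) - (x-b)^(b-1)| := by rw [abs_sub_comm]; exact le_abs_self _
        _ ≤ -(b-1) * (x-b)^(b-2) * (lam+b) := h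
        _ = (1-b) * (x-b)^(b-2) * (lam+b) := by ring
    have h3 := mul_le_mul_of_nonneg_left h2 hxb.le
    calc (x-b)^b - (x-b)*(x+lam)^(b-1)
        = (x-b) * ((x-b)^(b-1) - (x+lam)^(b-1)) := by rw [e1]; ring
      _ ≤ (x-b) * ((1-b) * (x-b)^(b-2) * (lam+b)) := h3
      _ = (1-b) * (lam+b) * (x-b)^(b-1) := by rw [e2]; ring
  have hCP : (b*lam + (1-b)*(lam+b)) * (x-b)^(b-1)
      = b * (x-b)^(b-1) * lam + (1-b)*(lam+b)*(x-b)^(b-1) := by ring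
  have hT1nn : 0 ≤ b * (x-b)^(b-1) * lam :=
    mul_nonneg (mul_nonneg hb0.le hP) hlam.le
  rw [abs_sub_le_iff]
  constructor
  · linarith
  · linarith

lemma Rlim {a b lam : ℝ} (ha : 0 < a) (hb0 : 0 < b) (hb1 : b < 1) (hlam : 0 < lam) :
    Tendsto (fun n : ℕ => Gamma (a+n) / Gamma ((a+n)-b)
      - Gamma ((a+lam)+n) / Gamma (((a+lam)+n)-b)) atTop (𝓝 0) := by
  have hg : Tendsto (fun n : ℕ =>
      (b*lam + (1-b)*(lam+b)) * ((a+n)-b) ^ (-(1-b))) atTop (𝓝 0) := by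
    have h1 : Tendsto (fun n : ℕ => ((a+n)-b : ℝ)) atTop atTop := by
      have := tendsto_atTop_add_const_left atTop (a-b) (tendsto_natCast_atTop_atTop (R := ℝ))
      exact this.congr (fun n => by ring)
    have h2 := (tendsto_rpow_neg_atTop (by linarith : (0:ℝ) < 1-b)).comp h1
    have h3 := h2.const_mul (b*lam + (1-b)*(lam+b))
    rw [mul_zero] at h3
    simpa [Function.comp] using h3
  refine squeeze_zero_norm' ?_ hg
  have hev : ∀ᶠ n : ℕ in atTop, b+1 ≤ a+n := by
    have h1 : Tendsto (fun n : ℕ => (a+n : ℝ)) atTop atTop :=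
      tendsto_atTop_add_const_left atTop a (tendsto_natCast_atTop_atTop (R := ℝ))
    exact h1.eventually_ge_atTop (b+1)
  filter_upwards [hev] with n hn
  have hy : ((a+lam)+(n:ℝ) : ℝ) = (a+(n:ℝ)) + lam := by ring
  rw [hy, Real.norm_eq_abs, show (-(1-b) : ℝ) = b-1 by ring]
  exact Rgap hb0 hb1 hlam hn

lemma rec' {b lam : ℝ} (hb0 : 0 < b) (hb1 : b < 1) (hlam : 0 < lam) (x : ℝ) (hx : 0 < x)
    (hbx : b ≤ x) :
    Kfun b lam x = ((Sfun b x - Sfun b (x+1))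
      - (Sfun b (x+lam) - Sfun b ((x+lam)+1))) + Kfun b lam (x+1) := by
  have h := hrec hb0 hb1 hlam x hx
  have e1 := hBS hb0 hb1 x hx hbx
  have e2 := hBS hb0 hb1 (x+lam) (by linarith) (by linarith)
  simp only [Kfun, Sfun]
  rw [h, e1, e2]

lemma key {a b lam : ℝ} (ha : 0 < a) (hb0 : 0 < b) (hb1 : b < 1) (hba : b ≤ a)
    (hlam : 0 < lam) :
    Kfun b lam a = Sfun b a - Sfun b (a+lam) := by
  have htele : ∀ n : ℕ, Kfun b lam a = (Sfun b a - Sfun b (a+lam))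
      - (Sfun b (a+n) - Sfun b ((a+lam)+n)) + Kfun b lam (a+n) := by
    intro n
    induction n with
    | zero => simp only [Nat.cast_zero, add_zero]; ring
    | succ n ih =>
      have hx : (0:ℝ) < a + n := by positivity
      have hbx : b ≤ a + (n:ℝ) := by
        have h0 : (0:ℝ) ≤ (n:ℝ) := Nat.cast_nonneg n
        linarith
      have h := rec' hb0 hb1 hlam (a+n) hx hbx
      push_cast
      rw [show a+((n:ℝ)+1) = (a+(n:ℝ))+1 by ring,
          show (a+lam)+((n:ℝ)+1) = ((a+(n:ℝ))+lam)+1 by ring]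
      rw [show (a+lam)+(n:ℝ) = (a+(n:ℝ))+lam by ring] at ih
      linarith [h, ih]
  have hKlim := Klim ha hb0 hb1 hlam
  have hRlim := Rlim ha hb0 hb1 hlam
  have hSlim : Tendsto (fun n : ℕ => Sfun b (a+n) - Sfun b ((a+lam)+n)) atTop (𝓝 0) := by
    have h2 := hRlim.const_mul (Gamma (-b))
    rw [mul_zero] at h2
    exact h2.congr (fun n => by simp only [Sfun]; ring)
  have h4 : Tendsto (fun n : ℕ => (Sfun b a - Sfun b (a+lam))
      - (Sfun b (a+n) - Sfun b ((a+lam)+n)) + Kfun b lam (a+n)) atTop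
      (𝓝 ((Sfun b a - Sfun b (a+lam)) - 0 + 0)) :=
    (tendsto_const_nhds.sub hSlim).add hKlim
  have h5 := h4.congr (fun n => (htele n).symm)
  have h6 := tendsto_nhds_unique h5 tendsto_const_nhds
  linarith [h6]

lemma cov {a b lam : ℝ} (hlam : 0 ≤ lam) (c : ℝ) (hc : c = b+1-a) :
    ∫ x in Ioi (0:ℝ), (1 - exp (-lam * x)) * exp (c * x) * (exp x - 1) ^ (-(b+1))
      = Kfun b lam a := by
  have himg : (fun x : ℝ => exp (-x)) '' (Ioi 0) = Ioo 0 1 := by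
    ext t
    constructor
    · rintro ⟨x, hx, rfl⟩
      exact ⟨exp_pos _, by rw [exp_lt_one_iff]; simpa using hx⟩
    · rintro ⟨ht0, ht1⟩
      exact ⟨-Real.log t, by simpa using Real.log_neg ht0 ht1, by simp [Real.exp_log ht0]⟩
  have hderiv : ∀ x ∈ Ioi (0:ℝ),
      HasDerivWithinAt (fun x : ℝ => exp (-x)) (-exp (-x)) (Ioi 0) x := fun x _ =>
    mul_neg_one (exp (-x)) ▸
      ((Real.hasDerivAt_exp (-x)).comp x (hasDerivAt_neg x)).hasDerivWithinAt
  have hinj : InjOn (fun x : ℝ => exp (-x)) (Ioi 0) := fun u _ v _ huv =>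
    neg_injective (Real.exp_injective huv)
  have h := integral_image_eq_integral_abs_deriv_smul measurableSet_Ioi hderiv hinj
      (fun t => (1 - t ^ lam) * t ^ (a-1) * (1-t) ^ (-b-1))
  rw [himg] at h
  have h2 : Kfun b lam a
      = ∫ x in Ioi (0:ℝ), |-exp (-x)| •
          ((1 - exp (-x) ^ lam) * exp (-x) ^ (a-1) * (1 - exp (-x)) ^ (-b-1)) := h
  rw [h2]
  refine setIntegral_congr_fun measurableSet_Ioi (fun x hx => ?_)
  have hx0 : (0:ℝ) < x := hx
  have hex1 : (0:ℝ) ≤ exp x - 1 := by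
    have := Real.add_one_le_exp x; linarith
  have p1 : exp (-x) ^ lam = exp (-lam * x) := by
    rw [← Real.exp_mul]; ring_nf
  have p2 : exp (-x) ^ (a-1) = exp (-(a-1) * x) := by
    rw [← Real.exp_mul]; ring_nf
  have p3 : (1 : ℝ) - exp (-x) = exp (-x) * (exp x - 1) := by
    rw [mul_sub, ← Real.exp_add]; simp
  have p4 : ((1 : ℝ) - exp (-x)) ^ (-b-1) = exp ((b+1) * x) * (exp x - 1) ^ (-b-1) := by
    rw [p3, mul_rpow (exp_pos _).le hex1]
    congr 1
    rw [← Real.exp_mul]; ring_nf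
  rw [smul_eq_mul, abs_neg, abs_of_pos (exp_pos _), p1, p2, p4]
  rw [show (1 - exp (-lam * x)) * exp (c * x) * (exp x - 1) ^ (-(b+1))
      = (1 - exp (-lam * x)) * exp (c * x) * (exp x - 1) ^ (-b-1) by
        rw [show -(b+1) = -b-1 by ring]]
  have p5 : exp (-x) * exp (-(a-1) * x) * exp ((b+1) * x) = exp (c * x) := by
    rw [← Real.exp_add, ← Real.exp_add, hc]; ring_nf
  calc (1 - exp (-lam * x)) * exp (c * x) * (exp x - 1) ^ (-b-1)
      = (exp (-x) * exp (-(a-1) * x) * exp ((b+1) * x)) * (1 - exp (-lam * x))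
        * (exp x - 1) ^ (-b-1) := by rw [p5]; ring
    _ = exp (-x) * ((1 - exp (-lam * x)) * exp (-(a-1) * x)
        * (exp ((b+1) * x) * (exp x - 1) ^ (-b-1))) := by ring

end DLLE

theorem descending_ladder_laplace_exponent_small_alpha
    (α ρ : ℝ) (hα : α ∈ Set.Ioc (0:ℝ) 1) (hρ : ρ ∈ Set.Ioo (0:ℝ) 1)
    (h : α * (1 - ρ) ∈ Set.Ioo (0:ℝ) 1) (lam : ℝ) (hlam : 0 ≤ lam) :
    Real.Gamma (1 - α * ρ) / Real.Gamma (1 - α) +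
      -(Real.Gamma (-(α * (1 - ρ))))⁻¹ *
        ∫ x in Set.Ioi (0:ℝ),
          (1 - Real.exp (-lam * x)) * Real.exp (α * x) *
            (Real.exp x - 1) ^ (-(α * (1 - ρ) + 1)) =
    Real.Gamma (1 - α * ρ + lam) / Real.Gamma (1 - α + lam) := by
  obtain ⟨hα0, hα1⟩ := hα
  obtain ⟨hρ0, hρ1⟩ := hρ
  obtain ⟨hb0, hb1⟩ := h
  rcases eq_or_lt_of_le hlam with rfl | hlam'
  · norm_num
  · have ha : (0:ℝ) < 1 - α * ρ := by nlinarith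
    have hba : α * (1 - ρ) ≤ 1 - α * ρ := by nlinarith
    have hcov := DLLE.cov (a := 1 - α * ρ) (b := α * (1 - ρ)) hlam α (by ring)
    rw [hcov, DLLE.key ha hb0 hb1 hba hlam']
    simp only [DLLE.Sfun]
    rw [show (1:ℝ) - α * ρ - α * (1 - ρ) = 1 - α by ring,
        show (1:ℝ) - α * ρ + lam - α * (1 - ρ) = 1 - α + lam by ring]
    have hGbne : Real.Gamma (-(α * (1 - ρ))) ≠ 0 := by
      apply Real.Gamma_ne_zero
      intro m
      cases m with
      | zero => simpa using hb0.ne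
      | succ k =>
        intro hcon
        have h1 : α * (1 - ρ) = (k:ℝ) + 1 := by push_cast at hcon ⊢; linarith
        have h2 : (0:ℝ) ≤ (k:ℝ) := Nat.cast_nonneg k
        linarith
    have hsimp : ∀ q y : ℝ, q + -(Real.Gamma (-(α * (1 - ρ))))⁻¹ *
        (Real.Gamma (-(α * (1 - ρ))) * q - Real.Gamma (-(α * (1 - ρ))) * y) = y := by
      intro q y
      field_simp
      ring
    exact hsimp _ _
end

section
/- Let α ∈ (1,2), ρ ∈ (1−1/α, 1/α), ρ̂ = 1−ρ. For every λ > 0, ∫_0^∞ e^{−λx} · [ Γ(2−α)/Γ(1−αρ) + ((1−αρ̂)/Γ(αρ̂)) ∫_x^∞ e^{αρ z} (e^{z}−1)^{αρ̂−2} dz ] dx = Γ(2−α+λ) / (λ·Γ(1−αρ+λ)). -/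
open MeasureTheory Set Real Filter Topology

lemma cpow_ofReal_eq (x c : ℝ) (hx : 0 ≤ x) :
    (x:ℂ) ^ (c:ℂ) = ((x ^ c : ℝ) : ℂ) := (Complex.ofReal_cpow hx c).symm

lemma realBeta_intervalEq (p q : ℝ) :
    Complex.betaIntegral p q = ((∫ t in (0:ℝ)..1, t ^ (p-1) * (1-t) ^ (q-1) : ℝ) : ℂ) := by
  rw [Complex.betaIntegral, ← intervalIntegral.integral_ofReal]
  refine intervalIntegral.integral_congr (fun x hx => ?_)
  rw [Set.uIcc_of_le (by norm_num : (0:ℝ) ≤ 1)] at hx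
  have h1 : (0:ℝ) ≤ x := hx.1
  have h2 : (0:ℝ) ≤ 1 - x := by linarith [hx.2]
  rw [show ((p:ℂ) - 1) = ((p - 1 : ℝ) : ℂ) by push_cast; ring,
      show ((q:ℂ) - 1) = ((q - 1 : ℝ) : ℂ) by push_cast; ring,
      show ((1:ℂ) - (x:ℂ)) = ((1 - x : ℝ) : ℂ) by push_cast; ring,
      ← Complex.ofReal_cpow h1, ← Complex.ofReal_cpow h2]
  push_cast
  ring

lemma realBeta_integrableOn (p q : ℝ) (hp : 0 < p) (hq : 0 < q) :
    IntegrableOn (fun t => t ^ (p-1) * (1-t) ^ (q-1)) (Set.Ioo (0:ℝ) 1) := by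
  have h := Complex.betaIntegral_convergent (u := (p:ℂ)) (v := (q:ℂ)) (by simpa) (by simpa)
  rw [intervalIntegrable_iff_integrableOn_Ioc_of_le (by norm_num)] at h
  have h2 := (h.mono_set Set.Ioo_subset_Ioc_self).re
  refine (integrableOn_congr_fun (fun x hx => ?_) measurableSet_Ioo).2 h2
  have h1 : (0:ℝ) ≤ x := hx.1.le
  have h2' : (0:ℝ) ≤ 1 - x := by linarith [hx.2.le]
  rw [show ((1:ℂ) - (x:ℂ)) = ((1 - x : ℝ) : ℂ) by push_cast; ring,
      show ((p:ℂ) - 1) = ((p - 1 : ℝ) : ℂ) by push_cast; ring,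
      show ((q:ℂ) - 1) = ((q - 1 : ℝ) : ℂ) by push_cast; ring,
      ← Complex.ofReal_cpow h1, ← Complex.ofReal_cpow h2']
  rw [← Complex.ofReal_mul]
  simp

lemma realBeta_eq (p q : ℝ) (hp : 0 < p) (hq : 0 < q) :
    ∫ t in Set.Ioo (0:ℝ) 1, t ^ (p-1) * (1-t) ^ (q-1)
      = Real.Gamma p * Real.Gamma q / Real.Gamma (p+q) := by
  have h := Complex.Gamma_mul_Gamma_eq_betaIntegral (s := (p:ℂ)) (t := (q:ℂ))
      (by simpa) (by simpa)
  rw [realBeta_intervalEq] at h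
  rw [← Complex.ofReal_add, Complex.Gamma_ofReal, Complex.Gamma_ofReal,
    Complex.Gamma_ofReal, ← Complex.ofReal_mul, ← Complex.ofReal_mul] at h
  have h' := Complex.ofReal_injective h
  have hne : Real.Gamma (p+q) ≠ 0 := (Real.Gamma_pos_of_pos (by linarith)).ne'
  rw [intervalIntegral.integral_of_le (by norm_num : (0:ℝ) ≤ 1),
    MeasureTheory.integral_Ioc_eq_integral_Ioo] at h'
  field_simp
  linarith [h']


lemma u_pos {z : ℝ} (hz : 0 < z) : 0 < 1 - Real.exp (-z) := by
  have : Real.exp (-z) < 1 := by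
    rw [← Real.exp_zero]; exact Real.exp_lt_exp.2 (by linarith)
  linarith

lemma u_lt_one (z : ℝ) : 1 - Real.exp (-z) < 1 := by
  have := Real.exp_pos (-z); linarith

lemma u_ge {z : ℝ} (hz : 0 ≤ z) : z * Real.exp (-z) ≤ 1 - Real.exp (-z) := by
  have h := Real.add_one_le_exp z
  have hp := Real.exp_pos z
  have hne : Real.exp (-z) = (Real.exp z)⁻¹ := by
    rw [Real.exp_neg]
  have h2 : (z + 1) * (Real.exp z)⁻¹ ≤ Real.exp z * (Real.exp z)⁻¹ :=
    mul_le_mul_of_nonneg_right h (inv_nonneg.2 hp.le)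
  rw [mul_inv_cancel₀ hp.ne'] at h2
  rw [hne]
  nlinarith

lemma u_le {x : ℝ} : 1 - Real.exp (-x) ≤ x := by
  have := Real.add_one_le_exp (-x); linarith

lemma u_mono : Monotone (fun z : ℝ => 1 - Real.exp (-z)) := by
  intro x y h
  simp only [sub_le_sub_iff_left]
  exact Real.exp_le_exp.2 (by linarith)

lemma phi_image : (fun z : ℝ => 1 - Real.exp (-z)) '' Set.Ioi 0 = Set.Ioo (0:ℝ) 1 := by
  ext t
  constructor
  · rintro ⟨z, hz, rfl⟩
    exact ⟨u_pos hz, u_lt_one z⟩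
  · rintro ⟨h0, h1⟩
    refine ⟨-Real.log (1-t), ?_, ?_⟩
    · simp only [Set.mem_Ioi]
      have : Real.log (1-t) < 0 := Real.log_neg (by linarith) (by linarith)
      linarith
    · simp only [neg_neg]
      rw [Real.exp_log (by linarith)]; ring

lemma phi_deriv (z : ℝ) : HasDerivAt (fun z : ℝ => 1 - Real.exp (-z)) (Real.exp (-z)) z := by
  have h : HasDerivAt (fun z : ℝ => Real.exp (-z)) (Real.exp (-z) * (-1)) z :=
    (Real.hasDerivAt_exp (-z)).comp z (hasDerivAt_neg z)
  simpa using (h.const_sub 1)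

lemma phi_inj : Set.InjOn (fun z : ℝ => 1 - Real.exp (-z)) (Set.Ioi 0) := by
  intro x _ y _ h
  simp only [sub_right_inj, Real.exp_eq_exp, neg_inj] at h
  exact h

lemma cov_eq (ψ : ℝ → ℝ) :
    ∫ t in Set.Ioo (0:ℝ) 1, ψ t = ∫ z in Set.Ioi (0:ℝ), Real.exp (-z) * ψ (1 - Real.exp (-z)) := by
  rw [← phi_image,
    integral_image_eq_integral_abs_deriv_smul measurableSet_Ioi
      (fun z _ => (phi_deriv z).hasDerivWithinAt) phi_inj ψ]
  refine setIntegral_congr_fun measurableSet_Ioi (fun z _ => ?_)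
  rw [abs_of_pos (Real.exp_pos _)]; simp [smul_eq_mul]

lemma cov_int (ψ : ℝ → ℝ) :
    IntegrableOn ψ (Set.Ioo (0:ℝ) 1) ↔
      IntegrableOn (fun z => Real.exp (-z) * ψ (1 - Real.exp (-z))) (Set.Ioi (0:ℝ)) := by
  rw [← phi_image,
    integrableOn_image_iff_integrableOn_abs_deriv_smul measurableSet_Ioi
      (fun z _ => (phi_deriv z).hasDerivWithinAt) phi_inj ψ]
  constructor <;> intro h <;> refine h.congr_fun (fun z _ => ?_) measurableSet_Ioi
  · beta_reduce; rw [abs_of_pos (Real.exp_pos _)]; simp [smul_eq_mul]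
  · rw [abs_of_pos (Real.exp_pos _)]; simp [smul_eq_mul]


lemma w_eq_on_Ioi (p q : ℝ) : ∀ z ∈ Set.Ioi (0:ℝ),
    Real.exp (-z) * ((1 - Real.exp (-z)) ^ (p-1) * (1 - (1 - Real.exp (-z))) ^ (q-1))
      = (1 - Real.exp (-z)) ^ (p-1) * Real.exp (-(q*z)) := by
  intro z _
  have h1 : (1 : ℝ) - (1 - Real.exp (-z)) = Real.exp (-z) := by ring
  rw [h1, Real.rpow_def_of_pos (Real.exp_pos _), Real.log_exp,
    show Real.exp (-z) * ((1 - Real.exp (-z)) ^ (p - 1) * Real.exp (-z * (q - 1)))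
      = (1 - Real.exp (-z)) ^ (p-1) * (Real.exp (-z) * Real.exp (-z*(q-1))) from by ring,
    ← Real.exp_add]
  congr 1
  exact congrArg Real.exp (by ring)

lemma wBeta_eq {p q : ℝ} (hp : 0 < p) (hq : 0 < q) :
    ∫ z in Set.Ioi (0:ℝ), (1 - Real.exp (-z)) ^ (p-1) * Real.exp (-(q*z))
      = Real.Gamma p * Real.Gamma q / Real.Gamma (p+q) := by
  rw [← realBeta_eq p q hp hq, cov_eq]
  exact setIntegral_congr_fun measurableSet_Ioi (fun z hz => (w_eq_on_Ioi p q z hz).symm)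

lemma wBeta_int {p q : ℝ} (hp : 0 < p) (hq : 0 < q) :
    IntegrableOn (fun z => (1 - Real.exp (-z)) ^ (p-1) * Real.exp (-(q*z)))
      (Set.Ioi (0:ℝ)) := by
  have h := (cov_int (fun t => t ^ (p-1) * (1-t) ^ (q-1))).1 (realBeta_integrableOn p q hp hq)
  exact h.congr_fun (w_eq_on_Ioi p q) measurableSet_Ioi

-- integrability of the J-type integrand
lemma j_int {b q lam : ℝ} (hb : 0 < b) (hb1 : b < 1) (hq : 0 < q) (hlam : 0 < lam) :
    IntegrableOn (fun z => (1 - Real.exp (-z)) ^ (b-2) * Real.exp (-(q*z))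
      * (1 - Real.exp (-(lam*z)))) (Set.Ioi (0:ℝ)) := by
  have hmeas : Measurable
      (fun z : ℝ => (1 - Real.exp (-z)) ^ (b-2) * Real.exp (-(q*z))
        * (1 - Real.exp (-(lam*z)))) := by fun_prop
  rw [show Set.Ioi (0:ℝ) = Set.Ioc 0 1 ∪ Set.Ioi 1 from
    (Set.Ioc_union_Ioi_eq_Ioi (by norm_num)).symm]
  refine IntegrableOn.union ?_ ?_
  · refine Integrable.mono' (g := fun z => (Real.exp (2-b) * lam) * z ^ (b-1)) ?_
      hmeas.aestronglyMeasurable ?_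
    · have h0 : IntegrableOn (fun z : ℝ => z ^ (b-1)) (Set.Ioc (0:ℝ) 1) :=
        (intervalIntegrable_iff_integrableOn_Ioc_of_le (by norm_num)).1
          (intervalIntegral.intervalIntegrable_rpow' (by linarith))
      exact h0.const_mul _
    · filter_upwards [ae_restrict_mem measurableSet_Ioc] with z hz
      obtain ⟨hz0, hz1⟩ := hz
      have hu := u_pos hz0
      set A := (1 - Real.exp (-z)) ^ (b-2) with hA
      set B := Real.exp (-(q*z)) with hB
      set Cc := 1 - Real.exp (-(lam*z)) with hC
      have hA0 : 0 ≤ A := Real.rpow_nonneg hu.le _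
      have hB0 : 0 ≤ B := (Real.exp_pos _).le
      have hB1 : B ≤ 1 := Real.exp_le_one_iff.2 (by nlinarith)
      have hC0 : 0 ≤ Cc := (u_pos (by positivity)).le
      have hC1 : Cc ≤ lam * z := u_le
      have hA1 : A ≤ Real.exp (2-b) * z ^ (b-2) := by
        have hze : 0 < z * Real.exp (-z) := by positivity
        have h2 : A ≤ (z * Real.exp (-z)) ^ (b-2) :=
          Real.rpow_le_rpow_of_nonpos hze (u_ge hz0.le) (by linarith)
        refine h2.trans ?_
        rw [Real.mul_rpow hz0.le (Real.exp_pos _).le,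
          Real.rpow_def_of_pos (Real.exp_pos _), Real.log_exp]
        rw [mul_comm (z ^ (b-2)) _]
        have : Real.exp (-z * (b-2)) ≤ Real.exp (2-b) := by
          refine Real.exp_le_exp.2 ?_
          nlinarith
        exact mul_le_mul_of_nonneg_right this (Real.rpow_nonneg hz0.le _)
      have hpow : z ^ (b-2) * z = z ^ (b-1) := by
        rw [show b-1 = b-2+1 by ring, Real.rpow_add_one hz0.ne']
      have habs : ‖A * B * Cc‖ = A * B * Cc := by
        rw [Real.norm_eq_abs, abs_of_nonneg (mul_nonneg (mul_nonneg hA0 hB0) hC0)]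
      rw [habs]
      calc A * B * Cc ≤ A * B * (lam * z) := by
            apply mul_le_mul_of_nonneg_left hC1 (mul_nonneg hA0 hB0)
        _ ≤ A * 1 * (lam * z) := by
            have : 0 ≤ lam * z := by positivity
            apply mul_le_mul_of_nonneg_right
              (mul_le_mul_of_nonneg_left hB1 hA0) this
        _ ≤ (Real.exp (2-b) * z ^ (b-2)) * (lam * z) := by
            rw [mul_one]
            apply mul_le_mul_of_nonneg_right hA1 (by positivity)
        _ = (Real.exp (2-b) * lam) * z ^ (b-1) := by rw [← hpow]; ring
  · refine Integrable.mono' (g := fun z => (1 - Real.exp (-1)) ^ (b-2) * Real.exp (-(q*z))) ?_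
      hmeas.aestronglyMeasurable ?_
    · have : IntegrableOn (fun x : ℝ => Real.exp (-(q*x))) (Set.Ioi (1:ℝ)) := by
        simpa [neg_mul] using exp_neg_integrableOn_Ioi 1 hq
      exact this.const_mul _
    · filter_upwards [ae_restrict_mem measurableSet_Ioi] with z hz
      have hz1 : (1:ℝ) < z := hz
      have hz0 : (0:ℝ) < z := by linarith
      have hu := u_pos hz0
      have h1 := u_pos (show (0:ℝ) < 1 by norm_num)
      have hA1 : (1 - Real.exp (-z)) ^ (b-2) ≤ (1 - Real.exp (-1)) ^ (b-2) :=
        Real.rpow_le_rpow_of_nonpos h1 (u_mono hz1.le) (by linarith)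
      have hC0 : 0 ≤ 1 - Real.exp (-(lam*z)) := (u_pos (by positivity)).le
      have hC1 : 1 - Real.exp (-(lam*z)) ≤ 1 := by
        have := Real.exp_pos (-(lam*z)); linarith
      have hA0 : 0 ≤ (1 - Real.exp (-z)) ^ (b-2) := Real.rpow_nonneg hu.le _
      have hB0 : 0 ≤ Real.exp (-(q*z)) := (Real.exp_pos _).le
      rw [Real.norm_eq_abs, abs_of_nonneg (mul_nonneg (mul_nonneg hA0 hB0) hC0)]
      calc (1 - Real.exp (-z)) ^ (b-2) * Real.exp (-(q*z)) * (1 - Real.exp (-(lam*z)))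
          ≤ (1 - Real.exp (-z)) ^ (b-2) * Real.exp (-(q*z)) * 1 := by
            apply mul_le_mul_of_nonneg_left hC1 (mul_nonneg hA0 hB0)
        _ = (1 - Real.exp (-z)) ^ (b-2) * Real.exp (-(q*z)) := by ring
        _ ≤ (1 - Real.exp (-1)) ^ (b-2) * Real.exp (-(q*z)) :=
            mul_le_mul_of_nonneg_right hA1 (Real.exp_pos _).le

-- integrability of g away from zero
lemma g_int {b q : ℝ} (hb1 : b < 1) (hq : 0 < q) {x : ℝ} (hx : 0 < x) :
    IntegrableOn (fun z => (1 - Real.exp (-z)) ^ (b-2) * Real.exp (-(q*z)))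
      (Set.Ioi x) := by
  refine Integrable.mono' (g := fun z => (1 - Real.exp (-x)) ^ (b-2) * Real.exp (-(q*z))) ?_
    (by apply Measurable.aestronglyMeasurable; fun_prop) ?_
  · have : IntegrableOn (fun z : ℝ => Real.exp (-(q*z))) (Set.Ioi x) := by
      simpa [neg_mul] using exp_neg_integrableOn_Ioi x hq
    exact this.const_mul _
  · filter_upwards [ae_restrict_mem measurableSet_Ioi] with z hz
    have hzx : x < z := hz
    have hz0 : 0 < z := lt_trans hx hzx
    have hux := u_pos hx
    have hA1 : (1 - Real.exp (-z)) ^ (b-2) ≤ (1 - Real.exp (-x)) ^ (b-2) :=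
      Real.rpow_le_rpow_of_nonpos hux (u_mono hzx.le) (by linarith)
    have hA0 : 0 ≤ (1 - Real.exp (-z)) ^ (b-2) := Real.rpow_nonneg (u_pos hz0).le _
    rw [Real.norm_eq_abs, abs_of_nonneg (mul_nonneg hA0 (Real.exp_pos _).le)]
    exact mul_le_mul_of_nonneg_right hA1 (Real.exp_pos _).le


lemma ftc_identity {b al lam : ℝ} (hb : 0 < b) (hb1 : b < 1) (hal : 0 < 2 - al)
    (hlam : 0 < lam) :
    (b-1) * (∫ z in Set.Ioi (0:ℝ), (1 - Real.exp (-z)) ^ (b-2) * Real.exp (-((2-al)*z))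
        * (1 - Real.exp (-(lam*z))))
      + ((al-b-1) * (∫ z in Set.Ioi (0:ℝ), (1 - Real.exp (-z)) ^ (b-1) * Real.exp (-((2-al)*z)))
      + (1-(al-b)+lam) * (∫ z in Set.Ioi (0:ℝ),
          (1 - Real.exp (-z)) ^ (b-1) * Real.exp (-((2-al+lam)*z)))) = 0 := by
  set j : ℝ → ℝ := fun z => (1 - Real.exp (-z)) ^ (b-2) * Real.exp (-((2-al)*z))
      * (1 - Real.exp (-(lam*z))) with hj
  set k0 : ℝ → ℝ := fun z => (1 - Real.exp (-z)) ^ (b-1) * Real.exp (-((2-al)*z)) with hk0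
  set kl : ℝ → ℝ := fun z => (1 - Real.exp (-z)) ^ (b-1) * Real.exp (-((2-al+lam)*z)) with hkl
  set D : ℝ → ℝ := fun z => (b-1) * j z + ((al-b-1) * k0 z + (1-(al-b)+lam) * kl z) with hD
  set F : ℝ → ℝ := fun z => (1 - Real.exp (-z)) ^ (b-1)
      * (Real.exp (-((2-al)*z)) - Real.exp (-((2-al+lam)*z))) with hF
  have hint_j : IntegrableOn j (Set.Ioi (0:ℝ)) := j_int hb hb1 hal hlam
  have hint_k0 : IntegrableOn k0 (Set.Ioi (0:ℝ)) := wBeta_int hb hal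
  have hint_kl : IntegrableOn kl (Set.Ioi (0:ℝ)) := wBeta_int hb (by linarith)
  have hint_D : IntegrableOn D (Set.Ioi (0:ℝ)) :=
    (hint_j.const_mul _).add ((hint_k0.const_mul _).add (hint_kl.const_mul _))
  -- derivative
  have hderiv : ∀ z ∈ Set.Ioi (0:ℝ), HasDerivAt F (D z) z := by
    intro z hz
    have hz0 : (0:ℝ) < z := hz
    have hup := u_pos hz0
    have hd1 : HasDerivAt (fun z : ℝ => (1 - Real.exp (-z)) ^ (b-1))
        (Real.exp (-z) * (b-1) * (1 - Real.exp (-z)) ^ (b-1-1)) z :=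
      (phi_deriv z).rpow_const (Or.inl hup.ne')
    have hdA : HasDerivAt (fun z : ℝ => Real.exp (-((2-al)*z)))
        (Real.exp (-((2-al)*z)) * (-(2-al))) z := by
      simpa using (((hasDerivAt_id z).const_mul (2-al)).neg).exp
    have hdB : HasDerivAt (fun z : ℝ => Real.exp (-((2-al+lam)*z)))
        (Real.exp (-((2-al+lam)*z)) * (-(2-al+lam))) z := by
      simpa using (((hasDerivAt_id z).const_mul (2-al+lam)).neg).exp
    have hraw := hd1.fun_mul (hdA.fun_sub hdB)
    refine hraw.congr_deriv ?_
    have e1 : (1 - Real.exp (-z)) ^ (b-1-1) = (1 - Real.exp (-z)) ^ (b-2) := by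
      congr 1; ring
    have e2 : (1 - Real.exp (-z)) ^ (b-1) = (1 - Real.exp (-z)) ^ (b-2) * (1 - Real.exp (-z)) := by
      rw [show b-1 = (b-2)+1 by ring, Real.rpow_add_one hup.ne']
    have e3 : Real.exp (-(lam*z)) * Real.exp (-((2-al)*z)) = Real.exp (-((2-al+lam)*z)) := by
      rw [← Real.exp_add]; exact congrArg Real.exp (by ring)
    simp only [hD, hj, hk0, hkl, e1, e2]
    set P := (1 - Real.exp (-z)) ^ (b-2)
    set E := Real.exp (-z)
    set A := Real.exp (-((2-al)*z))
    set B := Real.exp (-((2-al+lam)*z))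
    set L := Real.exp (-(lam*z))
    linear_combination (b-1) * P * e3
  -- continuity at 0 within Ici 0
  have hF0 : F 0 = 0 := by simp [hF]
  have hcont : ContinuousWithinAt F (Set.Ici (0:ℝ)) 0 := by
    rw [ContinuousWithinAt, hF0]
    have hbound : ∀ᶠ z in 𝓝[Set.Ici (0:ℝ)] 0,
        ‖F z‖ ≤ (Real.exp 1 * lam) * z ^ b := by
      have h1 : ∀ᶠ z in 𝓝[Set.Ici (0:ℝ)] 0, z < 1 :=
        Filter.Eventually.filter_mono nhdsWithin_le_nhds (eventually_lt_nhds (by norm_num))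
      filter_upwards [h1, self_mem_nhdsWithin] with z hz1 hz0'
      have hz0 : (0:ℝ) ≤ z := hz0'
      rcases eq_or_lt_of_le hz0 with h | h
      · simp [hF, ← h, Real.zero_rpow hb.ne']
      · have hup := u_pos h
        have hA1 : Real.exp (-((2-al)*z)) ≤ 1 := Real.exp_le_one_iff.2 (by nlinarith)
        have hA0 : (0:ℝ) < Real.exp (-((2-al)*z)) := Real.exp_pos _
        have hsub : Real.exp (-((2-al)*z)) - Real.exp (-((2-al+lam)*z))
            = Real.exp (-((2-al)*z)) * (1 - Real.exp (-(lam*z))) := by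
          rw [mul_sub, mul_one, ← Real.exp_add]
          congr 2
          ring
        have hL0 : 0 ≤ 1 - Real.exp (-(lam*z)) := (u_pos (by positivity)).le
        have hL1 : 1 - Real.exp (-(lam*z)) ≤ lam * z := u_le
        have hu1 : (1 - Real.exp (-z)) ^ (b-1) ≤ Real.exp 1 * z ^ (b-1) := by
          have hze : 0 < z * Real.exp (-z) := by positivity
          have h2 : (1 - Real.exp (-z)) ^ (b-1) ≤ (z * Real.exp (-z)) ^ (b-1) :=
            Real.rpow_le_rpow_of_nonpos hze (u_ge hz0) (by linarith)
          refine h2.trans ?_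
          rw [Real.mul_rpow hz0 (Real.exp_pos _).le,
            Real.rpow_def_of_pos (Real.exp_pos _), Real.log_exp, mul_comm (z ^ (b-1)) _]
          have : Real.exp (-z * (b-1)) ≤ Real.exp 1 := Real.exp_le_exp.2 (by nlinarith)
          exact mul_le_mul_of_nonneg_right this (Real.rpow_nonneg hz0 _)
        have hu0 : 0 ≤ (1 - Real.exp (-z)) ^ (b-1) := Real.rpow_nonneg hup.le _
        have hpow : z ^ (b-1) * z = z ^ b := by
          rw [← Real.rpow_add_one h.ne' (b-1)]
          congr 1; ring
        rw [Real.norm_eq_abs, hF]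
        simp only
        rw [hsub, abs_of_nonneg (by nlinarith [mul_nonneg hu0 (mul_nonneg hA0.le hL0)])]
        calc (1 - Real.exp (-z)) ^ (b-1) * (Real.exp (-((2-al)*z)) * (1 - Real.exp (-(lam*z))))
            ≤ (1 - Real.exp (-z)) ^ (b-1) * (1 * (lam * z)) := by
              apply mul_le_mul_of_nonneg_left ?_ hu0
              exact mul_le_mul hA1 hL1 hL0 (by norm_num)
          _ ≤ (Real.exp 1 * z ^ (b-1)) * (1 * (lam * z)) := by
              apply mul_le_mul_of_nonneg_right hu1 (by positivity)
          _ = (Real.exp 1 * lam) * (z ^ (b-1) * z) := by ring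
          _ = (Real.exp 1 * lam) * z ^ b := by rw [hpow]
    have hlim : Tendsto (fun z : ℝ => (Real.exp 1 * lam) * z ^ b)
        (𝓝[Set.Ici (0:ℝ)] 0) (𝓝 0) := by
      have h1 : Tendsto (fun z : ℝ => z ^ b) (𝓝 (0:ℝ)) (𝓝 ((0:ℝ) ^ b)) :=
        (Real.continuousAt_rpow_const 0 b (Or.inr hb.le)).tendsto
      rw [Real.zero_rpow hb.ne'] at h1
      have h2 : Tendsto (fun z : ℝ => (Real.exp 1 * lam) * z ^ b)
          (𝓝[Set.Ici (0:ℝ)] 0) (𝓝 ((Real.exp 1 * lam) * 0)) :=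
        (h1.const_mul _).mono_left nhdsWithin_le_nhds
      simpa using h2
    exact squeeze_zero_norm' hbound hlim
  -- limit at infinity
  have htop : Tendsto F atTop (𝓝 0) := by
    have hbound : ∀ᶠ z in atTop, ‖F z‖ ≤
        (1 - Real.exp (-1)) ^ (b-1) * Real.exp (-((2-al)*z)) := by
      filter_upwards [eventually_ge_atTop (1:ℝ)] with z hz1
      have hz0 : (0:ℝ) < z := by linarith
      have hup := u_pos hz0
      have h1 := u_pos (show (0:ℝ) < 1 by norm_num)
      have hu1 : (1 - Real.exp (-z)) ^ (b-1) ≤ (1 - Real.exp (-1)) ^ (b-1) :=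
        Real.rpow_le_rpow_of_nonpos h1 (u_mono hz1) (by linarith)
      have hu0 : 0 ≤ (1 - Real.exp (-z)) ^ (b-1) := Real.rpow_nonneg hup.le _
      have hAB : Real.exp (-((2-al+lam)*z)) ≤ Real.exp (-((2-al)*z)) :=
        Real.exp_le_exp.2 (by nlinarith)
      have hB0 : (0:ℝ) < Real.exp (-((2-al+lam)*z)) := Real.exp_pos _
      rw [Real.norm_eq_abs, hF]
      simp only
      rw [abs_of_nonneg (mul_nonneg hu0 (by linarith))]
      calc (1 - Real.exp (-z)) ^ (b-1)
            * (Real.exp (-((2-al)*z)) - Real.exp (-((2-al+lam)*z)))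
          ≤ (1 - Real.exp (-z)) ^ (b-1) * Real.exp (-((2-al)*z)) := by
            apply mul_le_mul_of_nonneg_left (by linarith) hu0
        _ ≤ (1 - Real.exp (-1)) ^ (b-1) * Real.exp (-((2-al)*z)) :=
            mul_le_mul_of_nonneg_right hu1 (Real.exp_pos _).le
    have hlim : Tendsto (fun z : ℝ => (1 - Real.exp (-1)) ^ (b-1) * Real.exp (-((2-al)*z)))
        atTop (𝓝 0) := by
      have h1 : Tendsto (fun z : ℝ => (2-al)*z) atTop atTop :=
        Filter.Tendsto.const_mul_atTop hal tendsto_id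
      have h2 : Tendsto (fun z : ℝ => -((2-al)*z)) atTop atBot :=
        tendsto_neg_atTop_atBot.comp h1
      have h3 := Real.tendsto_exp_atBot.comp h2
      have h4 := h3.const_mul ((1 - Real.exp (-1)) ^ (b-1))
      simpa using h4
    exact squeeze_zero_norm' hbound hlim
  have hmain := integral_Ioi_of_hasDerivAt_of_tendsto hcont hderiv hint_D htop
  rw [hF0, sub_zero] at hmain
  have hsplit : ∫ z in Set.Ioi (0:ℝ), D z
      = (b-1) * (∫ z in Set.Ioi (0:ℝ), j z)
        + ((al-b-1) * (∫ z in Set.Ioi (0:ℝ), k0 z)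
        + (1-(al-b)+lam) * (∫ z in Set.Ioi (0:ℝ), kl z)) := by
    have h1 : IntegrableOn (fun z => (b-1) * j z) (Set.Ioi (0:ℝ)) := hint_j.const_mul _
    have h2 : IntegrableOn (fun z => (al-b-1) * k0 z) (Set.Ioi (0:ℝ)) := hint_k0.const_mul _
    have h3 : IntegrableOn (fun z => (1-(al-b)+lam) * kl z) (Set.Ioi (0:ℝ)) :=
      hint_kl.const_mul _
    have h23 : IntegrableOn (fun z => (al-b-1) * k0 z + (1-(al-b)+lam) * kl z)
        (Set.Ioi (0:ℝ)) := h2.add h3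
    rw [show (∫ z in Set.Ioi (0:ℝ), D z)
        = ∫ z in Set.Ioi (0:ℝ), ((b-1) * j z + ((al-b-1) * k0 z + (1-(al-b)+lam) * kl z))
        from rfl,
      integral_add h1 h23, integral_add h2 h3,
      integral_const_mul, integral_const_mul, integral_const_mul]
  rw [← hsplit, hmain]


lemma exp_ioo_int {lam : ℝ} (hlam : 0 < lam) {z : ℝ} (hz : 0 < z) :
    ∫ x in Set.Ioo (0:ℝ) z, Real.exp (-(lam*x)) = (1 - Real.exp (-(lam*z)))/lam := by
  have hderiv : ∀ x ∈ Set.uIcc (0:ℝ) z, HasDerivAt (fun x => -(Real.exp (-(lam*x))/lam))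
      (Real.exp (-(lam*x))) x := by
    intro x _
    have h1 : HasDerivAt (fun x : ℝ => Real.exp (-(lam*x)))
        (Real.exp (-(lam*x)) * (-(lam*1))) x := (((hasDerivAt_id x).const_mul lam).neg).exp
    have h2 := (h1.div_const lam).fun_neg
    refine h2.congr_deriv ?_
    rw [mul_one, mul_neg, neg_div, neg_neg, mul_div_assoc, div_self hlam.ne', mul_one]
  rw [← MeasureTheory.integral_Ioc_eq_integral_Ioo,
    ← intervalIntegral.integral_of_le hz.le,
    intervalIntegral.integral_eq_sub_of_hasDerivAt hderiv
      ((Real.continuous_exp.comp (by continuity)).intervalIntegrable 0 z)]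
  simp only [mul_zero, neg_zero, Real.exp_zero]
  field_simp
  ring

lemma exp_laplace {lam : ℝ} (hlam : 0 < lam) :
    ∫ x in Set.Ioi (0:ℝ), Real.exp (-(lam*x)) = 1/lam := by
  have hderiv : ∀ x ∈ Set.Ioi (0:ℝ), HasDerivAt (fun x => -(Real.exp (-(lam*x))/lam))
      (Real.exp (-(lam*x))) x := by
    intro x _
    have h1 : HasDerivAt (fun x : ℝ => Real.exp (-(lam*x)))
        (Real.exp (-(lam*x)) * (-(lam*1))) x := (((hasDerivAt_id x).const_mul lam).neg).exp
    have h2 := (h1.div_const lam).fun_neg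
    refine h2.congr_deriv ?_
    rw [mul_one, mul_neg, neg_div, neg_neg, mul_div_assoc, div_self hlam.ne', mul_one]
  have hint : IntegrableOn (fun x => Real.exp (-(lam*x))) (Set.Ioi (0:ℝ)) := by
    simpa [neg_mul] using exp_neg_integrableOn_Ioi 0 hlam
  have htop : Tendsto (fun x => -(Real.exp (-(lam*x))/lam)) atTop (𝓝 0) := by
    have h1 : Tendsto (fun x : ℝ => lam*x) atTop atTop :=
      Filter.Tendsto.const_mul_atTop hlam tendsto_id
    have h2 : Tendsto (fun x : ℝ => -(lam*x)) atTop atBot := tendsto_neg_atTop_atBot.comp h1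
    have h3 := Real.tendsto_exp_atBot.comp h2
    have h4 := (h3.div_const lam).neg
    simpa using h4
  have hcont : ContinuousWithinAt (fun x => -(Real.exp (-(lam*x))/lam))
      (Set.Ici (0:ℝ)) 0 := (Continuous.continuousWithinAt (by continuity))
  have := integral_Ioi_of_hasDerivAt_of_tendsto hcont hderiv hint htop
  rw [this]
  norm_num

theorem fubini_laplace {b q lam : ℝ} (hb : 0 < b) (hb1 : b < 1) (hq : 0 < q)
    (hlam : 0 < lam) :
    IntegrableOn (fun x => Real.exp (-(lam*x))
        * ∫ z in Set.Ioi x, (1 - Real.exp (-z)) ^ (b-2) * Real.exp (-(q*z))) (Set.Ioi (0:ℝ))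
    ∧ ∫ x in Set.Ioi (0:ℝ), Real.exp (-(lam*x))
        * ∫ z in Set.Ioi x, (1 - Real.exp (-z)) ^ (b-2) * Real.exp (-(q*z))
      = (1/lam) * ∫ z in Set.Ioi (0:ℝ),
          (1 - Real.exp (-z)) ^ (b-2) * Real.exp (-(q*z)) * (1 - Real.exp (-(lam*z))) := by
  have hg_meas : Measurable (fun z : ℝ => (1 - Real.exp (-z)) ^ (b-2) * Real.exp (-(q*z))) := by
    fun_prop
  set g : ℝ → ℝ := fun z => (1 - Real.exp (-z)) ^ (b-2) * Real.exp (-(q*z)) with hg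
  have hg_nonneg : ∀ z : ℝ, 0 < z → 0 ≤ g z := fun z hz =>
    mul_nonneg (Real.rpow_nonneg (u_pos hz).le _) (Real.exp_pos _).le
  set I : ℝ → ℝ := fun x => ∫ z in Set.Ioi x, g z with hI
  have hI_nonneg : ∀ x : ℝ, 0 < x → 0 ≤ I x := by
    intro x hx
    exact setIntegral_nonneg measurableSet_Ioi (fun z hz => hg_nonneg z (lt_trans hx hz))
  have hI_anti : AntitoneOn I (Set.Ioi (0:ℝ)) := by
    intro x hx y hy hxy
    refine setIntegral_mono_set (g_int hb1 hq hx) ?_ ?_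
    · filter_upwards [ae_restrict_mem measurableSet_Ioi] with z hz
      exact hg_nonneg z (lt_trans hx hz)
    · exact HasSubset.Subset.eventuallyLE (Set.Ioi_subset_Ioi hxy)
  have h1b : (0:ℝ) < 1 - b := by linarith
  -- the bound on I near 0
  have hgb : ∀ z ∈ Set.Ioc (0:ℝ) 1, g z ≤ Real.exp (2-b) * z ^ (b-2) := by
    intro z hz
    obtain ⟨hz0, hz1⟩ := hz
    have hup := u_pos hz0
    have hze : 0 < z * Real.exp (-z) := by positivity
    have h2 : (1 - Real.exp (-z)) ^ (b-2) ≤ (z * Real.exp (-z)) ^ (b-2) :=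
      Real.rpow_le_rpow_of_nonpos hze (u_ge hz0.le) (by linarith)
    have h3 : (z * Real.exp (-z)) ^ (b-2) ≤ Real.exp (2-b) * z ^ (b-2) := by
      rw [Real.mul_rpow hz0.le (Real.exp_pos _).le,
        Real.rpow_def_of_pos (Real.exp_pos _), Real.log_exp, mul_comm (z ^ (b-2)) _]
      have : Real.exp (-z * (b-2)) ≤ Real.exp (2-b) := Real.exp_le_exp.2 (by nlinarith)
      exact mul_le_mul_of_nonneg_right this (Real.rpow_nonneg hz0.le _)
    have h4 : Real.exp (-(q*z)) ≤ 1 := Real.exp_le_one_iff.2 (by nlinarith)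
    calc g z ≤ (1 - Real.exp (-z)) ^ (b-2) * 1 :=
          mul_le_mul_of_nonneg_left h4 (Real.rpow_nonneg hup.le _)
      _ = (1 - Real.exp (-z)) ^ (b-2) := by ring
      _ ≤ (z * Real.exp (-z)) ^ (b-2) := h2
      _ ≤ Real.exp (2-b) * z ^ (b-2) := h3
  have hrpow_int : IntegrableOn (fun x : ℝ => x ^ (b-1)) (Set.Ioc (0:ℝ) 1) :=
    (intervalIntegrable_iff_integrableOn_Ioc_of_le (by norm_num)).1
      (intervalIntegral.intervalIntegrable_rpow' (by linarith))
  have hIbound : ∀ x ∈ Set.Ioc (0:ℝ) 1, I x ≤ I 1 + (Real.exp (2-b)/(1-b)) * x ^ (b-1) := by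
    intro x hx
    obtain ⟨hx0, hx1⟩ := hx
    have hrep : I x = (∫ z in Set.Ioc x 1, g z) + I 1 := by
      rw [hI]
      rw [← setIntegral_union (Set.Ioc_disjoint_Ioi le_rfl) measurableSet_Ioi
        ((g_int hb1 hq hx0).mono_set Set.Ioc_subset_Ioi_self)
        (g_int hb1 hq (by norm_num)),
        Set.Ioc_union_Ioi_eq_Ioi hx1]
    have hcont_rpow : IntegrableOn (fun z : ℝ => z ^ (b-2)) (Set.Ioc x 1) := by
      refine ((continuousOn_of_forall_continuousAt (fun z hz => ?_)).integrableOn_compact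
        (isCompact_Icc (a := x) (b := 1))).mono_set Set.Ioc_subset_Icc_self
      exact Real.continuousAt_rpow_const z (b-2) (Or.inl (by
        have : x ≤ z := hz.1
        exact (lt_of_lt_of_le hx0 this).ne'))
    have h1 : ∫ z in Set.Ioc x 1, g z ≤ ∫ z in Set.Ioc x 1, Real.exp (2-b) * z ^ (b-2) := by
      exact setIntegral_mono_on ((g_int hb1 hq hx0).mono_set Set.Ioc_subset_Ioi_self)
        (hcont_rpow.const_mul _) measurableSet_Ioc
        (fun z hz => hgb z ⟨lt_trans hx0 hz.1, hz.2⟩)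
    have h2 : ∫ z in Set.Ioc x 1, Real.exp (2-b) * z ^ (b-2)
        = Real.exp (2-b) * ((x ^ (b-1) - 1)/(1-b)) := by
      rw [integral_const_mul, ← intervalIntegral.integral_of_le hx1,
        integral_rpow (Or.inr ⟨by intro hc; linarith, by
          rw [Set.uIcc_of_le hx1]
          intro hc
          exact absurd hc.1 (by linarith)⟩)]
      rw [Real.one_rpow, show b-2+1 = b-1 by ring]
      have hb1' : b - 1 ≠ 0 := by linarith
      have h1b' : (1:ℝ) - b ≠ 0 := by linarith
      field_simp
      ring
    have h3 : Real.exp (2-b) * ((x ^ (b-1) - 1)/(1-b))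
        ≤ (Real.exp (2-b)/(1-b)) * x ^ (b-1) := by
      have he := Real.exp_pos (2-b)
      have : Real.exp (2-b) * ((x ^ (b-1) - 1)/(1-b))
          = (Real.exp (2-b)/(1-b)) * x ^ (b-1) - Real.exp (2-b)/(1-b) := by
        field_simp
      rw [this]
      have : 0 < Real.exp (2-b)/(1-b) := by positivity
      linarith
    linarith [hrep, h1, h2.le, h3]
  -- integrability of the marginal
  have haem1 : AEMeasurable I (volume.restrict (Set.Ioc (0:ℝ) 1)) :=
    aemeasurable_restrict_of_antitoneOn measurableSet_Ioc
      (hI_anti.mono (fun x hx => hx.1))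
  have haem2 : AEMeasurable I (volume.restrict (Set.Ioi (1:ℝ))) :=
    aemeasurable_restrict_of_antitoneOn measurableSet_Ioi
      (hI_anti.mono (Set.Ioi_subset_Ioi (by norm_num)))
  have hexp_meas : Measurable (fun x : ℝ => Real.exp (-(lam*x))) := by fun_prop
  have hEI_int : IntegrableOn (fun x => Real.exp (-(lam*x)) * I x) (Set.Ioi (0:ℝ)) := by
    rw [show Set.Ioi (0:ℝ) = Set.Ioc 0 1 ∪ Set.Ioi 1 from
      (Set.Ioc_union_Ioi_eq_Ioi (by norm_num)).symm]
    refine IntegrableOn.union ?_ ?_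
    · refine Integrable.mono' (g := fun x => I 1 + (Real.exp (2-b)/(1-b)) * x ^ (b-1)) ?_
        ((hexp_meas.aemeasurable.mul haem1).aestronglyMeasurable) ?_
      · exact (integrableOn_const measure_Ioc_lt_top.ne).add (hrpow_int.const_mul _)
      · filter_upwards [ae_restrict_mem measurableSet_Ioc] with x hx
        have hx0 := hx.1
        have hIn := hI_nonneg x hx0
        rw [Real.norm_eq_abs, abs_of_nonneg (mul_nonneg (Real.exp_pos _).le hIn)]
        have h5 : Real.exp (-(lam*x)) * I x ≤ 1 * I x :=
          mul_le_mul_of_nonneg_right (Real.exp_le_one_iff.2 (by nlinarith)) hIn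
        have h6 := hIbound x hx
        linarith
    · refine Integrable.mono' (g := fun x => I 1 * Real.exp (-(lam*x))) ?_
        ((hexp_meas.aemeasurable.mul haem2).aestronglyMeasurable) ?_
      · have : IntegrableOn (fun x : ℝ => Real.exp (-(lam*x))) (Set.Ioi (1:ℝ)) := by
          simpa [neg_mul] using exp_neg_integrableOn_Ioi 1 hlam
        exact this.const_mul _
      · filter_upwards [ae_restrict_mem measurableSet_Ioi] with x hx
        have hx1 : (1:ℝ) < x := hx
        have hx0 : (0:ℝ) < x := by linarith
        rw [Real.norm_eq_abs, abs_of_nonneg (mul_nonneg (Real.exp_pos _).le (hI_nonneg x hx0))]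
        have h5 : I x ≤ I 1 := hI_anti (Set.mem_Ioi.2 (by norm_num)) (Set.mem_Ioi.2 hx0) hx1.le
        calc Real.exp (-(lam*x)) * I x ≤ Real.exp (-(lam*x)) * I 1 :=
              mul_le_mul_of_nonneg_left h5 (Real.exp_pos _).le
          _ = I 1 * Real.exp (-(lam*x)) := by ring
  refine ⟨hEI_int, ?_⟩
  -- Fubini setup
  set μ : Measure ℝ := volume.restrict (Set.Ioi (0:ℝ)) with hμ
  set f : ℝ × ℝ → ℝ := fun p =>
    Set.indicator {p' : ℝ × ℝ | p'.1 < p'.2}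
      (fun p' => Real.exp (-(lam*p'.1)) * g p'.2) p with hf
  have hf_meas : Measurable f := by
    refine Measurable.indicator ?_ (measurableSet_lt measurable_fst measurable_snd)
    exact (hexp_meas.comp measurable_fst).mul (hg_meas.comp measurable_snd)
  have hslice : ∀ x : ℝ, (fun z => f (x,z))
      = Set.indicator (Set.Ioi x) (fun z => Real.exp (-(lam*x)) * g z) := by
    intro x
    funext z
    simp only [hf, Set.indicator_apply, Set.mem_setOf_eq, Set.mem_Ioi]
  have hslice2 : ∀ z : ℝ, (fun x => f (x,z))
      = Set.indicator (Set.Iio z) (fun x => Real.exp (-(lam*x)) * g z) := by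
    intro z
    funext x
    simp only [hf, Set.indicator_apply, Set.mem_setOf_eq, Set.mem_Iio]
  have hint_slice : ∀ x ∈ Set.Ioi (0:ℝ), Integrable (fun z => f (x,z)) μ := by
    intro x hx
    rw [hslice x]
    exact (MeasureTheory.IntegrableOn.integrable_indicator
      ((g_int hb1 hq hx).const_mul _) measurableSet_Ioi).restrict
  have hmarg : (fun x => ∫ z, ‖f (x,z)‖ ∂μ) =ᵐ[μ] fun x => Real.exp (-(lam*x)) * I x := by
    filter_upwards [ae_restrict_mem measurableSet_Ioi] with x hx
    have hx0 : (0:ℝ) < x := hx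
    have : (fun z => ‖f (x,z)‖)
        = Set.indicator (Set.Ioi x) (fun z => Real.exp (-(lam*x)) * g z) := by
      funext z
      rw [show f (x,z) = Set.indicator (Set.Ioi x)
        (fun z => Real.exp (-(lam*x)) * g z) z from congrFun (hslice x) z]
      by_cases h : z ∈ Set.Ioi x
      · rw [Set.indicator_of_mem h, Real.norm_eq_abs,
          abs_of_nonneg (mul_nonneg (Real.exp_pos _).le (hg_nonneg z (lt_trans hx0 h)))]
      · rw [Set.indicator_of_notMem h, norm_zero]
    rw [this, integral_indicator measurableSet_Ioi, hμ,
      Measure.restrict_restrict measurableSet_Ioi,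
      Set.inter_eq_self_of_subset_left (Set.Ioi_subset_Ioi hx0.le), integral_const_mul]
  have hint_f : Integrable f (μ.prod μ) := by
    refine (integrable_prod_iff hf_meas.aestronglyMeasurable).2 ⟨?_, ?_⟩
    · filter_upwards [ae_restrict_mem measurableSet_Ioi] with x hx
      exact hint_slice x hx
    · exact hEI_int.congr hmarg.symm
  have hswap : ∫ x, ∫ z, f (x,z) ∂μ ∂μ = ∫ z, ∫ x, f (x,z) ∂μ ∂μ :=
    integral_integral_swap hint_f
  -- LHS identification
  have hLHS : ∫ x, ∫ z, f (x,z) ∂μ ∂μ = ∫ x in Set.Ioi (0:ℝ), Real.exp (-(lam*x)) * I x := by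
    refine integral_congr_ae ?_
    filter_upwards [ae_restrict_mem measurableSet_Ioi] with x hx
    have hx0 : (0:ℝ) < x := hx
    rw [hslice x, integral_indicator measurableSet_Ioi, hμ,
      Measure.restrict_restrict measurableSet_Ioi,
      Set.inter_eq_self_of_subset_left (Set.Ioi_subset_Ioi hx0.le), integral_const_mul]
  -- RHS identification
  have hRHS : ∫ z, ∫ x, f (x,z) ∂μ ∂μ
      = ∫ z in Set.Ioi (0:ℝ), ((1 - Real.exp (-(lam*z)))/lam) * g z := by
    refine integral_congr_ae ?_
    filter_upwards [ae_restrict_mem measurableSet_Ioi] with z hz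
    have hz0 : (0:ℝ) < z := hz
    rw [hslice2 z, integral_indicator measurableSet_Iio, hμ,
      Measure.restrict_restrict measurableSet_Iio,
      show Set.Iio z ∩ Set.Ioi 0 = Set.Ioo 0 z by rw [Set.inter_comm, Set.Ioi_inter_Iio],
      integral_mul_const, exp_ioo_int hlam hz0]
  rw [hLHS] at hswap
  rw [hswap, hRHS]
  rw [← integral_const_mul]
  refine setIntegral_congr_fun measurableSet_Ioi (fun z hz => ?_)
  ring


lemma g_eq {a b : ℝ} (z : ℝ) (hz : 0 < z) :
    Real.exp (a*z) * (Real.exp z - 1) ^ (b-2)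
      = (1 - Real.exp (-z)) ^ (b-2) * Real.exp (-((2-(a+b))*z)) := by
  have h1 : Real.exp z - 1 = Real.exp z * (1 - Real.exp (-z)) := by
    rw [mul_sub, mul_one, ← Real.exp_add]; simp
  rw [h1, Real.mul_rpow (Real.exp_pos z).le (u_pos hz).le,
    Real.rpow_def_of_pos (Real.exp_pos z), Real.log_exp,
    show Real.exp (a*z) * (Real.exp (z*(b-2)) * (1 - Real.exp (-z)) ^ (b-2))
      = (1 - Real.exp (-z)) ^ (b-2) * (Real.exp (a*z) * Real.exp (z*(b-2))) from by ring,
    ← Real.exp_add]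
  congr 1
  exact congrArg Real.exp (by ring)

theorem descending_renewal_laplace_transform_big_alpha
    (α ρ : ℝ) (hα : α ∈ Set.Ioo (1:ℝ) 2) (hρ : ρ ∈ Set.Ioo (1 - 1/α) (1/α))
    (lam : ℝ) (hlam : 0 < lam) :
    ∫ x in Set.Ioi (0:ℝ),
        Real.exp (-lam * x) *
          (Real.Gamma (2 - α) / Real.Gamma (1 - α * ρ) +
            (1 - α * (1 - ρ)) / Real.Gamma (α * (1 - ρ)) *
              ∫ z in Set.Ioi x,
                Real.exp (α * ρ * z) * (Real.exp z - 1) ^ (α * (1 - ρ) - 2)) =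
    Real.Gamma (2 - α + lam) / (lam * Real.Gamma (1 - α * ρ + lam)) := by
  obtain ⟨hα1, hα2⟩ := hα
  obtain ⟨hρ1, hρ2⟩ := hρ
  have hα0 : (0:ℝ) < α := by linarith
  have h1α : 1/α < 1 := by rw [div_lt_one hα0]; exact hα1
  have hρ0 : 0 < ρ := by linarith
  have hρ1' : ρ < 1 := by linarith
  set A : ℝ := α * ρ with hA
  set B : ℝ := α * (1 - ρ) with hB
  have hA0 : 0 < A := mul_pos hα0 hρ0
  have hA1 : A < 1 := by
    have := mul_lt_mul_of_pos_left hρ2 hα0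
    rwa [mul_one_div_cancel hα0.ne'] at this
  have hB0 : 0 < B := mul_pos hα0 (by linarith)
  have hB1 : B < 1 := by
    have h2 : 1 - ρ < 1/α := by linarith
    have := mul_lt_mul_of_pos_left h2 hα0
    rwa [mul_one_div_cancel hα0.ne'] at this
  have hABα : A + B = α := by rw [hA, hB]; ring
  have h2α : (0:ℝ) < 2 - α := by linarith
  have hq2 : (0:ℝ) < 2 - α + lam := by linarith
  have h1A : (0:ℝ) < 1 - A := by linarith
  have h1Alam : (0:ℝ) < 1 - A + lam := by linarith
  have h1B : (0:ℝ) < 1 - B := by linarith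
  have hGb : 0 < Real.Gamma B := Real.Gamma_pos_of_pos hB0
  have hG1 : 0 < Real.Gamma (1 - A) := Real.Gamma_pos_of_pos h1A
  have hG2 : 0 < Real.Gamma (1 - A + lam) := Real.Gamma_pos_of_pos h1Alam
  have hfub := fubini_laplace (b := B) (q := 2 - α) hB0 hB1 h2α hlam
  -- rewrite the integrand
  have hcongr : ∫ x in Set.Ioi (0:ℝ),
        Real.exp (-lam * x) *
          (Real.Gamma (2 - α) / Real.Gamma (1 - A) +
            (1 - B) / Real.Gamma B *
              ∫ z in Set.Ioi x, Real.exp (A * z) * (Real.exp z - 1) ^ (B - 2))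
      = ∫ x in Set.Ioi (0:ℝ),
          (Real.Gamma (2 - α) / Real.Gamma (1 - A) * Real.exp (-(lam*x))
            + (1 - B) / Real.Gamma B * (Real.exp (-(lam*x))
              * ∫ z in Set.Ioi x, (1 - Real.exp (-z)) ^ (B-2) * Real.exp (-((2-α)*z)))) := by
    refine setIntegral_congr_fun measurableSet_Ioi (fun x hx => ?_)
    have hx0 : (0:ℝ) < x := hx
    have hinner : (∫ z in Set.Ioi x, Real.exp (A * z) * (Real.exp z - 1) ^ (B - 2))
        = ∫ z in Set.Ioi x, (1 - Real.exp (-z)) ^ (B-2) * Real.exp (-((2-α)*z)) := by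
      refine setIntegral_congr_fun measurableSet_Ioi (fun z hz => ?_)
      have hz0 : (0:ℝ) < z := lt_trans hx0 hz
      have := g_eq (a := A) (b := B) z hz0
      rw [hABα] at this
      exact this
    rw [hinner, neg_mul]
    ring
  rw [hcongr]
  have hexpint : IntegrableOn (fun x : ℝ => Real.exp (-(lam*x))) (Set.Ioi (0:ℝ)) := by
    simpa [neg_mul] using exp_neg_integrableOn_Ioi 0 hlam
  rw [integral_add (hexpint.const_mul _) (hfub.1.const_mul _),
    integral_const_mul, integral_const_mul, exp_laplace hlam, hfub.2]
  -- Beta values and FTC identity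
  have hK0 := wBeta_eq (p := B) (q := 2 - α) hB0 h2α
  have hKl := wBeta_eq (p := B) (q := 2 - α + lam) hB0 hq2
  have hftc := ftc_identity (b := B) (al := α) (lam := lam) hB0 hB1 h2α hlam
  have hc1 : α - B - 1 = A - 1 := by rw [hA, hB]; ring
  have hc2 : 1 - (α - B) + lam = 1 - A + lam := by rw [hA, hB]; ring
  rw [hc1, hc2] at hftc
  have hG2a : Real.Gamma (B + (2 - α)) = (1 - A) * Real.Gamma (1 - A) := by
    rw [show B + (2 - α) = (1 - A) + 1 from by rw [hA, hB]; ring,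
      Real.Gamma_add_one h1A.ne']
  have hG2b : Real.Gamma (B + (2 - α + lam)) = (1 - A + lam) * Real.Gamma (1 - A + lam) := by
    rw [show B + (2 - α + lam) = (1 - A + lam) + 1 from by rw [hA, hB]; ring,
      Real.Gamma_add_one h1Alam.ne']
  rw [hG2a] at hK0
  rw [hG2b] at hKl
  rw [hK0, hKl] at hftc
  have e1 : (A - 1) * (Real.Gamma B * Real.Gamma (2-α) / ((1-A) * Real.Gamma (1-A)))
      = -(Real.Gamma B * Real.Gamma (2-α) / Real.Gamma (1-A)) := by
    field_simp
    ring
  have e2 : (1 - A + lam) * (Real.Gamma B * Real.Gamma (2-α+lam)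
        / ((1-A+lam) * Real.Gamma (1-A+lam)))
      = Real.Gamma B * Real.Gamma (2-α+lam) / Real.Gamma (1-A+lam) := by
    field_simp
  have hJval : (1 - B) * (∫ z in Set.Ioi (0:ℝ),
        (1 - Real.exp (-z)) ^ (B-2) * Real.exp (-((2-α)*z)) * (1 - Real.exp (-(lam*z))))
      = Real.Gamma B * Real.Gamma (2-α+lam) / Real.Gamma (1-A+lam)
        - Real.Gamma B * Real.Gamma (2-α) / Real.Gamma (1-A) := by
    rw [e1, e2] at hftc
    linarith
  generalize hJ : (∫ z in Set.Ioi (0:ℝ), (1 - Real.exp (-z)) ^ (B-2) * Real.exp (-((2-α)*z))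
    * (1 - Real.exp (-(lam*z)))) = J at hJval ⊢
  linear_combination (norm := skip) (1 / (Real.Gamma B * lam)) * hJval
  field_simp [hGb.ne', hG1.ne', hG2.ne', hlam.ne']
  ring
end
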